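/- arXiv:2306.16047 — 7 statements merged into one kernel-verified Lean document; each statement's English description precedes it below -/
import Mathlib

section
/- Let H be a real Hilbert space, let O ⊆ H be a nonempty convex open set, let f : O → ℝ be a lower semicontinuous convex function, and let β > 0. Then the following are equivalent: (i) f is Gâteaux differentiable on O and ∇f is β-Lipschitz continuous on O, i.e. ‖∇f(x) − ∇f(y)‖ ≤ β‖x − y‖ for all x, y ∈ O; (ii) the function x ↦ (β/2)‖x‖² − f(x) is convex on O; (iii) f is Gâteaux differentiable on O and ∇f is (1/β)-cocoercive on O, i.e. ⟨∇f(x) − ∇f(y), x − y⟩ ≥ (1/β)‖∇f(x) − ∇f(y)‖² for all x, y ∈ O. -/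
open scoped RealInnerProductSpace
open Filter Set Metric Topology

section BH
variable {H : Type*} [NormedAddCommGroup H] [InnerProductSpace ℝ H]

/-- Convexity of the parameter set of a line inside a convex set. -/
lemma bh_T_convex {O : Set H} (hO : Convex ℝ O) (a d : H) :
    Convex ℝ {t : ℝ | a + t • d ∈ O} := by
  intro t1 ht1 t2 ht2 la mu hla hmu hsum
  have : a + (la * t1 + mu * t2) • d = la • (a + t1 • d) + mu • (a + t2 • d) := by
    have hmu' : mu = 1 - la := by linarith
    subst hmu'
    module
  simpa [this] using hO ht1 ht2 hla hmu hsum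

/-- Convexity of a convex function along a line. -/
lemma bh_segment_convexOn {O : Set H} {F : H → ℝ} (hF : ConvexOn ℝ O F) (a d : H) :
    ConvexOn ℝ {t : ℝ | a + t • d ∈ O} (fun t => F (a + t • d)) := by
  refine ⟨bh_T_convex hF.1 a d, ?_⟩
  intro t1 ht1 t2 ht2 la mu hla hmu hsum
  have key : a + (la * t1 + mu * t2) • d = la • (a + t1 • d) + mu • (a + t2 • d) := by
    have hmu' : mu = 1 - la := by linarith
    subst hmu'
    module
  simp only [smul_eq_mul, key]
  exact hF.2 ht1 ht2 hla hmu hsum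

/-- Gradient inequality for a convex function with a line derivative. -/
lemma bh_grad_ineq {O : Set H} {F : H → ℝ} (hF : ConvexOn ℝ O F) {G : H → H}
    (hG : ∀ x ∈ O, ∀ d : H, HasLineDerivAt ℝ F ⟪G x, d⟫ x d) {a b : H}
    (ha : a ∈ O) (hb : b ∈ O) :
    F a + ⟪G a, b - a⟫ ≤ F b := by
  set d := b - a with hd
  have hder : HasDerivAt (fun t : ℝ => F (a + t • d)) ⟪G a, d⟫ 0 := hG a ha d
  have hT0 : (0 : ℝ) ∈ {t : ℝ | a + t • d ∈ O} := by simp [ha]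
  have hT1 : (1 : ℝ) ∈ {t : ℝ | a + t • d ∈ O} := by simp [hd, hb]
  have hφ := bh_segment_convexOn hF a d
  have hIcc : Icc (0 : ℝ) 1 ⊆ {t : ℝ | a + t • d ∈ O} :=
    (bh_T_convex hF.1 a d).ordConnected.out hT0 hT1
  have hslope : ∀ᶠ t in 𝓝[>] (0 : ℝ),
      slope (fun t : ℝ => F (a + t • d)) 0 t ≤ F b - F a := by
    filter_upwards [Ioc_mem_nhdsGT zero_lt_one] with t ht
    have h1 := hφ.secant_mono hT0 (hIcc ⟨le_of_lt ht.1, ht.2⟩) hT1 (ne_of_gt ht.1)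
      one_ne_zero ht.2
    rw [slope_def_field]
    simp only [zero_smul, add_zero, one_smul, sub_zero, div_one, hd, add_sub_cancel] at h1 ⊢
    linarith
  have htend : Tendsto (slope (fun t : ℝ => F (a + t • d)) 0) (𝓝[>] (0 : ℝ))
      (𝓝 ⟪G a, d⟫) :=
    (hasDerivAt_iff_tendsto_slope.mp hder).mono_left
      (nhdsWithin_mono _ (fun t ht => ne_of_gt ht))
  have := le_of_tendsto htend hslope
  linarith

/-- Line derivative of the quadratic. -/
lemma bh_quad_lineDeriv (β : ℝ) (x d : H) :
    HasLineDerivAt ℝ (fun y : H => β / 2 * ‖y‖ ^ 2) (β * ⟪x, d⟫) x d := by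
  show HasDerivAt (fun t : ℝ => β / 2 * ‖x + t • d‖ ^ 2) (β * ⟪x, d⟫) 0
  have hfun : (fun t : ℝ => β / 2 * ‖x + t • d‖ ^ 2)
      = fun t : ℝ => β / 2 * ‖x‖ ^ 2 + t * (β * ⟪x, d⟫) + t ^ 2 * (β / 2 * ‖d‖ ^ 2) := by
    funext t
    rw [norm_add_sq_real, real_inner_smul_right, norm_smul, Real.norm_eq_abs, mul_pow, sq_abs]
    ring
  rw [hfun]
  have ha : HasDerivAt (fun t : ℝ => t * (β * ⟪x, d⟫)) (β * ⟪x, d⟫) 0 :=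
    hasDerivAt_mul_const _
  have hb : HasDerivAt (fun t : ℝ => t ^ 2 * (β / 2 * ‖d‖ ^ 2)) 0 0 := by
    have := (hasDerivAt_pow 2 (0 : ℝ)).mul_const (β / 2 * ‖d‖ ^ 2)
    simpa using this
  have h := ((hasDerivAt_const (0 : ℝ) (β / 2 * ‖x‖ ^ 2)).add ha).add hb
  simp only [zero_add, add_zero] at h
  exact h

/-- Monotone line-gradient on a convex open set gives convexity. -/
lemma bh_convexOn_of_mono {O : Set H} (hOconv : Convex ℝ O) (hOopen : IsOpen O)
    {F : H → ℝ} {G : H → H} (hG : ∀ x ∈ O, ∀ d : H, HasLineDerivAt ℝ F ⟪G x, d⟫ x d)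
    (hmono : ∀ a ∈ O, ∀ b ∈ O, 0 ≤ ⟪G a - G b, a - b⟫) : ConvexOn ℝ O F := by
  refine ⟨hOconv, ?_⟩
  intro a ha b hb la mu hla hmu hsum
  set d := b - a with hd
  set T := {t : ℝ | a + t • d ∈ O} with hT
  set φ := fun t : ℝ => F (a + t • d) with hφ
  have hTopen : IsOpen T := hOopen.preimage (by continuity)
  have hTconv : Convex ℝ T := bh_T_convex hOconv a d
  have hder : ∀ t ∈ T, HasDerivAt φ ⟪G (a + t • d), d⟫ t := by
    intro t ht
    have h0 : HasDerivAt (fun s : ℝ => F ((a + t • d) + s • d)) ⟪G (a + t • d), d⟫ 0 :=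
      hG _ ht d
    have h1 : HasDerivAt (fun u : ℝ => u - t) 1 t := (hasDerivAt_id t).sub_const t
    have h2 : HasDerivAt ((fun s : ℝ => F ((a + t • d) + s • d)) ∘ (fun u : ℝ => u - t))
        (⟪G (a + t • d), d⟫ * 1) t := HasDerivAt.comp_of_eq (hh₂ := h0) (hh := h1) (hy := (sub_self t).symm)
    have h3 : φ = (fun s : ℝ => F ((a + t • d) + s • d)) ∘ (fun u : ℝ => u - t) := by
      funext u
      simp only [Function.comp, hφ]
      congr 1
      rw [sub_smul]
      abel
    rw [h3]
    simpa using h2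
  have hconvφ : ConvexOn ℝ T φ := by
    have hint : interior T = T := hTopen.interior_eq
    refine MonotoneOn.convexOn_of_deriv hTconv ?_ ?_ ?_
    · exact fun t ht => ((hder t ht).continuousAt).continuousWithinAt
    · rw [hint]; exact fun t ht => ((hder t ht).differentiableAt).differentiableWithinAt
    · rw [hint]
      intro s hs t ht hst
      rw [(hder s hs).deriv, (hder t ht).deriv]
      rcases eq_or_lt_of_le hst with rfl | hlt
      · exact le_refl _
      · have hm := hmono _ ht _ hs
        have hdiff : (a + t • d) - (a + s • d) = (t - s) • d := by
          rw [sub_smul]; abel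
        rw [hdiff, real_inner_smul_right, inner_sub_left] at hm
        have hts : 0 < t - s := sub_pos.mpr hlt
        nlinarith [hm, hts]
  have h0T : (0 : ℝ) ∈ T := by simp [hT, ha]
  have h1T : (1 : ℝ) ∈ T := by simp [hT, hd, hb]
  have hkey := hconvφ.2 h0T h1T hla hmu hsum
  simp only [smul_eq_mul, mul_zero, mul_one, zero_add] at hkey
  have ea : a + (0 : ℝ) • d = a := by simp
  have eb : a + (1 : ℝ) • d = b := by simp [hd]
  have ec : la • a + mu • b = a + mu • d := by
    have hla' : la = 1 - mu := by linarith
    subst hla'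
    rw [hd]
    module
  simp only [hφ, ea, eb] at hkey
  rw [ec]
  exact hkey

/-- The core four-inequality room lemma. -/
lemma bh_core {O : Set H} {f : H → ℝ} {g : H → H} {β : ℝ}
    (hC : ∀ a ∈ O, ∀ b ∈ O, f a + ⟪g a, b - a⟫ ≤ f b)
    (hD : ∀ a ∈ O, ∀ b ∈ O, f b ≤ f a + ⟪g a, b - a⟫ + β / 2 * ‖b - a‖ ^ 2)
    {a b w : H} (ha : a ∈ O) (hb : b ∈ O) (haw : a + w ∈ O) (hbw : b - w ∈ O) :
    -2 * ⟪g a - g b, w⟫ ≤ ⟪g a - g b, a - b⟫ + β * ‖w‖ ^ 2 := by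
  have i1 := hC a ha (b - w) hbw
  have i2 := hC b hb (a + w) haw
  have i3 := hD a ha (a + w) haw
  have i4 := hD b hb (b - w) hbw
  have e1 : a + w - a = w := by abel
  have e2 : b - w - b = -w := by abel
  rw [e1] at i3
  rw [e2, norm_neg] at i4
  simp only [inner_sub_left, inner_sub_right, inner_add_right, inner_neg_right]
    at i1 i2 i3 i4 ⊢
  linarith

/-- Local Lipschitz bound. -/
lemma bh_localLip {O : Set H} {f : H → ℝ} {g : H → H} {β : ℝ} (hβ : 0 < β)
    (hC : ∀ a ∈ O, ∀ b ∈ O, f a + ⟪g a, b - a⟫ ≤ f b)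
    (hD : ∀ a ∈ O, ∀ b ∈ O, f b ≤ f a + ⟪g a, b - a⟫ + β / 2 * ‖b - a‖ ^ 2)
    {a b : H} {δ : ℝ} (hδ : 0 < δ) (hba : ball a δ ⊆ O) (hbb : ball b δ ⊆ O)
    (hab : ‖a - b‖ < δ) : ‖g a - g b‖ ≤ β * ‖a - b‖ := by
  rcases eq_or_ne (g a) (g b) with heq | hne
  · have h0 : (0 : ℝ) ≤ β * ‖a - b‖ := by positivity
    simpa [heq, sub_self] using h0
  set s := ‖g a - g b‖ with hs
  have hspos : 0 < s := by rw [hs, norm_pos_iff, sub_ne_zero]; exact hne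
  have ha : a ∈ O := hba (mem_ball_self hδ)
  have hb : b ∈ O := hbb (mem_ball_self hδ)
  have star : ∀ t : ℝ, 0 ≤ t → t < δ → 2 * t * s ≤ s * ‖a - b‖ + β * t ^ 2 := by
    intro t ht0 htδ
    set w := (-(t / s)) • (g a - g b) with hw
    have hnw : ‖w‖ = t := by
      rw [hw, norm_smul, Real.norm_eq_abs, abs_neg, abs_div, abs_of_nonneg ht0,
        abs_of_pos hspos, ← hs]
      field_simp
    have haw : a + w ∈ O := hba (by rw [mem_ball, dist_eq_norm, add_sub_cancel_left, hnw]; exact htδ)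
    have hbw : b - w ∈ O := hbb (by
      rw [mem_ball, dist_eq_norm, sub_sub_cancel_left, norm_neg, hnw]; exact htδ)
    have hcore := bh_core hC hD ha hb haw hbw
    have h1 : ⟪g a - g b, w⟫ = -(t / s) * s ^ 2 := by
      rw [hw, real_inner_smul_right, real_inner_self_eq_norm_sq, ← hs]
    have h2 : ⟪g a - g b, a - b⟫ ≤ s * ‖a - b‖ := by
      rw [hs]; exact real_inner_le_norm _ _
    rw [h1, hnw] at hcore
    have h3 : -(t / s) * s ^ 2 = -(t * s) := by field_simp
    rw [h3] at hcore
    linarith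
  have starcl : 2 * δ * s ≤ s * ‖a - b‖ + β * δ ^ 2 := by
    by_contra hcon
    push_neg at hcon
    set Gp := 2 * δ * s - s * ‖a - b‖ - β * δ ^ 2 with hGp
    have hGpos : 0 < Gp := by rw [hGp]; linarith
    set ε := min (δ / 2) (Gp / (4 * s + 1)) with he
    have hε0 : 0 < ε := lt_min (by linarith) (div_pos hGpos (by linarith))
    have hεhalf : ε ≤ δ / 2 := min_le_left _ _
    have hεδ : δ - ε < δ := by linarith
    have hε2 : 0 ≤ δ - ε := by linarith
    have hst := star (δ - ε) hε2 hεδ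
    have hβd : β * (δ - ε) ^ 2 ≤ β * δ ^ 2 := by
      have hsq : (δ - ε) ^ 2 ≤ δ ^ 2 := by nlinarith
      exact mul_le_mul_of_nonneg_left hsq hβ.le
    have hεs : ε * (4 * s + 1) ≤ Gp := by
      rw [← le_div_iff₀ (by linarith : (0:ℝ) < 4 * s + 1)]
      exact min_le_right _ _
    nlinarith [mul_pos hε0 hspos, hst, hβd, hεs, hGpos, hε0]
  rcases lt_or_ge (s / β) δ with hc | hc
  · set t₀ := s / β with ht₀def
    have ht₀ : β * t₀ = s := by rw [ht₀def]; field_simp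
    have hst := star t₀ (by positivity) hc
    have h4 : β * t₀ ^ 2 = s * t₀ := by rw [pow_two, ← mul_assoc, ht₀]
    have h5 : t₀ * s ≤ s * ‖a - b‖ := by nlinarith
    have h6 : s * s ≤ s * (β * ‖a - b‖) := by
      calc s * s = β * (t₀ * s) := by rw [← ht₀]; ring
      _ ≤ β * (s * ‖a - b‖) := by nlinarith
      _ = s * (β * ‖a - b‖) := by ring
    exact le_of_mul_le_mul_left h6 hspos
  · exfalso
    have hβδ : δ * β ≤ s := (le_div_iff₀ hβ).mp hc
    have p1 : s * ‖a - b‖ < s * δ := mul_lt_mul_of_pos_left hab hspos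
    have p2 : β * δ ^ 2 ≤ s * δ := by nlinarith
    linarith

/-- Local cocoercivity. -/
lemma bh_localCoco {O : Set H} {f : H → ℝ} {g : H → H} {β : ℝ} (hβ : 0 < β)
    (hC : ∀ a ∈ O, ∀ b ∈ O, f a + ⟪g a, b - a⟫ ≤ f b)
    (hD : ∀ a ∈ O, ∀ b ∈ O, f b ≤ f a + ⟪g a, b - a⟫ + β / 2 * ‖b - a‖ ^ 2)
    {a b : H} {δ : ℝ} (hδ : 0 < δ) (hba : ball a δ ⊆ O) (hbb : ball b δ ⊆ O)
    (hab : ‖a - b‖ < δ) : (1 / β) * ‖g a - g b‖ ^ 2 ≤ ⟪g a - g b, a - b⟫ := by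
  rcases eq_or_ne (g a) (g b) with heq | hne
  · simp [heq, sub_self]
  have hspos : 0 < ‖g a - g b‖ := by rw [norm_pos_iff, sub_ne_zero]; exact hne
  have ha : a ∈ O := hba (mem_ball_self hδ)
  have hb : b ∈ O := hbb (mem_ball_self hδ)
  have hlip := bh_localLip hβ hC hD hδ hba hbb hab
  set w := (-(1 / β)) • (g a - g b) with hw
  have hnw : ‖w‖ = 1 / β * ‖g a - g b‖ := by
    rw [hw, norm_smul, Real.norm_eq_abs, abs_neg, abs_of_pos (by positivity : (0:ℝ) < 1 / β)]
  have hnwδ : ‖w‖ < δ := by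
    rw [hnw]
    calc 1 / β * ‖g a - g b‖ ≤ 1 / β * (β * ‖a - b‖) := by
          apply mul_le_mul_of_nonneg_left hlip (by positivity)
    _ = ‖a - b‖ := by field_simp
    _ < δ := hab
  have haw : a + w ∈ O := hba (by rw [mem_ball, dist_eq_norm, add_sub_cancel_left]; exact hnwδ)
  have hbw : b - w ∈ O := hbb (by
    rw [mem_ball, dist_eq_norm, sub_sub_cancel_left, norm_neg]; exact hnwδ)
  have hcore := bh_core hC hD ha hb haw hbw
  have h1 : ⟪g a - g b, w⟫ = -(1 / β) * ‖g a - g b‖ ^ 2 := by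
    rw [hw, real_inner_smul_right, real_inner_self_eq_norm_sq]
  have h2 : β * ‖w‖ ^ 2 = 1 / β * ‖g a - g b‖ ^ 2 := by
    rw [hnw]
    field_simp
  rw [h1, h2] at hcore
  linarith

/-- Global Lipschitz and cocoercivity by chaining along segments. -/
lemma bh_chain {O : Set H} (hOconv : Convex ℝ O) (hOopen : IsOpen O)
    {f : H → ℝ} {g : H → H} {β : ℝ} (hβ : 0 < β)
    (hC : ∀ a ∈ O, ∀ b ∈ O, f a + ⟪g a, b - a⟫ ≤ f b)
    (hD : ∀ a ∈ O, ∀ b ∈ O, f b ≤ f a + ⟪g a, b - a⟫ + β / 2 * ‖b - a‖ ^ 2)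
    {x y : H} (hx : x ∈ O) (hy : y ∈ O) :
    ‖g x - g y‖ ≤ β * ‖x - y‖ ∧ (1 / β) * ‖g x - g y‖ ^ 2 ≤ ⟪g x - g y, x - y⟫ := by
  rcases eq_or_ne x y with rfl | hxy
  · constructor <;> simp
  have hseg : segment ℝ x y ⊆ O := hOconv.segment_subset hx hy
  have hcomp : IsCompact (segment ℝ x y) := by
    rw [segment_eq_image']
    exact isCompact_Icc.image (by continuity)
  obtain ⟨δ, hδ, hth⟩ := hcomp.exists_thickening_subset_open hOopen hseg
  have hballs : ∀ z ∈ segment ℝ x y, ball z δ ⊆ O :=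
    fun z hz => (ball_subset_thickening hz δ).trans hth
  obtain ⟨n, hn⟩ := exists_nat_gt (‖x - y‖ / δ)
  have hxypos : 0 < ‖x - y‖ := by rw [norm_pos_iff, sub_ne_zero]; exact hxy
  have hnpos : 0 < (n : ℝ) := lt_of_le_of_lt (by positivity) hn
  set z : ℕ → H := fun i => x + ((i : ℝ) / (n : ℝ)) • (y - x) with hz
  have hzseg : ∀ i ≤ n, z i ∈ segment ℝ x y := by
    intro i hi
    rw [segment_eq_image']
    refine ⟨(i : ℝ) / n, ⟨by positivity, ?_⟩, rfl⟩
    rw [div_le_one hnpos]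
    exact_mod_cast hi
  have hz0 : z 0 = x := by simp [hz]
  have hzn : z n = y := by
    simp [hz, div_self (ne_of_gt hnpos)]
  have hstep : ∀ i : ℕ, z i - z (i + 1) = (1 / (n : ℝ)) • (x - y) := by
    intro i
    simp only [hz]
    have hcast : ((i + 1 : ℕ) : ℝ) = (i : ℝ) + 1 := by push_cast; ring
    rw [hcast]
    rw [show x + ((i : ℝ) / n) • (y - x) - (x + (((i : ℝ) + 1) / n) • (y - x))
        = (((i : ℝ) / n) - (((i : ℝ) + 1) / n)) • (y - x) from by rw [sub_smul]; abel]
    rw [show ((i : ℝ) / n) - (((i : ℝ) + 1) / n) = -(1 / n) from by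
      field_simp; ring]
    rw [neg_smul, ← smul_neg, neg_sub]
  have hstepnorm : ∀ i : ℕ, ‖z i - z (i + 1)‖ = ‖x - y‖ / n := by
    intro i
    rw [hstep, norm_smul, Real.norm_eq_abs, abs_of_pos (by positivity : (0:ℝ) < 1 / n)]
    ring
  have hstepδ : ‖x - y‖ / n < δ := by
    rw [div_lt_iff₀ hnpos]
    have := (div_lt_iff₀ hδ).mp hn
    linarith [this]
  have dlip : ∀ i < n, ‖g (z i) - g (z (i + 1))‖ ≤ β * (‖x - y‖ / n) := by
    intro i hi
    have h1 := bh_localLip hβ hC hD hδ (hballs _ (hzseg i hi.le)) (hballs _ (hzseg (i + 1) hi))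
      (by rw [hstepnorm]; exact hstepδ)
    rwa [hstepnorm] at h1
  have dcoco : ∀ i < n, (1 / β) * ‖g (z i) - g (z (i + 1))‖ ^ 2
      ≤ ⟪g (z i) - g (z (i + 1)), z i - z (i + 1)⟫ := by
    intro i hi
    exact bh_localCoco hβ hC hD hδ (hballs _ (hzseg i hi.le)) (hballs _ (hzseg (i + 1) hi))
      (by rw [hstepnorm]; exact hstepδ)
  have telescope : ∑ i ∈ Finset.range n, (g (z i) - g (z (i + 1))) = g x - g y := by
    rw [Finset.sum_range_sub' (fun i => g (z i))]
    rw [hz0, hzn]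
  have hle : ‖g x - g y‖ ≤ ∑ i ∈ Finset.range n, ‖g (z i) - g (z (i + 1))‖ := by
    rw [← telescope]
    exact norm_sum_le _ _
  have hsum : ∑ i ∈ Finset.range n, ‖g (z i) - g (z (i + 1))‖ ≤ (n : ℝ) * (β * (‖x - y‖ / n)) := by
    calc ∑ i ∈ Finset.range n, ‖g (z i) - g (z (i + 1))‖
        ≤ ∑ _i ∈ Finset.range n, β * (‖x - y‖ / n) :=
          Finset.sum_le_sum (fun i hi => dlip i (Finset.mem_range.mp hi))
    _ = (n : ℝ) * (β * (‖x - y‖ / n)) := by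
          rw [Finset.sum_const, Finset.card_range, nsmul_eq_mul]
  have hfield : (n : ℝ) * (β * (‖x - y‖ / n)) = β * ‖x - y‖ := by field_simp
  constructor
  · linarith
  · set P := ∑ i ∈ Finset.range n, ‖g (z i) - g (z (i + 1))‖ with hP
    set Q := ∑ i ∈ Finset.range n, ‖g (z i) - g (z (i + 1))‖ ^ 2 with hQ
    have hPQ : P ^ 2 ≤ Q * n := by
      have hcs := Finset.sum_mul_sq_le_sq_mul_sq (Finset.range n)
        (fun i => ‖g (z i) - g (z (i + 1))‖) (fun _ => 1)
      simpa [Finset.sum_const, Finset.card_range] using hcs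
    have hIQ : (n : ℝ) / β * Q ≤ ⟪g x - g y, x - y⟫ := by
      have h1 : ⟪g x - g y, x - y⟫
          = ∑ i ∈ Finset.range n, ⟪g (z i) - g (z (i + 1)), x - y⟫ := by
        rw [← telescope, sum_inner]
      have h2 : ∀ i ∈ Finset.range n, (n : ℝ) / β * ‖g (z i) - g (z (i + 1))‖ ^ 2
          ≤ ⟪g (z i) - g (z (i + 1)), x - y⟫ := by
        intro i hi
        have hco := dcoco i (Finset.mem_range.mp hi)
        have h3 : ⟪g (z i) - g (z (i + 1)), z i - z (i + 1)⟫
            = (1 / (n : ℝ)) * ⟪g (z i) - g (z (i + 1)), x - y⟫ := by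
          rw [hstep, real_inner_smul_right]
        rw [h3] at hco
        have h4 := mul_le_mul_of_nonneg_left hco (le_of_lt hnpos)
        have h5 : (n : ℝ) * ((1 / (n : ℝ)) * ⟪g (z i) - g (z (i + 1)), x - y⟫)
            = ⟪g (z i) - g (z (i + 1)), x - y⟫ := by
          field_simp
        rw [h5] at h4
        calc (n : ℝ) / β * ‖g (z i) - g (z (i + 1))‖ ^ 2
            = (n : ℝ) * (1 / β * ‖g (z i) - g (z (i + 1))‖ ^ 2) := by ring
        _ ≤ ⟪g (z i) - g (z (i + 1)), x - y⟫ := h4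
      calc (n : ℝ) / β * Q = ∑ i ∈ Finset.range n, (n : ℝ) / β * ‖g (z i) - g (z (i + 1))‖ ^ 2 := by
            rw [hQ, Finset.mul_sum]
      _ ≤ ∑ i ∈ Finset.range n, ⟪g (z i) - g (z (i + 1)), x - y⟫ := Finset.sum_le_sum h2
      _ = ⟪g x - g y, x - y⟫ := h1.symm
    have hP0 : 0 ≤ P := Finset.sum_nonneg (fun i _ => norm_nonneg _)
    have hsq : ‖g x - g y‖ ^ 2 ≤ P ^ 2 := by
      have := pow_le_pow_left₀ (norm_nonneg (g x - g y)) hle 2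
      simpa [hP] using this
    have hfin : (1 / β) * ‖g x - g y‖ ^ 2 ≤ (1 / β) * (Q * n) :=
      mul_le_mul_of_nonneg_left (hsq.trans hPQ) (by positivity)
    have heq2 : (1 / β) * (Q * (n : ℝ)) = (n : ℝ) / β * Q := by ring
    linarith

variable [CompleteSpace H]

/-- Baire: somewhere `f` is bounded above on a ball. -/
lemma bh_bddAbove_ball {O : Set H} (hOne : O.Nonempty) (hOopen : IsOpen O)
    {f : H → ℝ} (hlsc : LowerSemicontinuousOn f O) :
    ∃ z : H, ∃ τ : ℝ, 0 < τ ∧ ball z τ ⊆ O ∧ ∃ N : ℝ, ∀ w ∈ ball z τ, f w ≤ N := by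
  classical
  obtain ⟨x₀, hx₀⟩ := hOne
  obtain ⟨r₀, hr₀, hball⟩ := Metric.isOpen_iff.mp hOopen x₀ hx₀
  set r := r₀ / 2 with hr
  have hrpos : 0 < r := by positivity
  have hcb : closedBall x₀ r ⊆ O :=
    (closedBall_subset_ball (by rw [hr]; linarith)).trans hball
  haveI : CompleteSpace (closedBall x₀ r) := Metric.isClosed_closedBall.completeSpace_coe
  haveI : Nonempty (closedBall x₀ r) := ⟨⟨x₀, mem_closedBall_self hrpos.le⟩⟩
  set C : ℕ → Set (closedBall x₀ r) := fun n => {y | f ↑y ≤ (n : ℝ)} with hC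
  have hCclosed : ∀ n, IsClosed (C n) := by
    intro n
    rw [← isOpen_compl_iff, isOpen_iff_mem_nhds]
    intro y hy
    have hyO : (y : H) ∈ O := hcb y.2
    have hfy : ((n : ℝ)) < f ↑y := by
      simp only [hC, mem_compl_iff, mem_setOf_eq, not_le] at hy
      exact hy
    have hev := hlsc ↑y hyO (n : ℝ) hfy
    have htend : Tendsto (fun y' : closedBall x₀ r => (y' : H)) (𝓝 y) (𝓝[O] ↑y) := by
      apply tendsto_nhdsWithin_of_tendsto_nhds_of_eventually_within
      · exact continuous_subtype_val.continuousAt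
      · exact Eventually.of_forall (fun y' => hcb y'.2)
    have hev2 := htend.eventually hev
    refine Filter.mem_of_superset hev2 ?_
    intro y' h
    simp only [hC, mem_compl_iff, mem_setOf_eq, not_le]
    exact h
  have hcover : ⋃ n, C n = univ := by
    ext y
    simp only [mem_iUnion, mem_univ, iff_true, hC, mem_setOf_eq]
    exact exists_nat_ge (f ↑y)
  obtain ⟨n, y₁, hy₁⟩ := nonempty_interior_of_iUnion_of_closed hCclosed hcover
  obtain ⟨ε, hε, hball₁⟩ := Metric.mem_nhds_iff.mp (mem_interior_iff_mem_nhds.mp hy₁)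
  have hkey : ∀ w : H, w ∈ closedBall x₀ r → dist w ↑y₁ < ε → f w ≤ (n : ℝ) := by
    intro w hw hd
    have hmem : (⟨w, hw⟩ : closedBall x₀ r) ∈ ball y₁ ε := by
      rw [mem_ball, Subtype.dist_eq]
      exact hd
    exact hball₁ hmem
  set y := (y₁ : H) with hydef
  have hyr : ‖y - x₀‖ ≤ r := by
    rw [← dist_eq_norm]
    exact mem_closedBall.mp y₁.2
  set ss := min (ε / (2 * r)) (1 / 2 : ℝ) with hss
  have hss0 : 0 < ss := lt_min (by positivity) (by norm_num)
  have hss1 : ss ≤ 1 / 2 := min_le_right _ _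
  have hssε : ss * r ≤ ε / 2 := by
    calc ss * r ≤ ε / (2 * r) * r := mul_le_mul_of_nonneg_right (min_le_left _ _) hrpos.le
    _ = ε / 2 := by field_simp
  set z₀ := y + ss • (x₀ - y) with hz₀
  set τ := ss * r / 2 with hτ
  have hτ0 : 0 < τ := by rw [hτ]; positivity
  have hzy : ‖z₀ - y‖ ≤ ss * r := by
    rw [hz₀, add_sub_cancel_left, norm_smul, Real.norm_eq_abs, abs_of_pos hss0]
    have : ‖x₀ - y‖ = ‖y - x₀‖ := norm_sub_rev _ _
    rw [this]
    exact mul_le_mul_of_nonneg_left hyr hss0.le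
  have hzx : ‖z₀ - x₀‖ = (1 - ss) * ‖y - x₀‖ := by
    rw [show z₀ - x₀ = (1 - ss) • (y - x₀) from by rw [hz₀]; module]
    rw [norm_smul, Real.norm_eq_abs, abs_of_nonneg (by linarith)]
  have hsub : ball z₀ τ ⊆ closedBall x₀ r := by
    intro w hw
    have h1 : ‖w - z₀‖ < τ := mem_ball_iff_norm.mp hw
    rw [mem_closedBall, dist_eq_norm]
    have h2 : ‖w - x₀‖ ≤ ‖w - z₀‖ + ‖z₀ - x₀‖ := by
      have := norm_add_le (w - z₀) (z₀ - x₀)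
      simpa using this
    rw [hzx] at h2
    nlinarith [mul_nonneg (by linarith : (0:ℝ) ≤ 1 - ss)
      (by linarith : (0:ℝ) ≤ r - ‖y - x₀‖), hss0.le, hrpos.le]
  refine ⟨z₀, τ, hτ0, fun w hw => hcb (hsub hw), ⟨(n : ℝ), ?_⟩⟩
  intro w hw
  apply hkey w (hsub hw)
  have h1 : ‖w - z₀‖ < τ := mem_ball_iff_norm.mp hw
  rw [dist_eq_norm]
  have h2 : ‖w - y‖ ≤ ‖w - z₀‖ + ‖z₀ - y‖ := by
    have := norm_add_le (w - z₀) (z₀ - y)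
    simpa using this
  have : ‖w - y‖ < ε := by nlinarith
  exact this

/-- Spreading local boundedness to every point of `O`. -/
lemma bh_local_bound {O : Set H} (hOne : O.Nonempty) (hOconv : Convex ℝ O)
    (hOopen : IsOpen O) {f : H → ℝ} (hlsc : LowerSemicontinuousOn f O)
    (hconv : ConvexOn ℝ O f) {x : H} (hx : x ∈ O) :
    ∃ ρ : ℝ, 0 < ρ ∧ ball x ρ ⊆ O ∧ ∃ M : ℝ, ∀ w ∈ ball x ρ, f w ≤ M := by
  obtain ⟨z, τ, hτ, hzO, N, hN⟩ := bh_bddAbove_ball hOne hOopen hlsc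
  have hcont : ContinuousAt (fun s : ℝ => x + s • (x - z)) 0 := by
    apply Continuous.continuousAt
    continuity
  have hmem : O ∈ 𝓝 ((fun s : ℝ => x + s • (x - z)) 0) := by
    simpa using hOopen.mem_nhds hx
  have hpre := hcont hmem
  obtain ⟨ε, hε, hball⟩ := Metric.mem_nhds_iff.mp hpre
  set s := ε / 2 with hs
  have hs0 : 0 < s := by rw [hs]; positivity
  have hsmem : x + s • (x - z) ∈ O := by
    apply hball
    rw [mem_ball, Real.dist_eq, sub_zero, abs_of_pos hs0]
    rw [hs]; linarith
  set p := x + s • (x - z) with hp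
  set lam := s / (1 + s) with hlam
  have h1s : 0 < 1 + s := by linarith
  have hlam0 : 0 < lam := div_pos hs0 h1s
  have hlam1 : lam < 1 := by rw [hlam, div_lt_one h1s]; linarith
  have hls : (1 - lam) * s = lam := by
    rw [hlam]
    field_simp
    ring
  have hkey : ∀ w ∈ ball x (lam * τ), w ∈ O ∧ f w ≤ lam * N + (1 - lam) * f p := by
    intro w hw
    set uu := z + lam⁻¹ • (w - x) with huu
    have huball : uu ∈ ball z τ := by
      rw [mem_ball, dist_eq_norm, huu, add_sub_cancel_left, norm_smul, Real.norm_eq_abs,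
        abs_of_pos (inv_pos.mpr hlam0), ← div_eq_inv_mul, div_lt_iff₀ hlam0]
      have hwx := mem_ball_iff_norm.mp hw
      linarith [hwx]
    have huO : uu ∈ O := hzO huball
    have hcomb : w = lam • uu + (1 - lam) • p := by
      rw [huu, hp, smul_add, smul_smul, mul_inv_cancel₀ (ne_of_gt hlam0), one_smul,
        smul_add, smul_smul, hls]
      module
    have hwO : w ∈ O := by
      rw [hcomb]
      exact hOconv huO hsmem hlam0.le (by linarith) (by ring)
    refine ⟨hwO, ?_⟩
    have hcv := hconv.2 huO hsmem hlam0.le (by linarith : (0:ℝ) ≤ 1 - lam) (by ring)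
    rw [← hcomb] at hcv
    simp only [smul_eq_mul] at hcv
    have hNu : f uu ≤ N := hN _ huball
    nlinarith [mul_le_mul_of_nonneg_left hNu hlam0.le]
  exact ⟨lam * τ, by positivity, fun w hw => (hkey w hw).1,
    ⟨lam * N + (1 - lam) * f p, fun w hw => (hkey w hw).2⟩⟩

/-- Convex and bounded above on a ball implies continuous on the half ball. -/
lemma bh_cont {x : H} {ρ M : ℝ} (hρ : 0 < ρ) {f : H → ℝ}
    (hconv : ConvexOn ℝ (ball x ρ) f) (hM : ∀ w ∈ ball x ρ, f w ≤ M) :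
    ContinuousOn f (ball x (ρ / 2)) := by
  have hxM : f x ≤ M := hM x (mem_ball_self hρ)
  set m := 2 * f x - M with hm
  have hlow : ∀ v ∈ ball x ρ, m ≤ f v := by
    intro v hv
    have hv'mem : x + (x - v) ∈ ball x ρ := by
      rw [mem_ball, dist_eq_norm, add_sub_cancel_left, norm_sub_rev]
      exact mem_ball_iff_norm.mp hv
    have hmid : (1 / 2 : ℝ) • v + (1 / 2 : ℝ) • (x + (x - v)) = x := by module
    have h1 := hconv.2 hv hv'mem (by norm_num) (by norm_num)
      (by norm_num : (1 / 2 : ℝ) + 1 / 2 = 1)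
    rw [hmid] at h1
    have h2 := hM _ hv'mem
    simp only [smul_eq_mul] at h1
    rw [hm]; linarith
  have hMm : m ≤ M := le_trans (hlow x (mem_ball_self hρ)) hxM
  set K := (M - m) / (ρ / 2) with hK
  have hK0 : 0 ≤ K := div_nonneg (by linarith) (by linarith)
  have hest : ∀ u ∈ ball x (ρ / 2), ∀ v ∈ ball x (ρ / 2), f u - f v ≤ K * ‖u - v‖ := by
    intro u hu v hv
    rcases eq_or_ne u v with rfl | huv
    · simp [hK0]
    have hd : 0 < ‖u - v‖ := by rw [norm_pos_iff, sub_ne_zero]; exact huv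
    have hdc : 0 < ‖u - v‖ + ρ / 2 := by positivity
    set e := (ρ / 2 / ‖u - v‖) • (u - v) with he
    have hne : ‖e‖ = ρ / 2 := by
      rw [he, norm_smul, Real.norm_eq_abs, abs_of_pos (by positivity)]
      field_simp
    have hzball : u + e ∈ ball x ρ := by
      rw [mem_ball, dist_eq_norm]
      calc ‖u + e - x‖ = ‖(u - x) + e‖ := by congr 1; abel
      _ ≤ ‖u - x‖ + ‖e‖ := norm_add_le _ _
      _ < ρ / 2 + ρ / 2 := by
          rw [hne]
          have := mem_ball_iff_norm.mp hu
          linarith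
      _ = ρ := by ring
    set lam := ‖u - v‖ / (‖u - v‖ + ρ / 2) with hlam
    have hlam0 : 0 ≤ lam := by positivity
    have hlam1 : lam ≤ 1 := by
      rw [hlam, div_le_one hdc]; linarith
    have hcd : lam * (ρ / 2) / ‖u - v‖ = 1 - lam := by
      rw [hlam]
      field_simp
      ring
    have hcomb : lam • (u + e) + (1 - lam) • v = u := by
      rw [he, smul_add, smul_smul]
      rw [show lam * (ρ / 2 / ‖u - v‖) = lam * (ρ / 2) / ‖u - v‖ from by ring, hcd]
      module
    have hvball : v ∈ ball x ρ := ball_subset_ball (by linarith) hv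
    have h1 := hconv.2 hzball hvball hlam0 (by linarith) (by ring : lam + (1 - lam) = 1)
    rw [hcomb] at h1
    simp only [smul_eq_mul] at h1
    have h2 : lam * (f (u + e) - f v) ≤ lam * (M - m) :=
      mul_le_mul_of_nonneg_left (by
        have := hM _ hzball
        have := hlow v hvball
        linarith) hlam0
    have hlamle : lam ≤ ‖u - v‖ / (ρ / 2) := by
      rw [hlam, div_le_div_iff₀ hdc (by linarith)]
      nlinarith
    have h3 : lam * (M - m) ≤ ‖u - v‖ / (ρ / 2) * (M - m) :=
      mul_le_mul_of_nonneg_right hlamle (by linarith)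
    have h4 : ‖u - v‖ / (ρ / 2) * (M - m) = K * ‖u - v‖ := by
      rw [hK]; ring
    nlinarith [h1, h2, h3]
  have hlip : LipschitzOnWith (Real.toNNReal K) f (ball x (ρ / 2)) := by
    rw [lipschitzOnWith_iff_dist_le_mul]
    intro u hu v hv
    rw [Real.dist_eq, dist_eq_norm, Real.coe_toNNReal _ hK0, abs_sub_le_iff]
    constructor
    · exact hest u hu v hv
    · rw [norm_sub_rev]
      exact hest v hv u hu
  exact hlip.continuousOn

/-- Subgradient at the center of a ball for a continuous convex function. -/
lemma bh_subgrad {x : H} {ρ : ℝ} (hρ : 0 < ρ) {F : H → ℝ}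
    (hFc : ConvexOn ℝ (ball x ρ) F) (hFcont : ContinuousOn F (ball x ρ)) :
    ∃ u : H, ∀ y ∈ ball x ρ, F x + ⟪u, y - x⟫ ≤ F y := by
  classical
  set A : Set (H × ℝ) := {p | p.1 ∈ ball x ρ ∧ F p.1 < p.2} with hA
  have hAconv : Convex ℝ A := by
    rintro ⟨y1, r1⟩ ⟨hy1, hr1⟩ ⟨y2, r2⟩ ⟨hy2, hr2⟩ la mu hla hmu hsum
    simp only [hA, Prod.smul_mk, Prod.mk_add_mk, mem_setOf_eq, smul_eq_mul] at *
    have hF := hFc.2 hy1 hy2 hla hmu hsum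
    have hcase : 0 < la ∨ 0 < mu := by
      rcases hla.lt_or_eq with h | h
      · exact Or.inl h
      · right; rw [← h, zero_add] at hsum; linarith
    have h1 : la * F y1 ≤ la * r1 := mul_le_mul_of_nonneg_left hr1.le hla
    have h2 : mu * F y2 ≤ mu * r2 := mul_le_mul_of_nonneg_left hr2.le hmu
    have hstrict : la * F y1 + mu * F y2 < la * r1 + mu * r2 := by
      rcases hcase with h | h
      · have := mul_lt_mul_of_pos_left hr1 h; linarith
      · have := mul_lt_mul_of_pos_left hr2 h; linarith
    exact ⟨convex_ball x ρ hy1 hy2 hla hmu hsum, lt_of_le_of_lt hF hstrict⟩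
  have hAopen : IsOpen A := by
    have h1 : IsOpen ((ball x ρ) ×ˢ (univ : Set ℝ)) := isOpen_ball.prod isOpen_univ
    have h2 : ContinuousOn (fun p : H × ℝ => p.2 - F p.1) ((ball x ρ) ×ˢ (univ : Set ℝ)) := by
      apply ContinuousOn.sub
      · exact continuous_snd.continuousOn
      · exact hFcont.comp continuous_fst.continuousOn (fun p hp => hp.1)
    have h3 := h2.isOpen_inter_preimage h1 (isOpen_Ioi (a := (0:ℝ)))
    have h4 : A = (ball x ρ) ×ˢ (univ : Set ℝ)
        ∩ (fun p : H × ℝ => p.2 - F p.1) ⁻¹' (Ioi 0) := by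
      ext ⟨y, r⟩
      simp only [hA, mem_setOf_eq, mem_inter_iff, mem_prod, mem_univ, and_true,
        mem_preimage, mem_Ioi, sub_pos]
    rw [h4]; exact h3
  have hxA : (x, F x) ∉ A := fun h => lt_irrefl _ h.2
  obtain ⟨Φ, hΦ⟩ := geometric_hahn_banach_open_point hAconv hAopen hxA
  set ℓ : H →L[ℝ] ℝ := Φ.comp (ContinuousLinearMap.inl ℝ H ℝ) with hℓ
  set c := Φ (0, 1) with hc
  have hℓapp : ∀ y : H, ℓ y = Φ (y, 0) := by
    intro y
    simp [hℓ, ContinuousLinearMap.inl_apply]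
  have hdec : ∀ (y : H) (r : ℝ), Φ (y, r) = ℓ y + r * c := by
    intro y r
    have hyr : (y, r) = (y, (0 : ℝ)) + r • ((0 : H), (1 : ℝ)) := by
      simp [Prod.ext_iff]
    rw [hyr, map_add, map_smul, smul_eq_mul, hc, hℓapp]
  have hcneg : c < 0 := by
    have h1 := hΦ (x, F x + 1) ⟨mem_ball_self hρ, by show F x < F x + 1; linarith⟩
    rw [hdec x (F x + 1), hdec x (F x)] at h1
    linarith
  have hcpos : 0 < -c := by linarith
  set u := (InnerProductSpace.toDual ℝ H).symm ((-c)⁻¹ • ℓ) with hu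
  have huv : ∀ v : H, ⟪u, v⟫ = (-c)⁻¹ * ℓ v := by
    intro v
    rw [hu, InnerProductSpace.toDual_symm_apply]
    rfl
  refine ⟨u, ?_⟩
  intro y hy
  have key : ∀ ε : ℝ, 0 < ε → ℓ (y - x) < (F y - F x) * (-c) + ε := by
    intro ε hε
    have hεc : 0 < ε / (-c) := div_pos hε hcpos
    have h1 := hΦ (y, F y + ε / (-c)) ⟨hy, by show F y < F y + ε / (-c); linarith⟩
    rw [hdec y _, hdec x _] at h1
    have hmap : ℓ (y - x) = ℓ y - ℓ x := map_sub ℓ y x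
    have hce : ε / (-c) * c = -ε := by field_simp; rw [div_self hcneg.ne]
    rw [hmap]
    nlinarith [h1, hce]
  have hle : ℓ (y - x) ≤ (F y - F x) * (-c) := by
    by_contra hcon
    push_neg at hcon
    have := key (ℓ (y - x) - (F y - F x) * (-c)) (by linarith)
    linarith
  have h6 : ⟪u, y - x⟫ ≤ F y - F x := by
    rw [huv]
    have h7 := mul_le_mul_of_nonneg_left hle (le_of_lt (inv_pos.mpr hcpos))
    have h8 : (-c)⁻¹ * ((F y - F x) * (-c)) = F y - F x := by
      field_simp [hcneg.ne]
    rw [h8] at h7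
    exact h7
  linarith

/-- Existence of the Gâteaux gradient at every point, from (ii). -/
lemma bh_gateaux {O : Set H} (hOne : O.Nonempty) (hOconv : Convex ℝ O)
    (hOopen : IsOpen O) {f : H → ℝ} (hlsc : LowerSemicontinuousOn f O)
    (hconv : ConvexOn ℝ O f) {β : ℝ} (hβ : 0 < β)
    (hB : ConvexOn ℝ O (fun x => β / 2 * ‖x‖ ^ 2 - f x)) {x : H} (hx : x ∈ O) :
    ∃ u : H, ∀ d : H, HasLineDerivAt ℝ f ⟪u, d⟫ x d := by
  obtain ⟨ρ, hρ, hbO, M, hM⟩ := bh_local_bound hOne hOconv hOopen hlsc hconv hx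
  set ρ₁ := ρ / 2 with hρ₁
  have hρ₁0 : 0 < ρ₁ := by rw [hρ₁]; positivity
  have hb1 : ball x ρ₁ ⊆ ball x ρ := ball_subset_ball (by rw [hρ₁]; linarith)
  have hfc : ConvexOn ℝ (ball x ρ) f := hconv.subset hbO (convex_ball x ρ)
  have hfcont : ContinuousOn f (ball x ρ₁) := bh_cont hρ hfc hM
  have hfc1 : ConvexOn ℝ (ball x ρ₁) f := hconv.subset (hb1.trans hbO) (convex_ball _ _)
  obtain ⟨uf, huf⟩ := bh_subgrad hρ₁0 hfc1 hfcont
  have hhc1 : ConvexOn ℝ (ball x ρ₁) (fun y => β / 2 * ‖y‖ ^ 2 - f y) :=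
    hB.subset (hb1.trans hbO) (convex_ball _ _)
  have hhcont : ContinuousOn (fun y => β / 2 * ‖y‖ ^ 2 - f y) (ball x ρ₁) := by
    apply ContinuousOn.sub
    · exact (continuous_const.mul (continuous_norm.pow 2)).continuousOn
    · exact hfcont
  obtain ⟨uh, huh⟩ := bh_subgrad hρ₁0 hhc1 hhcont
  have hup : ∀ y ∈ ball x ρ₁, f y ≤ f x + ⟪β • x - uh, y - x⟫ + β / 2 * ‖y - x‖ ^ 2 := by
    intro y hy
    have h1 := huh y hy
    have hid : ‖y‖ ^ 2 = ‖x‖ ^ 2 + 2 * ⟪x, y - x⟫ + ‖y - x‖ ^ 2 := by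
      have h2 := norm_add_sq_real x (y - x)
      rw [show x + (y - x) = y from by abel] at h2
      exact h2
    have hid2 : β / 2 * ‖y‖ ^ 2 = β / 2 * ‖x‖ ^ 2 + β * ⟪x, y - x⟫ + β / 2 * ‖y - x‖ ^ 2 := by
      rw [hid]; ring
    have hin : ⟪β • x - uh, y - x⟫ = β * ⟪x, y - x⟫ - ⟪uh, y - x⟫ := by
      rw [inner_sub_left, real_inner_smul_left]
    rw [hin]
    linarith [h1, hid2]
  have hwzero : uf = β • x - uh := by
    have hsand : ∀ v : H, ‖v‖ < ρ₁ → ⟪uf - (β • x - uh), v⟫ ≤ β / 2 * ‖v‖ ^ 2 := by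
      intro v hv
      have hyb : x + v ∈ ball x ρ₁ := by
        rw [mem_ball, dist_eq_norm, add_sub_cancel_left]; exact hv
      have h1 := huf (x + v) hyb
      have h2 := hup (x + v) hyb
      rw [add_sub_cancel_left] at h1 h2
      rw [inner_sub_left]
      linarith
    by_contra hne
    set w := uf - (β • x - uh) with hw
    have hw0 : w ≠ 0 := sub_ne_zero.mpr hne
    have hwpos : 0 < ‖w‖ := norm_pos_iff.mpr hw0
    set t := min (ρ₁ / (2 * ‖w‖)) (1 / β) with ht
    have ht0 : 0 < t := lt_min (by positivity) (by positivity)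
    have htw : ‖t • w‖ < ρ₁ := by
      rw [norm_smul, Real.norm_eq_abs, abs_of_pos ht0]
      calc t * ‖w‖ ≤ ρ₁ / (2 * ‖w‖) * ‖w‖ :=
            mul_le_mul_of_nonneg_right (min_le_left _ _) hwpos.le
      _ = ρ₁ / 2 := by field_simp
      _ < ρ₁ := by linarith
    have hs := hsand (t • w) htw
    rw [real_inner_smul_right, real_inner_self_eq_norm_sq] at hs
    have hnorm : ‖t • w‖ ^ 2 = t ^ 2 * ‖w‖ ^ 2 := by
      rw [norm_smul, Real.norm_eq_abs, mul_pow, sq_abs]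
    rw [hnorm] at hs
    have htβ : t ≤ 1 / β := min_le_right _ _
    have hβt : t * β ≤ 1 := (le_div_iff₀ hβ).mp htβ
    have hpos : 0 < t * ‖w‖ ^ 2 := by positivity
    nlinarith [hs, hβt, hpos]
  refine ⟨uf, ?_⟩
  intro d
  rcases eq_or_ne d 0 with rfl | hd
  · show HasDerivAt (fun t : ℝ => f (x + t • (0 : H))) ⟪uf, (0 : H)⟫ 0
    simp only [smul_zero, add_zero, inner_zero_right]
    exact hasDerivAt_const 0 (f x)
  have hdpos : 0 < ‖d‖ := norm_pos_iff.mpr hd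
  have hsand : ∀ v : H, ‖v‖ < ρ₁ →
      ⟪uf, v⟫ ≤ f (x + v) - f x ∧ f (x + v) - f x ≤ ⟪uf, v⟫ + β / 2 * ‖v‖ ^ 2 := by
    intro v hv
    have hyb : x + v ∈ ball x ρ₁ := by
      rw [mem_ball, dist_eq_norm, add_sub_cancel_left]; exact hv
    have h1 := huf (x + v) hyb
    have h2 := hup (x + v) hyb
    rw [add_sub_cancel_left] at h1 h2
    rw [← hwzero] at h2
    exact ⟨by linarith, by linarith⟩
  show HasDerivAt (fun t : ℝ => f (x + t • d)) ⟪uf, d⟫ 0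
  rw [hasDerivAt_iff_tendsto_slope]
  have hbound : ∀ᶠ t in 𝓝[≠] (0 : ℝ),
      ‖slope (fun t : ℝ => f (x + t • d)) 0 t - ⟪uf, d⟫‖ ≤ β / 2 * ‖d‖ ^ 2 * |t| := by
    have hev : ∀ᶠ t in 𝓝 (0 : ℝ), |t| < ρ₁ / ‖d‖ := by
      filter_upwards [ball_mem_nhds (0 : ℝ) (by positivity : (0:ℝ) < ρ₁ / ‖d‖)] with t ht
      rw [mem_ball, Real.dist_eq, sub_zero] at ht
      exact ht
    filter_upwards [eventually_nhdsWithin_of_eventually_nhds hev, self_mem_nhdsWithin]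
      with t ht hne
    have hne' : t ≠ 0 := hne
    have htv : ‖t • d‖ < ρ₁ := by
      rw [norm_smul, Real.norm_eq_abs, ← lt_div_iff₀ hdpos]
      exact ht
    obtain ⟨hl, hu2⟩ := hsand (t • d) htv
    have hinn : ⟪uf, t • d⟫ = t * ⟪uf, d⟫ := real_inner_smul_right _ _ _
    have hnn : ‖t • d‖ ^ 2 = t ^ 2 * ‖d‖ ^ 2 := by
      rw [norm_smul, Real.norm_eq_abs, mul_pow, sq_abs]
    rw [hinn] at hl hu2
    rw [hnn] at hu2
    have hAtc : |f (x + t • d) - f x - t * ⟪uf, d⟫| ≤ β / 2 * (t ^ 2 * ‖d‖ ^ 2) := by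
      rw [abs_le]
      constructor
      · have : (0:ℝ) ≤ β / 2 * (t ^ 2 * ‖d‖ ^ 2) := by positivity
        linarith
      · linarith
    have hslope : slope (fun t : ℝ => f (x + t • d)) 0 t - ⟪uf, d⟫
        = (f (x + t • d) - f x - t * ⟪uf, d⟫) / t := by
      rw [slope_def_field]
      simp only [zero_smul, add_zero, sub_zero]
      field_simp
    rw [hslope, Real.norm_eq_abs, abs_div, div_le_iff₀ (abs_pos.mpr hne')]
    calc |f (x + t • d) - f x - t * ⟪uf, d⟫| ≤ β / 2 * (t ^ 2 * ‖d‖ ^ 2) := hAtc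
    _ = β / 2 * ‖d‖ ^ 2 * |t| * |t| := by rw [← sq_abs t]; ring
  have hG : Tendsto (fun t : ℝ => β / 2 * ‖d‖ ^ 2 * |t|) (𝓝[≠] (0 : ℝ)) (𝓝 0) := by
    have hcont : Continuous (fun t : ℝ => β / 2 * ‖d‖ ^ 2 * |t|) := by continuity
    have h0 := hcont.tendsto 0
    simp only [abs_zero, mul_zero] at h0
    exact h0.mono_left nhdsWithin_le_nhds
  have hsqueeze := squeeze_zero_norm' hbound hG
  exact tendsto_sub_nhds_zero_iff.mp hsqueeze

end BH

/-- **Baillon–Haddad theorem on a convex open set.**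
Let `H` be a real Hilbert space, `O ⊆ H` a nonempty convex open set, `f` a lower
semicontinuous convex function on `O`, and `β > 0`.  The following are equivalent:
(i) `f` is Gâteaux differentiable on `O` with a `β`-Lipschitz gradient on `O`;
(ii) `x ↦ (β/2)‖x‖² − f x` is convex on `O`;
(iii) `f` is Gâteaux differentiable on `O` with a `(1/β)`-cocoercive gradient on `O`. -/
theorem stmt0 {H : Type*} [NormedAddCommGroup H] [InnerProductSpace ℝ H] [CompleteSpace H]
    (O : Set H) (hOne : O.Nonempty) (hOconv : Convex ℝ O) (hOopen : IsOpen O)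
    (f : H → ℝ) (hlsc : LowerSemicontinuousOn f O) (hconv : ConvexOn ℝ O f)
    (β : ℝ) (hβ : 0 < β) :
    ((∃ g : H → H,
        (∀ x ∈ O, ∀ d : H, HasLineDerivAt ℝ f ⟪g x, d⟫ x d) ∧
        ∀ x ∈ O, ∀ y ∈ O, ‖g x - g y‖ ≤ β * ‖x - y‖) ↔
      ConvexOn ℝ O (fun x => β / 2 * ‖x‖ ^ 2 - f x)) ∧
    (ConvexOn ℝ O (fun x => β / 2 * ‖x‖ ^ 2 - f x) ↔
      (∃ g : H → H,
        (∀ x ∈ O, ∀ d : H, HasLineDerivAt ℝ f ⟪g x, d⟫ x d) ∧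
        ∀ x ∈ O, ∀ y ∈ O, (1 / β) * ‖g x - g y‖ ^ 2 ≤ ⟪g x - g y, x - y⟫)) := by
  -- line derivative of h from that of f
  have hlineh : ∀ (g : H → H), (∀ x ∈ O, ∀ d : H, HasLineDerivAt ℝ f ⟪g x, d⟫ x d) →
      ∀ x ∈ O, ∀ d : H, HasLineDerivAt ℝ (fun y => β / 2 * ‖y‖ ^ 2 - f y)
        ⟪β • x - g x, d⟫ x d := by
    intro g hg x hx d
    have h1 := bh_quad_lineDeriv β x d
    have h2 := hg x hx d
    have h3 : HasLineDerivAt ℝ (fun y => β / 2 * ‖y‖ ^ 2 - f y) (β * ⟪x, d⟫ - ⟪g x, d⟫) x d :=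
      HasDerivAt.sub h1 h2
    have : ⟪β • x - g x, d⟫ = β * ⟪x, d⟫ - ⟪g x, d⟫ := by
      rw [inner_sub_left, real_inner_smul_left]
    rwa [this]
  -- A → B
  have hAB : (∃ g : H → H,
      (∀ x ∈ O, ∀ d : H, HasLineDerivAt ℝ f ⟪g x, d⟫ x d) ∧
      ∀ x ∈ O, ∀ y ∈ O, ‖g x - g y‖ ≤ β * ‖x - y‖) →
      ConvexOn ℝ O (fun x => β / 2 * ‖x‖ ^ 2 - f x) := by
    rintro ⟨g, hgd, hglip⟩
    refine bh_convexOn_of_mono hOconv hOopen (hlineh g hgd) ?_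
    intro a ha b hb
    have h1 : ⟪g a - g b, a - b⟫ ≤ ‖g a - g b‖ * ‖a - b‖ := real_inner_le_norm _ _
    have h2 := hglip a ha b hb
    have key : ⟪β • a - g a - (β • b - g b), a - b⟫
        = β * ‖a - b‖ ^ 2 - ⟪g a - g b, a - b⟫ := by
      have : β • a - g a - (β • b - g b) = β • (a - b) - (g a - g b) := by module
      rw [this, inner_sub_left, real_inner_smul_left, real_inner_self_eq_norm_sq]
      try ring
    rw [key]
    nlinarith [norm_nonneg (a - b), norm_nonneg (g a - g b)]
  -- C → A
  have hCA : (∃ g : H → H,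
      (∀ x ∈ O, ∀ d : H, HasLineDerivAt ℝ f ⟪g x, d⟫ x d) ∧
      ∀ x ∈ O, ∀ y ∈ O, (1 / β) * ‖g x - g y‖ ^ 2 ≤ ⟪g x - g y, x - y⟫) →
      (∃ g : H → H,
      (∀ x ∈ O, ∀ d : H, HasLineDerivAt ℝ f ⟪g x, d⟫ x d) ∧
      ∀ x ∈ O, ∀ y ∈ O, ‖g x - g y‖ ≤ β * ‖x - y‖) := by
    rintro ⟨g, hgd, hco⟩
    refine ⟨g, hgd, ?_⟩
    intro x hx y hy
    rcases eq_or_ne (g x) (g y) with h | h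
    · have h0 : (0:ℝ) ≤ β * ‖x - y‖ := by positivity
      simpa [h, sub_self] using h0
    · have hs : 0 < ‖g x - g y‖ := by
        rw [norm_pos_iff, sub_ne_zero]; exact h
      have h1 := hco x hx y hy
      have h2 : ⟪g x - g y, x - y⟫ ≤ ‖g x - g y‖ * ‖x - y‖ := real_inner_le_norm _ _
      have h3 : ‖g x - g y‖ ^ 2 ≤ β * (‖g x - g y‖ * ‖x - y‖) := by
        have h4 := mul_le_mul_of_nonneg_left (h1.trans h2) (le_of_lt hβ)
        calc ‖g x - g y‖ ^ 2 = β * (1 / β * ‖g x - g y‖ ^ 2) := by field_simp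
        _ ≤ β * (‖g x - g y‖ * ‖x - y‖) := h4
      nlinarith
  -- B → C
  have hBC : ConvexOn ℝ O (fun x => β / 2 * ‖x‖ ^ 2 - f x) →
      (∃ g : H → H,
      (∀ x ∈ O, ∀ d : H, HasLineDerivAt ℝ f ⟪g x, d⟫ x d) ∧
      ∀ x ∈ O, ∀ y ∈ O, (1 / β) * ‖g x - g y‖ ^ 2 ≤ ⟪g x - g y, x - y⟫) := by
    intro hB
    have hex : ∀ x ∈ O, ∃ u : H, ∀ d : H, HasLineDerivAt ℝ f ⟪u, d⟫ x d :=
      fun x hx => bh_gateaux hOne hOconv hOopen hlsc hconv hβ hB hx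
    classical
    set g : H → H := fun x => if hx : x ∈ O then Classical.choose (hex x hx) else 0 with hgdef
    have hgd : ∀ x ∈ O, ∀ d : H, HasLineDerivAt ℝ f ⟪g x, d⟫ x d := by
      intro x hx d
      rw [hgdef]
      simp only [dif_pos hx]
      exact Classical.choose_spec (hex x hx) d
    -- gradient inequalities
    have hC : ∀ a ∈ O, ∀ b ∈ O, f a + ⟪g a, b - a⟫ ≤ f b :=
      fun a ha b hb => bh_grad_ineq hconv hgd ha hb
    have hD : ∀ a ∈ O, ∀ b ∈ O, f b ≤ f a + ⟪g a, b - a⟫ + β / 2 * ‖b - a‖ ^ 2 := by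
      intro a ha b hb
      have := bh_grad_ineq hB (hlineh g hgd) ha hb
      have hid : ‖b‖ ^ 2 = ‖a‖ ^ 2 + 2 * ⟪a, b - a⟫ + ‖b - a‖ ^ 2 := by
        have := norm_add_sq_real a (b - a)
        simpa using this
      have hin : ⟪β • a - g a, b - a⟫ = β * ⟪a, b - a⟫ - ⟪g a, b - a⟫ := by
        rw [inner_sub_left, real_inner_smul_left]
      rw [hin] at this
      nlinarith [this]
    refine ⟨g, hgd, ?_⟩
    intro x hx y hy
    exact (bh_chain hOconv hOopen hβ hC hD hx hy).2
  exact ⟨⟨hAB, fun hB => hCA (hBC hB)⟩, ⟨hBC, fun hCc => hAB (hCA hCc)⟩⟩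
end

section
/- Let H be a real Hilbert space, let φ : H → ℝ be convex and Gâteaux differentiable, let x ∈ H, M > 0, and let 0 ≤ μ ≤ L be such that μ‖y − z‖² ≤ ⟨y − z, ∇φ(y) − ∇φ(z)⟩ ≤ L‖y − z‖² for all y, z ∈ B_M(x). For μ' ∈ [0, μ] with μ' < L, define φ_{μ'} : u ↦ φ(u) − (μ'/2)‖u‖². Then ∇φ_{μ'} = ∇φ − μ'·Id is (1/(L − μ'))-cocoercive on B_M(x), i.e. for all y, z ∈ B_M(x): ⟨y − z, ∇φ_{μ'}(y) − ∇φ_{μ'}(z)⟩ ≥ (1/(L − μ'))‖∇φ_{μ'}(y) − ∇φ_{μ'}(z)‖². -/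
open scoped RealInnerProductSpace

section AuxStmt6

variable {H : Type*} [NormedAddCommGroup H] [InnerProductSpace ℝ H]

lemma aux_hasDerivAt (φ : H → ℝ) (φ' : H → H)
    (hφ' : ∀ u d : H, HasLineDerivAt ℝ φ ⟪φ' u, d⟫ u d) (a d : H) (t : ℝ) :
    HasDerivAt (fun s : ℝ => φ (a + s • d)) ⟪φ' (a + t • d), d⟫ t := by
  have h : HasDerivAt (fun s : ℝ => φ (a + t • d + s • d)) ⟪φ' (a + t • d), d⟫ 0 := hφ' (a + t • d) d
  have h2 : HasDerivAt (fun s : ℝ => s - t) 1 t := by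
    simpa using (hasDerivAt_id t).sub_const t
  have h3 := HasDerivAt.comp (𝕜 := ℝ) t (by simpa using h) h2
  have he : ((fun s : ℝ => φ (a + t • d + s • d)) ∘ fun s : ℝ => s - t)
      = fun s : ℝ => φ (a + s • d) := by
    funext s; show φ (a + t • d + (s - t) • d) = _; congr 1; rw [sub_smul]; abel
  rw [he] at h3; simpa using h3

lemma aux_seg (x : H) (M : ℝ) {a b : H} (ha : a ∈ Metric.ball x M) (hb : b ∈ Metric.ball x M)
    {t : ℝ} (ht : t ∈ Set.Icc (0:ℝ) 1) : a + t • (b - a) ∈ Metric.ball x M := by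
  have h := (convex_ball x M) ha hb (by linarith [ht.2] : (0:ℝ) ≤ 1 - t) ht.1 (by ring)
  convert h using 1
  module

lemma aux_lower (φ : H → ℝ) (φ' : H → H)
    (hφ' : ∀ u d : H, HasLineDerivAt ℝ φ ⟪φ' u, d⟫ u d) (x : H) (M c : ℝ)
    (hlb : ∀ y ∈ Metric.ball x M, ∀ z ∈ Metric.ball x M,
      c * ‖y - z‖ ^ 2 ≤ ⟪y - z, φ' y - φ' z⟫)
    {a b : H} (ha : a ∈ Metric.ball x M) (hb : b ∈ Metric.ball x M) :
    φ a + ⟪φ' a, b - a⟫ + c / 2 * ‖b - a‖ ^ 2 ≤ φ b := by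
  set d := b - a with hd
  set G : ℝ → ℝ := fun s => φ (a + s • d) - s * ⟪φ' a, d⟫ - s ^ 2 * (c * ‖d‖ ^ 2 / 2) with hGdef
  have hG : ∀ s : ℝ, HasDerivAt G
      (⟪φ' (a + s • d), d⟫ - ⟪φ' a, d⟫ - s * (c * ‖d‖ ^ 2)) s := by
    intro s
    have h0 := aux_hasDerivAt φ φ' hφ' a d s
    have h1 : HasDerivAt (fun s : ℝ => s * ⟪φ' a, d⟫) ⟪φ' a, d⟫ s := by
      simpa using (hasDerivAt_id s).mul_const ⟪φ' a, d⟫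
    have h2 : HasDerivAt (fun s : ℝ => s ^ 2 * (c * ‖d‖ ^ 2 / 2)) (s * (c * ‖d‖ ^ 2)) s := by
      have := (hasDerivAt_pow 2 s).mul_const (c * ‖d‖ ^ 2 / 2)
      exact this.congr_deriv (by ring)
    exact (h0.sub h1).sub h2
  have hmono : MonotoneOn G (Set.Icc (0:ℝ) 1) := by
    apply monotoneOn_of_deriv_nonneg (convex_Icc 0 1)
    · exact (Differentiable.continuous (fun s => (hG s).differentiableAt)).continuousOn
    · exact fun s _ => ((hG s).differentiableAt).differentiableWithinAt
    · intro s hs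
      rw [interior_Icc] at hs
      rw [(hG s).deriv]
      have hy : a + s • d ∈ Metric.ball x M := aux_seg x M ha hb ⟨hs.1.le, hs.2.le⟩
      have := hlb (a + s • d) hy a ha
      have he : a + s • d - a = s • d := by abel
      rw [he, norm_smul, real_inner_smul_left] at this
      have hsym : ⟪φ' (a + s • d) - φ' a, d⟫ = ⟪d, φ' (a + s • d) - φ' a⟫ := real_inner_comm _ _
      rw [inner_sub_left] at hsym
      rw [Real.norm_eq_abs, abs_of_pos hs.1] at this
      nlinarith [hs.1]
  have h01 := hmono (Set.mem_Icc.2 ⟨le_refl 0, zero_le_one⟩) (Set.mem_Icc.2 ⟨zero_le_one, le_refl 1⟩) zero_le_one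
  have hG0 : G 0 = φ a := by simp [hGdef]
  have hG1 : G 1 = φ b - ⟪φ' a, d⟫ - c * ‖d‖ ^ 2 / 2 := by
    simp only [hGdef, one_smul, one_pow, one_mul]
    have : a + d = b := by rw [hd]; abel
    rw [this]
  rw [hG0, hG1] at h01
  linarith

lemma aux_upper (φ : H → ℝ) (φ' : H → H)
    (hφ' : ∀ u d : H, HasLineDerivAt ℝ φ ⟪φ' u, d⟫ u d) (x : H) (M L : ℝ)
    (hub : ∀ y ∈ Metric.ball x M, ∀ z ∈ Metric.ball x M,
      ⟪y - z, φ' y - φ' z⟫ ≤ L * ‖y - z‖ ^ 2)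
    {a b : H} (ha : a ∈ Metric.ball x M) (hb : b ∈ Metric.ball x M) :
    φ b ≤ φ a + ⟪φ' a, b - a⟫ + L / 2 * ‖b - a‖ ^ 2 := by
  set d := b - a with hd
  set G : ℝ → ℝ := fun s => φ (a + s • d) - s * ⟪φ' a, d⟫ - s ^ 2 * (L * ‖d‖ ^ 2 / 2) with hGdef
  have hG : ∀ s : ℝ, HasDerivAt G
      (⟪φ' (a + s • d), d⟫ - ⟪φ' a, d⟫ - s * (L * ‖d‖ ^ 2)) s := by
    intro s
    have h0 := aux_hasDerivAt φ φ' hφ' a d s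
    have h1 : HasDerivAt (fun s : ℝ => s * ⟪φ' a, d⟫) ⟪φ' a, d⟫ s := by
      simpa using (hasDerivAt_id s).mul_const ⟪φ' a, d⟫
    have h2 : HasDerivAt (fun s : ℝ => s ^ 2 * (L * ‖d‖ ^ 2 / 2)) (s * (L * ‖d‖ ^ 2)) s := by
      have := (hasDerivAt_pow 2 s).mul_const (L * ‖d‖ ^ 2 / 2)
      exact this.congr_deriv (by ring)
    exact (h0.sub h1).sub h2
  have hmono : AntitoneOn G (Set.Icc (0:ℝ) 1) := by
    apply antitoneOn_of_deriv_nonpos (convex_Icc 0 1)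
    · exact (Differentiable.continuous (fun s => (hG s).differentiableAt)).continuousOn
    · exact fun s _ => ((hG s).differentiableAt).differentiableWithinAt
    · intro s hs
      rw [interior_Icc] at hs
      rw [(hG s).deriv]
      have hy : a + s • d ∈ Metric.ball x M := aux_seg x M ha hb ⟨hs.1.le, hs.2.le⟩
      have := hub (a + s • d) hy a ha
      have he : a + s • d - a = s • d := by abel
      rw [he, norm_smul, real_inner_smul_left] at this
      have hsym : ⟪φ' (a + s • d) - φ' a, d⟫ = ⟪d, φ' (a + s • d) - φ' a⟫ := real_inner_comm _ _
      rw [inner_sub_left] at hsym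
      rw [Real.norm_eq_abs, abs_of_pos hs.1] at this
      nlinarith [hs.1]
  have h01 := hmono (Set.mem_Icc.2 ⟨le_refl 0, zero_le_one⟩) (Set.mem_Icc.2 ⟨zero_le_one, le_refl 1⟩) zero_le_one
  have hG0 : G 0 = φ a := by simp [hGdef]
  have hG1 : G 1 = φ b - ⟪φ' a, d⟫ - L * ‖d‖ ^ 2 / 2 := by
    simp only [hGdef, one_smul, one_pow, one_mul]
    have : a + d = b := by rw [hd]; abel
    rw [this]
  rw [hG0, hG1] at h01
  linarith

lemma aux_lip (φ : H → ℝ) (φ' : H → H)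
    (hφ' : ∀ u d : H, HasLineDerivAt ℝ φ ⟪φ' u, d⟫ u d) (x : H) (M μ L : ℝ)
    (hμ0 : 0 ≤ μ) (hL0 : 0 ≤ L)
    (hlb : ∀ y ∈ Metric.ball x M, ∀ z ∈ Metric.ball x M,
      μ * ‖y - z‖ ^ 2 ≤ ⟪y - z, φ' y - φ' z⟫)
    (hub : ∀ y ∈ Metric.ball x M, ∀ z ∈ Metric.ball x M,
      ⟪y - z, φ' y - φ' z⟫ ≤ L * ‖y - z‖ ^ 2)
    {p q : H} (hp : p ∈ Metric.ball x M) (hq : q ∈ Metric.ball x M)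
    (hclear : ‖p - x‖ + ‖p - q‖ < M) :
    ‖φ' p - φ' q‖ ≤ 2 * L * ‖p - q‖ := by
  by_cases hu0 : φ' p - φ' q = 0
  · rw [hu0, norm_zero]; positivity
  set u := φ' p - φ' q with hu
  set r := ‖p - q‖ with hr
  have hrpos : 0 < r := by
    rw [hr, norm_pos_iff, sub_ne_zero]
    intro hpq
    exact hu0 (by rw [hu, hpq, sub_self])
  have hunorm : 0 < ‖u‖ := norm_pos_iff.2 hu0
  set e : H := (r / ‖u‖) • u with he
  have henorm : ‖e‖ = r := by
    rw [he, norm_smul, Real.norm_eq_abs, abs_of_pos (div_pos hrpos hunorm),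
      div_mul_cancel₀ _ hunorm.ne']
  set s : H := p + e with hs
  have hsball : s ∈ Metric.ball x M := by
    rw [Metric.mem_ball, dist_eq_norm]
    have : s - x = (p - x) + e := by rw [hs]; abel
    rw [this]
    calc ‖(p - x) + e‖ ≤ ‖p - x‖ + ‖e‖ := norm_add_le _ _
    _ < M := by rw [henorm]; exact hclear
  have in1 := aux_lower φ φ' hφ' x M μ hlb hp hsball
  have in2 := aux_lower φ φ' hφ' x M μ hlb hq hp
  have in3 := aux_upper φ φ' hφ' x M L hub hq hsball
  have hsp : s - p = e := by rw [hs]; abel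
  have hsq : s - q = (p - q) + e := by rw [hs]; abel
  rw [hsp] at in1
  rw [hsq, inner_add_right] at in3
  have hsqn : ‖(p - q) + e‖ ^ 2 ≤ (2 * r) ^ 2 := by
    have h1 : ‖(p - q) + e‖ ≤ 2 * r := by
      calc ‖(p - q) + e‖ ≤ ‖p - q‖ + ‖e‖ := norm_add_le _ _
      _ = 2 * r := by rw [henorm, ← hr]; ring
    exact pow_le_pow_left₀ (norm_nonneg _) h1 2
  have hinner : ⟪φ' p, e⟫ - ⟪φ' q, e⟫ = r * ‖u‖ := by
    have h1 : ⟪u, e⟫ = ⟪φ' p, e⟫ - ⟪φ' q, e⟫ := by rw [hu, inner_sub_left]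
    rw [← h1, he, real_inner_smul_right, real_inner_self_eq_norm_sq]
    field_simp
  have hμe : 0 ≤ μ / 2 * ‖e‖ ^ 2 := by positivity
  have hμr : 0 ≤ μ / 2 * ‖p - q‖ ^ 2 := by positivity
  nlinarith [hsqn, hrpos]

lemma aux_coco_pair (φ : H → ℝ) (φ' : H → H)
    (hφ' : ∀ u d : H, HasLineDerivAt ℝ φ ⟪φ' u, d⟫ u d) (x : H) (M μ L μ' : ℝ)
    (hμ'0 : 0 ≤ μ') (hμ'μ : μ' ≤ μ) (hμ'L : μ' < L)
    (hlb : ∀ y ∈ Metric.ball x M, ∀ z ∈ Metric.ball x M,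
      μ * ‖y - z‖ ^ 2 ≤ ⟪y - z, φ' y - φ' z⟫)
    (hub : ∀ y ∈ Metric.ball x M, ∀ z ∈ Metric.ball x M,
      ⟪y - z, φ' y - φ' z⟫ ≤ L * ‖y - z‖ ^ 2)
    {p q : H} (hp : p ∈ Metric.ball x M) (hq : q ∈ Metric.ball x M)
    (hw : p - (L - μ')⁻¹ • ((φ' p - μ' • p) - (φ' q - μ' • q)) ∈ Metric.ball x M)
    (hw' : q + (L - μ')⁻¹ • ((φ' p - μ' • p) - (φ' q - μ' • q)) ∈ Metric.ball x M) :
    (L - μ')⁻¹ * ‖(φ' p - μ' • p) - (φ' q - μ' • q)‖ ^ 2 ≤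
      ⟪p - q, (φ' p - μ' • p) - (φ' q - μ' • q)⟫ := by
  have hℓ : 0 < L - μ' := by linarith
  set t : ℝ := (L - μ')⁻¹ with htdef
  set v : H := (φ' p - μ' • p) - (φ' q - μ' • q) with hvdef
  have hlb' : ∀ y ∈ Metric.ball x M, ∀ z ∈ Metric.ball x M,
      μ' * ‖y - z‖ ^ 2 ≤ ⟪y - z, φ' y - φ' z⟫ := by
    intro y hy z hz
    have h1 := hlb y hy z hz
    nlinarith [sq_nonneg ‖y - z‖]
  have A1 := aux_lower φ φ' hφ' x M μ' hlb' hq hw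
  have A2 := aux_upper φ φ' hφ' x M L hub hp hw
  have A3 := aux_lower φ φ' hφ' x M μ' hlb' hp hw'
  have A4 := aux_upper φ φ' hφ' x M L hub hq hw'
  have e1 : p - t • v - q = (p - q) - t • v := by abel
  have e2 : p - t • v - p = -(t • v) := by abel
  have e3 : q + t • v - p = -((p - q) - t • v) := by abel
  have e4 : q + t • v - q = t • v := by abel
  rw [e1] at A1
  rw [e2] at A2
  rw [e3] at A3
  rw [e4] at A4
  -- scalar rewriting
  have k2 : ‖(p - q) - t • v‖ ^ 2
      = ‖p - q‖ ^ 2 - 2 * (t * ⟪p - q, v⟫) + t ^ 2 * ‖v‖ ^ 2 := by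
    rw [norm_sub_sq_real, real_inner_smul_right, norm_smul, Real.norm_eq_abs, mul_pow, sq_abs]
  have k3 : ‖t • v‖ ^ 2 = t ^ 2 * ‖v‖ ^ 2 := by
    rw [norm_smul, Real.norm_eq_abs, mul_pow, sq_abs]
  have kq : ⟪φ' q, (p - q) - t • v⟫ = ⟪φ' q, p - q⟫ - t * ⟪φ' q, v⟫ := by
    rw [inner_sub_right, real_inner_smul_right]
  have kp : ⟪φ' p, -((p - q) - t • v)⟫ = -⟪φ' p, p - q⟫ + t * ⟪φ' p, v⟫ := by
    rw [inner_neg_right, inner_sub_right, real_inner_smul_right]; ring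
  have kp2 : ⟪φ' p, -(t • v)⟫ = -(t * ⟪φ' p, v⟫) := by
    rw [inner_neg_right, real_inner_smul_right]
  have kq2 : ⟪φ' q, t • v⟫ = t * ⟪φ' q, v⟫ := real_inner_smul_right _ _ _
  rw [kq, k2] at A1
  rw [kp2] at A2
  rw [norm_neg] at A2
  rw [k3] at A2
  rw [kp] at A3
  rw [norm_neg] at A3
  rw [k2] at A3
  rw [kq2] at A4
  rw [k3] at A4
  -- vector identities as scalar equalities
  have hid : φ' p - φ' q = v + μ' • (p - q) := by rw [hvdef]; module
  have E1 : t * ⟪φ' p, v⟫ - t * ⟪φ' q, v⟫ = t * ‖v‖ ^ 2 + μ' * (t * ⟪p - q, v⟫) := by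
    have : ⟪φ' p - φ' q, v⟫ = ‖v‖ ^ 2 + μ' * ⟪p - q, v⟫ := by
      rw [hid, inner_add_left, real_inner_smul_left, real_inner_self_eq_norm_sq]
    rw [inner_sub_left] at this
    linear_combination t * this
  have E2 : ⟪φ' p, p - q⟫ - ⟪φ' q, p - q⟫ = ⟪p - q, v⟫ + μ' * ‖p - q‖ ^ 2 := by
    have : ⟪φ' p - φ' q, p - q⟫ = ⟪p - q, v⟫ + μ' * ‖p - q‖ ^ 2 := by
      rw [hid, inner_add_left, real_inner_smul_left, real_inner_self_eq_norm_sq,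
        real_inner_comm v (p - q)]
    rw [inner_sub_left] at this
    linarith [this]
  have E3 : L * (t ^ 2 * ‖v‖ ^ 2) - μ' * (t ^ 2 * ‖v‖ ^ 2) = t * ‖v‖ ^ 2 := by
    have h : (L - μ') * t ^ 2 = t := by
      rw [pow_two, ← mul_assoc, mul_inv_cancel₀ hℓ.ne', one_mul]
    linear_combination ‖v‖ ^ 2 * h
  clear_value t v
  clear hφ' hlb hub hlb' k2 k3 kq kp kp2 kq2 e1 e2 e3 e4 hid hw hw' hp hq htdef hvdef
  linarith [A1, A2, A3, A4, E1, E2, E3]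


end AuxStmt6

/-- **Local cocoercivity of the shifted gradient.**
Let `H` be a real Hilbert space, `φ : H → ℝ` convex Gâteaux differentiable with gradient
`φ'` satisfying `μ‖y − z‖² ≤ ⟪y − z, ∇φ(y) − ∇φ(z)⟫ ≤ L‖y − z‖²` on `B_M(x)`, with
`0 ≤ μ ≤ L`.  For `μ' ∈ [0, μ]` with `μ' < L`, the gradient of
`φ_{μ'} : u ↦ φ(u) − (μ'/2)‖u‖²`, i.e. `∇φ_{μ'} = ∇φ − μ'·Id`, is `(1/(L − μ'))`-cocoercive
on `B_M(x)`:
`⟪y − z, ∇φ_{μ'}(y) − ∇φ_{μ'}(z)⟫ ≥ (1/(L − μ'))‖∇φ_{μ'}(y) − ∇φ_{μ'}(z)‖²`. -/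
theorem stmt6 {H : Type*} [NormedAddCommGroup H] [InnerProductSpace ℝ H] [CompleteSpace H]
    (φ : H → ℝ) (hφconv : ConvexOn ℝ Set.univ φ)
    (φ' : H → H) (hφ' : ∀ u d : H, HasLineDerivAt ℝ φ ⟪φ' u, d⟫ u d)
    (x : H) (M : ℝ) (hM : 0 < M)
    (μ L : ℝ) (hμ0 : 0 ≤ μ) (hμL : μ ≤ L)
    (hbound : ∀ y ∈ Metric.ball x M, ∀ z ∈ Metric.ball x M,
      μ * ‖y - z‖ ^ 2 ≤ ⟪y - z, φ' y - φ' z⟫ ∧ ⟪y - z, φ' y - φ' z⟫ ≤ L * ‖y - z‖ ^ 2)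
    (μ' : ℝ) (hμ'0 : 0 ≤ μ') (hμ'μ : μ' ≤ μ) (hμ'L : μ' < L) :
    ∀ y ∈ Metric.ball x M, ∀ z ∈ Metric.ball x M,
      (1 / (L - μ')) * ‖(φ' y - μ' • y) - (φ' z - μ' • z)‖ ^ 2 ≤
        ⟪y - z, (φ' y - μ' • y) - (φ' z - μ' • z)⟫ := by
  intro y hy z hz
  have hℓ : 0 < L - μ' := by linarith
  have hL : 0 < L := lt_of_le_of_lt hμ'0 hμ'L
  have hlb : ∀ a ∈ Metric.ball x M, ∀ b ∈ Metric.ball x M,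
      μ * ‖a - b‖ ^ 2 ≤ ⟪a - b, φ' a - φ' b⟫ := fun a ha b hb => (hbound a ha b hb).1
  have hub : ∀ a ∈ Metric.ball x M, ∀ b ∈ Metric.ball x M,
      ⟪a - b, φ' a - φ' b⟫ ≤ L * ‖a - b‖ ^ 2 := fun a ha b hb => (hbound a ha b hb).2
  set m : ℝ := max ‖y - x‖ ‖z - x‖ with hmdef
  have hmM : m < M := by
    apply max_lt
    · rw [← dist_eq_norm]; exact Metric.mem_ball.1 hy
    · rw [← dist_eq_norm]; exact Metric.mem_ball.1 hz
  have hm0 : 0 ≤ m := le_trans (norm_nonneg _) (le_max_left _ _)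
  set ρ : ℝ := (M - m) / 2 with hρdef
  have hρ : 0 < ρ := by simp only [hρdef]; linarith
  set ε : ℝ := min ρ (ρ * (L - μ') / (3 * L)) with hεdef
  have hε : 0 < ε := lt_min hρ (by positivity)
  obtain ⟨n, hn⟩ := exists_nat_gt (‖y - z‖ / ε)
  have hn0 : 0 < (n : ℝ) := lt_of_le_of_lt (by positivity) hn
  have hnne : (n : ℝ) ≠ 0 := hn0.ne'
  have hnn : 0 < n := by exact_mod_cast hn0
  have hstep : ‖y - z‖ / n < ε := by
    rw [div_lt_iff₀ hn0]
    calc ‖y - z‖ = (‖y - z‖ / ε) * ε := by field_simp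
    _ < n * ε := by exact mul_lt_mul_of_pos_right hn hε
    _ = ε * n := by ring
  set δ : ℝ := ‖y - z‖ / n with hδdef
  have hδ0 : 0 ≤ δ := by positivity
  set X : ℕ → H := fun i => z + ((i : ℝ) / n) • (y - z) with hXdef
  have hX0 : X 0 = z := by simp [hXdef]
  have hXn : X n = y := by
    simp only [hXdef, div_self hnne, one_smul]; abel
  have hXm : ∀ i ≤ n, ‖X i - x‖ ≤ m := by
    intro i hi
    have hc0 : 0 ≤ (i : ℝ) / n := by positivity
    have hc1 : (i : ℝ) / n ≤ 1 := by
      rw [div_le_one hn0]; exact_mod_cast hi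
    have h1 : X i - x = (1 - (i : ℝ) / n) • (z - x) + ((i : ℝ) / n) • (y - x) := by
      simp only [hXdef]; module
    rw [h1]
    calc ‖(1 - (i : ℝ) / n) • (z - x) + ((i : ℝ) / n) • (y - x)‖
        ≤ ‖(1 - (i : ℝ) / n) • (z - x)‖ + ‖((i : ℝ) / n) • (y - x)‖ := norm_add_le _ _
      _ = (1 - (i : ℝ) / n) * ‖z - x‖ + (i : ℝ) / n * ‖y - x‖ := by
          rw [norm_smul, norm_smul, Real.norm_eq_abs, Real.norm_eq_abs,
            abs_of_nonneg (by linarith), abs_of_nonneg hc0]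
      _ ≤ (1 - (i : ℝ) / n) * m + (i : ℝ) / n * m := by
          gcongr
          · exact le_max_right _ _
          · exact le_max_left _ _
      _ = m := by ring
  have hXball : ∀ i ≤ n, X i ∈ Metric.ball x M := by
    intro i hi
    rw [Metric.mem_ball, dist_eq_norm]
    exact lt_of_le_of_lt (hXm i hi) hmM
  have hcons : ∀ i : ℕ, X (i + 1) - X i = ((1 : ℝ) / n) • (y - z) := by
    intro i
    have hs : ((i : ℝ) + 1) / n - (i : ℝ) / n = 1 / n := by ring
    simp only [hXdef]
    push_cast
    module
  have hdist : ∀ i : ℕ, ‖X (i + 1) - X i‖ = δ := by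
    intro i
    rw [hcons i, norm_smul, Real.norm_eq_abs, abs_of_nonneg (by positivity), hδdef]
    ring
  set F : ℕ → H := fun i => φ' (X i) - μ' • X i with hFdef
  set V : ℕ → H := fun i => F (i + 1) - F i with hVdef
  -- gradient difference bound
  have hVb : ∀ i < n, ‖V i‖ ≤ 3 * L * δ := by
    intro i hi
    have hip : X (i + 1) ∈ Metric.ball x M := hXball (i + 1) hi
    have hiq : X i ∈ Metric.ball x M := hXball i (le_of_lt hi)
    have hclear : ‖X (i + 1) - x‖ + ‖X (i + 1) - X i‖ < M := by
      have h1 := hXm (i + 1) hi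
      have h2 : ‖X (i + 1) - X i‖ = δ := hdist i
      have h3 : δ < ρ := lt_of_lt_of_le hstep (min_le_left _ _)
      rw [h2]
      simp only [hρdef] at h3
      linarith
    have hlip := aux_lip φ φ' hφ' x M μ L hμ0 hL.le hlb hub hip hiq hclear
    have hVeq : V i = (φ' (X (i + 1)) - φ' (X i)) - μ' • (X (i + 1) - X i) := by
      simp only [hVdef, hFdef]; module
    rw [hVeq]
    calc ‖(φ' (X (i + 1)) - φ' (X i)) - μ' • (X (i + 1) - X i)‖
        ≤ ‖φ' (X (i + 1)) - φ' (X i)‖ + ‖μ' • (X (i + 1) - X i)‖ := norm_sub_le _ _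
      _ ≤ 2 * L * ‖X (i + 1) - X i‖ + μ' * ‖X (i + 1) - X i‖ := by
          rw [norm_smul, Real.norm_eq_abs, abs_of_nonneg hμ'0]
          gcongr
      _ ≤ 3 * L * δ := by rw [hdist i]; nlinarith [hδ0]
  -- per-step cocoercivity
  have hkey : ∀ i < n, (L - μ')⁻¹ * ‖V i‖ ^ 2 ≤ ⟪X (i + 1) - X i, V i⟫ := by
    intro i hi
    have hip : X (i + 1) ∈ Metric.ball x M := hXball (i + 1) hi
    have hiq : X i ∈ Metric.ball x M := hXball i (le_of_lt hi)
    have htV : ‖(L - μ')⁻¹ • V i‖ ≤ ρ := by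
      rw [norm_smul, Real.norm_eq_abs, abs_of_nonneg (by positivity)]
      have h1 := hVb i hi
      have h2 : δ < ρ * (L - μ') / (3 * L) := lt_of_lt_of_le hstep (min_le_right _ _)
      rw [inv_mul_le_iff₀ hℓ]
      have h2' : δ * (3 * L) < ρ * (L - μ') := by
        rw [lt_div_iff₀ (by positivity : (0:ℝ) < 3 * L)] at h2
        linarith
      linarith
    have hw : X (i + 1) - (L - μ')⁻¹ • V i ∈ Metric.ball x M := by
      rw [Metric.mem_ball, dist_eq_norm]
      have h1 : X (i + 1) - (L - μ')⁻¹ • V i - x = (X (i + 1) - x) - (L - μ')⁻¹ • V i := by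
        abel
      rw [h1]
      calc ‖(X (i + 1) - x) - (L - μ')⁻¹ • V i‖
          ≤ ‖X (i + 1) - x‖ + ‖(L - μ')⁻¹ • V i‖ := norm_sub_le _ _
        _ ≤ m + ρ := add_le_add (hXm (i + 1) hi) htV
        _ < M := by simp only [hρdef]; linarith
    have hw' : X i + (L - μ')⁻¹ • V i ∈ Metric.ball x M := by
      rw [Metric.mem_ball, dist_eq_norm]
      have h1 : X i + (L - μ')⁻¹ • V i - x = (X i - x) + (L - μ')⁻¹ • V i := by abel
      rw [h1]
      calc ‖(X i - x) + (L - μ')⁻¹ • V i‖ ≤ ‖X i - x‖ + ‖(L - μ')⁻¹ • V i‖ := norm_add_le _ _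
        _ ≤ m + ρ := add_le_add (hXm i hi.le) htV
        _ < M := by simp only [hρdef]; linarith
    have hVform : V i = (φ' (X (i + 1)) - μ' • X (i + 1)) - (φ' (X i) - μ' • X i) := by
      simp only [hVdef, hFdef]
    rw [hVform] at hw hw' ⊢
    exact aux_coco_pair φ φ' hφ' x M μ L μ' hμ'0 hμ'μ hμ'L hlb hub hip hiq hw hw'
  -- summation
  set v : H := (φ' y - μ' • y) - (φ' z - μ' • z) with hvdef
  have hvsum : ∑ i ∈ Finset.range n, V i = v := by
    have h := Finset.sum_range_sub F n
    have h2 : ∑ i ∈ Finset.range n, V i = F n - F 0 := h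
    rw [h2]
    have h3 : F n = φ' y - μ' • y := by rw [hFdef]; simp only; rw [hXn]
    have h4 : F 0 = φ' z - μ' • z := by rw [hFdef]; simp only; rw [hX0]
    rw [h3, h4]
  have hinner : ∀ i : ℕ, ⟪X (i + 1) - X i, V i⟫ = (1 / n) * ⟪y - z, V i⟫ := by
    intro i
    rw [hcons i, real_inner_smul_left]
  have hsum1 : ‖v‖ ≤ ∑ i ∈ Finset.range n, ‖V i‖ := by
    rw [← hvsum]; exact norm_sum_le _ _
  have hsum2 : (∑ i ∈ Finset.range n, ‖V i‖) ^ 2 ≤ n * ∑ i ∈ Finset.range n, ‖V i‖ ^ 2 := by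
    have := Finset.sum_mul_sq_le_sq_mul_sq (Finset.range n) (fun _ => (1 : ℝ))
      (fun i => ‖V i‖)
    simpa using this
  have hsum3 : ∑ i ∈ Finset.range n, ‖V i‖ ^ 2
      ≤ ∑ i ∈ Finset.range n, (L - μ') * ((1 / n) * ⟪y - z, V i⟫) := by
    apply Finset.sum_le_sum
    intro i hi
    rw [Finset.mem_range] at hi
    have h1 := hkey i hi
    rw [hinner i] at h1
    calc ‖V i‖ ^ 2 = (L - μ') * ((L - μ')⁻¹ * ‖V i‖ ^ 2) := by
          field_simp
      _ ≤ (L - μ') * ((1 / n) * ⟪y - z, V i⟫) := by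
          exact mul_le_mul_of_nonneg_left h1 hℓ.le
  have hsum4 : ∑ i ∈ Finset.range n, (L - μ') * ((1 / n) * ⟪y - z, V i⟫)
      = (L - μ') * (1 / n) * ⟪y - z, v⟫ := by
    rw [← hvsum, inner_sum, Finset.mul_sum]
    apply Finset.sum_congr rfl
    intro i _
    ring
  clear hφconv hbound hφ' hlb hub hkey hVb hXm hXball hcons hdist hX0 hXn hinner
  clear_value X F V v δ ε ρ m
  have hfinal : ‖v‖ ^ 2 ≤ (L - μ') * ⟪y - z, v⟫ := by
    have h1 : ‖v‖ ^ 2 ≤ (∑ i ∈ Finset.range n, ‖V i‖) ^ 2 :=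
      pow_le_pow_left₀ (norm_nonneg _) hsum1 2
    have h2 : (n : ℝ) * ∑ i ∈ Finset.range n, ‖V i‖ ^ 2
        ≤ (n : ℝ) * ((L - μ') * (1 / n) * ⟪y - z, v⟫) := by
      rw [← hsum4]
      exact mul_le_mul_of_nonneg_left hsum3 hn0.le
    have h3 : (n : ℝ) * ((L - μ') * (1 / n) * ⟪y - z, v⟫) = (L - μ') * ⟪y - z, v⟫ := by
      field_simp
    linarith [h1, hsum2, h2, h3]
  rw [one_div, inv_mul_le_iff₀ hℓ]
  linarith [hfinal]
end

section
/- Let H be a real Hilbert space, let ψ : H → (−∞, +∞] be proper lower semicontinuous convex, let φ : H → ℝ be convex Gâteaux differentiable, let x* be a minimizer of ψ + φ, let x₀ ∈ H, ε > 0, M₀ ≥ ‖x₀ − x*‖ + ε, and let L > 0 satisfy 0 ≤ ⟨y − z, ∇φ(y) − ∇φ(z)⟩ ≤ L‖y − z‖² for all y, z ∈ B_{M₀}(x*). Let γ ∈ (0, 2/L) and define x_{n+1} = prox_{γψ}(x_n − γ∇φ(x_n)) for n ∈ ℕ. Then: (a) x_n belongs to the closed ball of radius M₀ − ε centered at x*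 for every n ∈ ℕ and ‖x_{n+1} − x*‖ ≤ ‖x_n − x*‖; (b) the series Σ_n ‖∇φ(x_n) − ∇φ(x*)‖² converges; and (c) x_n − x_{n+1} → 0 strongly as n → ∞. -/
open scoped RealInnerProductSpace

section aux
variable {H : Type*} [NormedAddCommGroup H] [InnerProductSpace ℝ H]

lemma xi_hasDerivAt (φ : H → ℝ) (φ' : H → H)
    (hφ' : ∀ u d : H, HasLineDerivAt ℝ φ ⟪φ' u, d⟫ u d)
    (p d : H) (t : ℝ) :
    HasDerivAt (fun s : ℝ => φ (p + s • d)) ⟪φ' (p + t • d), d⟫ t := by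
  have h : HasDerivAt (fun s : ℝ => φ (p + t • d + s • d)) ⟪φ' (p + t • d), d⟫ 0 :=
    hφ' (p + t • d) d
  have h' : HasDerivAt (fun s : ℝ => φ (p + t • d + s • d)) ⟪φ' (p + t • d), d⟫ (t - t) := by
    simpa using h
  have h2 := h'.comp_sub_const t t
  have hf : (fun s : ℝ => φ (p + s • d)) = (fun x => φ (p + t • d + (x - t) • d)) := by
    funext s; congr 1; rw [sub_smul]; abel
  rw [hf]; exact h2

lemma xi_convex (φ : H → ℝ) (hφconv : ConvexOn ℝ Set.univ φ) (p d : H) :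
    ConvexOn ℝ Set.univ (fun s : ℝ => φ (p + s • d)) := by
  have h := hφconv.comp_affineMap (AffineMap.lineMap p (p + d))
  have : (fun s : ℝ => φ (p + s • d)) = φ ∘ (AffineMap.lineMap p (p + d)) := by
    funext s
    simp [AffineMap.lineMap_apply, add_comm]
  rw [this]
  simpa using h

lemma tangent (φ : H → ℝ) (hφconv : ConvexOn ℝ Set.univ φ) (φ' : H → H)
    (hφ' : ∀ u d : H, HasLineDerivAt ℝ φ ⟪φ' u, d⟫ u d) (p q : H) :
    φ p + ⟪φ' p, q - p⟫ ≤ φ q := by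
  have hc := xi_convex φ hφconv p (q - p)
  have hd : HasDerivAt (fun s : ℝ => φ (p + s • (q - p))) ⟪φ' p, q - p⟫ 0 := by
    have := xi_hasDerivAt φ φ' hφ' p (q - p) 0
    simpa using this
  have hs := hc.le_slope_of_hasDerivAt (Set.mem_univ 0) (Set.mem_univ 1) one_pos hd
  rw [slope_def_field] at hs
  simp only [zero_smul, add_zero, one_smul, add_sub_cancel] at hs
  norm_num at hs
  linarith



lemma descent (φ : H → ℝ) (φ' : H → H)
    (hφ' : ∀ u d : H, HasLineDerivAt ℝ φ ⟪φ' u, d⟫ u d)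
    (xs : H) (M₀ L : ℝ)
    (hbound : ∀ y ∈ Metric.ball xs M₀, ∀ z ∈ Metric.ball xs M₀,
      0 ≤ ⟪y - z, φ' y - φ' z⟫ ∧ ⟪y - z, φ' y - φ' z⟫ ≤ L * ‖y - z‖ ^ 2)
    (p q : H) (hp : p ∈ Metric.ball xs M₀) (hq : q ∈ Metric.ball xs M₀) :
    φ q ≤ φ p + ⟪φ' p, q - p⟫ + L / 2 * ‖q - p‖ ^ 2 := by
  set d := q - p with hd
  set η : ℝ → ℝ := fun t => φ (p + t • d) - t * ⟪φ' p, d⟫ - L / 2 * ‖d‖ ^ 2 * t ^ 2 with hη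
  have hseg : ∀ t : ℝ, 0 ≤ t → t ≤ 1 → p + t • d ∈ Metric.ball xs M₀ := by
    intro t ht0 ht1
    exact (convex_ball xs M₀).add_smul_sub_mem hp hq ⟨ht0, ht1⟩
  have hηderiv : ∀ t : ℝ, HasDerivAt η
      (⟪φ' (p + t • d), d⟫ - ⟪φ' p, d⟫ - L / 2 * ‖d‖ ^ 2 * (2 * t)) t := by
    intro t
    have h := ((xi_hasDerivAt φ φ' hφ' p d t).sub
      (hasDerivAt_mul_const ⟪φ' p, d⟫)).sub ((hasDerivAt_pow 2 t).const_mul (L / 2 * ‖d‖ ^ 2))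
    exact h.congr_deriv (by push_cast; ring_nf)
  have hanti : AntitoneOn η (Set.Icc 0 1) := by
    apply antitoneOn_of_deriv_nonpos (convex_Icc 0 1)
    · exact fun t _ => ((hηderiv t).continuousAt).continuousWithinAt
    · intro t ht
      exact ((hηderiv t).differentiableAt).differentiableWithinAt
    · intro t ht
      rw [interior_Icc] at ht
      rw [(hηderiv t).deriv]
      have hy := hseg t (le_of_lt ht.1) (le_of_lt ht.2)
      have hb := (hbound (p + t • d) hy p hp).2
      have : p + t • d - p = t • d := by abel
      rw [this] at hb
      rw [real_inner_smul_left] at hb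
      have hns : ‖t • d‖ ^ 2 = t ^ 2 * ‖d‖ ^ 2 := by
        rw [norm_smul]; rw [mul_pow]; rw [Real.norm_eq_abs, sq_abs]
      rw [hns] at hb
      -- hb : t * ⟪d, φ' (p+t•d) - φ' p⟫ ≤ L * (t^2 * ‖d‖^2)
      have h2 : ⟪d, φ' (p + t • d) - φ' p⟫ ≤ L * t * ‖d‖ ^ 2 := by
        have ht0 : 0 < t := ht.1
        nlinarith [hb]
      have h3 : ⟪φ' (p + t • d), d⟫ - ⟪φ' p, d⟫ = ⟪d, φ' (p + t • d) - φ' p⟫ := by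
        simp only [hd, inner_sub_left, inner_sub_right, real_inner_comm]
      rw [h3]
      nlinarith [h2]
  have h01 := hanti (Set.left_mem_Icc.2 zero_le_one) (Set.right_mem_Icc.2 zero_le_one) zero_le_one
  have hη0 : η 0 = φ p := by simp [hη]
  have hη1 : η 1 = φ q - ⟪φ' p, d⟫ - L / 2 * ‖d‖ ^ 2 := by
    simp [hη, hd]
  rw [hη0, hη1] at h01
  have : ‖q - p‖ ^ 2 = ‖d‖ ^ 2 := by rw [hd]
  linarith

lemma lip (φ : H → ℝ) (hφconv : ConvexOn ℝ Set.univ φ) (φ' : H → H)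
    (hφ' : ∀ u d : H, HasLineDerivAt ℝ φ ⟪φ' u, d⟫ u d)
    (xs : H) (M₀ L : ℝ) (hL : 0 < L)
    (hbound : ∀ y ∈ Metric.ball xs M₀, ∀ z ∈ Metric.ball xs M₀,
      0 ≤ ⟪y - z, φ' y - φ' z⟫ ∧ ⟪y - z, φ' y - φ' z⟫ ≤ L * ‖y - z‖ ^ 2)
    (y : H) (hy : ‖y - xs‖ < M₀) :
    ‖φ' y - φ' xs‖ ≤ L * ‖y - xs‖ := by
  by_cases hg : φ' y - φ' xs = 0
  · rw [hg, norm_zero]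
    exact mul_nonneg hL.le (norm_nonneg _)
  set a := ‖y - xs‖ with hadef
  set g := φ' y - φ' xs with hgdef
  have hG : 0 < ‖g‖ := norm_pos_iff.2 hg
  have ha : 0 < a := by
    have hne : y - xs ≠ 0 := fun h0 => hg (by rw [hgdef, sub_eq_zero.mp h0, sub_self])
    exact norm_pos_iff.2 hne
  have hyball : y ∈ Metric.ball xs M₀ := by rw [Metric.mem_ball, dist_eq_norm]; exact hy
  have hxsball : xs ∈ Metric.ball xs M₀ :=
    Metric.mem_ball_self (lt_of_le_of_lt (norm_nonneg _) hy)
  set c := a / ‖g‖ with hcdef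
  set u := xs + c • g with hu
  have hu_xs : u - xs = c • g := by rw [hu]; abel
  have hnu : ‖u - xs‖ = a := by
    rw [hu_xs, norm_smul, Real.norm_eq_abs, abs_of_pos (div_pos ha hG)]
    field_simp
  have huball : u ∈ Metric.ball xs M₀ := by
    rw [Metric.mem_ball, dist_eq_norm, hnu]; exact hy
  have T1 := tangent φ hφconv φ' hφ' y u
  have T2 := descent φ φ' hφ' xs M₀ L hbound xs u hxsball huball
  have T3 := descent φ φ' hφ' xs M₀ L hbound y xs hyball hxsball
  have e1 : ⟪φ' y, u - y⟫ = c * ⟪φ' y, g⟫ + ⟪φ' y, xs - y⟫ := by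
    have h : u - y = c • g + (xs - y) := by rw [hu]; abel
    rw [h, inner_add_right, real_inner_smul_right]
  have e2 : ⟪φ' xs, u - xs⟫ = c * ⟪φ' xs, g⟫ := by
    rw [hu_xs, real_inner_smul_right]
  have n2 : ‖u - xs‖ ^ 2 = a ^ 2 := by rw [hnu]
  have n3 : ‖xs - y‖ ^ 2 = a ^ 2 := by rw [norm_sub_rev]
  rw [e1] at T1
  rw [e2, n2] at T2
  rw [n3] at T3
  have key : c * ⟪φ' y, g⟫ - c * ⟪φ' xs, g⟫ ≤ L * a ^ 2 := by linarith
  have e3 : c * ⟪φ' y, g⟫ - c * ⟪φ' xs, g⟫ = a * ‖g‖ := by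
    rw [← mul_sub]
    have : ⟪φ' y, g⟫ - ⟪φ' xs, g⟫ = ‖g‖ ^ 2 := by
      rw [← inner_sub_left, ← hgdef, real_inner_self_eq_norm_sq]
    rw [this, hcdef]
    field_simp
  rw [e3] at key
  have : a * ‖g‖ ≤ a * (L * a) := by nlinarith
  exact le_of_mul_le_mul_left this ha

lemma coco (φ : H → ℝ) (hφconv : ConvexOn ℝ Set.univ φ) (φ' : H → H)
    (hφ' : ∀ u d : H, HasLineDerivAt ℝ φ ⟪φ' u, d⟫ u d)
    (xs : H) (M₀ L : ℝ) (hL : 0 < L)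
    (hbound : ∀ y ∈ Metric.ball xs M₀, ∀ z ∈ Metric.ball xs M₀,
      0 ≤ ⟪y - z, φ' y - φ' z⟫ ∧ ⟪y - z, φ' y - φ' z⟫ ≤ L * ‖y - z‖ ^ 2)
    (y : H) (hy : ‖y - xs‖ < M₀) :
    ‖φ' y - φ' xs‖ ^ 2 ≤ L * ⟪y - xs, φ' y - φ' xs⟫ := by
  by_cases hg : φ' y - φ' xs = 0
  · rw [hg, norm_zero, inner_zero_right]
    norm_num
  set a := ‖y - xs‖ with hadef
  set g := φ' y - φ' xs with hgdef
  have hG : 0 < ‖g‖ := norm_pos_iff.2 hg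
  have hGa : ‖g‖ ≤ L * a := lip φ hφconv φ' hφ' xs M₀ L hL hbound y hy
  have hyball : y ∈ Metric.ball xs M₀ := by rw [Metric.mem_ball, dist_eq_norm]; exact hy
  have hxsball : xs ∈ Metric.ball xs M₀ :=
    Metric.mem_ball_self (lt_of_le_of_lt (norm_nonneg _) hy)
  have ha : 0 ≤ a := norm_nonneg _
  -- the point w = xs + (1/L) • g
  set w := xs + (1 / L) • g with hw
  have hw_xs : w - xs = (1 / L) • g := by rw [hw]; abel
  have hnw : ‖w - xs‖ = ‖g‖ / L := by
    rw [hw_xs, norm_smul, Real.norm_eq_abs, abs_of_pos (by positivity : (0:ℝ) < 1 / L)]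
    ring
  have hwball : w ∈ Metric.ball xs M₀ := by
    rw [Metric.mem_ball, dist_eq_norm, hnw]
    have : ‖g‖ / L ≤ a := by
      rw [div_le_iff₀ hL]; linarith
    linarith
  -- abbreviations for inner products
  set A := (⟪φ' y, g⟫ : ℝ) with hA
  set B := (⟪φ' xs, g⟫ : ℝ) with hB
  set C := (⟪φ' y, y - xs⟫ : ℝ) with hC
  set D := (⟪φ' xs, y - xs⟫ : ℝ) with hD
  have hAB : A - B = ‖g‖ ^ 2 := by
    rw [hA, hB, ← inner_sub_left, ← hgdef, real_inner_self_eq_norm_sq]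
  have hCD : (⟪y - xs, g⟫ : ℝ) = C - D := by
    rw [real_inner_comm, hgdef, inner_sub_left, ← hC, ← hD]
  -- (*) : φ y - φ xs - C ≤ - ‖g‖^2/(2L)
  have T1 := tangent φ hφconv φ' hφ' y w
  have T2 := descent φ φ' hφ' xs M₀ L hbound xs w hxsball hwball
  have e1 : ⟪φ' y, w - y⟫ = (1 / L) * A - C := by
    have h : w - y = (1 / L) • g - (y - xs) := by rw [hw]; abel
    rw [h, inner_sub_right, real_inner_smul_right, ← hA, ← hC]
  have e2 : ⟪φ' xs, w - xs⟫ = (1 / L) * B := by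
    rw [hw_xs, real_inner_smul_right, ← hB]
  have n2 : ‖w - xs‖ ^ 2 = ‖g‖ ^ 2 / L ^ 2 := by rw [hnw]; field_simp
  rw [e1] at T1
  rw [e2, n2] at T2
  have star : φ y - φ xs - C ≤ - (‖g‖ ^ 2 / (2 * L)) := by
    have hL2 : L / 2 * (‖g‖ ^ 2 / L ^ 2) = ‖g‖ ^ 2 / (2 * L) := by field_simp
    rw [hL2] at T2
    have h1L : (1 / L) * A - (1 / L) * B = ‖g‖ ^ 2 / L := by
      rw [← mul_sub, hAB]; field_simp
    have hsum : ‖g‖ ^ 2 / L = 2 * (‖g‖ ^ 2 / (2 * L)) := by field_simp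
    linarith
  have star2 : 0 ≤ φ y - φ xs - D := by
    have := tangent φ hφconv φ' hφ' xs y
    rw [← hD] at this
    linarith
  have stage1 : ‖g‖ ^ 2 / (2 * L) ≤ C - D := by linarith
  -- the point u = y - (1/L) • g
  set u := y - (1 / L) • g with hudef
  have hu_xs : u - xs = (y - xs) - (1 / L) • g := by rw [hudef]; abel
  have hnu2 : ‖u - xs‖ ^ 2 = a ^ 2 - (2 / L) * (C - D) + ‖g‖ ^ 2 / L ^ 2 := by
    rw [hu_xs, norm_sub_sq_real, real_inner_smul_right, hCD, norm_smul,
      Real.norm_eq_abs, abs_of_pos (by positivity : (0:ℝ) < 1 / L)]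
    rw [← hadef, mul_pow]
    ring
  have hub : ‖u - xs‖ ^ 2 ≤ a ^ 2 := by
    rw [hnu2]
    have h1 : (2 / L) * (C - D) ≥ (2 / L) * (‖g‖ ^ 2 / (2 * L)) :=
      mul_le_mul_of_nonneg_left stage1 (by positivity)
    have h2 : (2 / L) * (‖g‖ ^ 2 / (2 * L)) = ‖g‖ ^ 2 / L ^ 2 := by field_simp
    linarith
  have huball : u ∈ Metric.ball xs M₀ := by
    rw [Metric.mem_ball, dist_eq_norm]
    have h0 : ‖u - xs‖ ≤ a := by
      have hs := Real.sqrt_le_sqrt hub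
      rwa [Real.sqrt_sq (norm_nonneg _), Real.sqrt_sq ha] at hs
    linarith
  have T3 := descent φ φ' hφ' xs M₀ L hbound y u hyball huball
  have T4 := tangent φ hφconv φ' hφ' xs u
  have e3 : ⟪φ' y, u - y⟫ = -((1 / L) * A) := by
    have h : u - y = -((1 / L) • g) := by rw [hudef]; abel
    rw [h, inner_neg_right, real_inner_smul_right, ← hA]
  have n3 : ‖u - y‖ ^ 2 = ‖g‖ ^ 2 / L ^ 2 := by
    have h : u - y = -((1 / L) • g) := by rw [hudef]; abel
    rw [h, norm_neg, norm_smul, Real.norm_eq_abs, abs_of_pos (by positivity : (0:ℝ) < 1 / L),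
      mul_pow]
    field_simp
  have e4 : ⟪φ' xs, u - xs⟫ = D - (1 / L) * B := by
    rw [hu_xs, inner_sub_right, real_inner_smul_right, ← hB, ← hD]
  rw [e3, n3] at T3
  rw [e4] at T4
  have dagger : ‖g‖ ^ 2 / (2 * L) ≤ φ y - φ xs - D := by
    have hL2 : L / 2 * (‖g‖ ^ 2 / L ^ 2) = ‖g‖ ^ 2 / (2 * L) := by field_simp
    rw [hL2] at T3
    have h1L : (1 / L) * A - (1 / L) * B = ‖g‖ ^ 2 / L := by
      rw [← mul_sub, hAB]; field_simp
    have hsum : ‖g‖ ^ 2 / L = 2 * (‖g‖ ^ 2 / (2 * L)) := by field_simp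
    linarith
  have final : ‖g‖ ^ 2 / L ≤ C - D := by
    have hsum : ‖g‖ ^ 2 / (2 * L) + ‖g‖ ^ 2 / (2 * L) = ‖g‖ ^ 2 / L := by field_simp; ring
    linarith
  rw [hCD]
  rw [div_le_iff₀ hL] at final
  linarith [final]

end aux

set_option maxHeartbeats 1000000 in
/-- **Fejér-type estimates for the forward–backward iterates.**
Let `H` be a real Hilbert space, `ψ` proper lsc convex, `φ : H → ℝ` convex Gâteaux
differentiable with gradient `φ'`, let `x*` minimize `ψ + φ`, `x₀ ∈ H`, `ε > 0`,
`M₀ ≥ ‖x₀ − x*‖ + ε`, and let `L > 0` satisfy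
`0 ≤ ⟪y − z, ∇φ(y) − ∇φ(z)⟫ ≤ L‖y − z‖²` for all `y, z ∈ B_{M₀}(x*)`.
For `γ ∈ (0, 2/L)` and `x_{n+1} = prox_{γψ}(x_n − γ∇φ(x_n))`, `x 0 = x₀`:
(a) `x_n ∈ closedBall x* (M₀ − ε)` for all `n`, and `‖x_{n+1} − x*‖ ≤ ‖x_n − x*‖`;
(b) `Σ_n ‖∇φ(x_n) − ∇φ(x*)‖²` converges;
(c) `x_n − x_{n+1} → 0` strongly. -/
theorem stmt9 {H : Type*} [NormedAddCommGroup H] [InnerProductSpace ℝ H] [CompleteSpace H]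
    (ψ : H → EReal)
    (hψproper : (∀ u : H, ψ u ≠ ⊥) ∧ (∃ u : H, ψ u ≠ ⊤))
    (hψlsc : LowerSemicontinuous ψ)
    (hψconv : ∀ u v : H, ∀ a b : ℝ, 0 ≤ a → 0 ≤ b → a + b = 1 →
      ψ (a • u + b • v) ≤ (a : EReal) * ψ u + (b : EReal) * ψ v)
    (φ : H → ℝ) (hφconv : ConvexOn ℝ Set.univ φ)
    (φ' : H → H) (hφ' : ∀ u d : H, HasLineDerivAt ℝ φ ⟪φ' u, d⟫ u d)
    (xs : H) (hxs : ∀ y : H, ψ xs + (φ xs : EReal) ≤ ψ y + (φ y : EReal))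
    (x₀ : H) (ε : ℝ) (hε : 0 < ε)
    (M₀ : ℝ) (hM₀ : ‖x₀ - xs‖ + ε ≤ M₀)
    (L : ℝ) (hL : 0 < L)
    (hbound : ∀ y ∈ Metric.ball xs M₀, ∀ z ∈ Metric.ball xs M₀,
      0 ≤ ⟪y - z, φ' y - φ' z⟫ ∧ ⟪y - z, φ' y - φ' z⟫ ≤ L * ‖y - z‖ ^ 2)
    (γ : ℝ) (hγ0 : 0 < γ) (hγ2 : γ < 2 / L)
    (prox : ℝ → H → H)
    (hprox : ∀ γ' : ℝ, 0 < γ' → ∀ u y : H,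
      (γ' : EReal) * ψ (prox γ' u) + ((‖u - prox γ' u‖ ^ 2 / 2 : ℝ) : EReal) ≤
        (γ' : EReal) * ψ y + ((‖u - y‖ ^ 2 / 2 : ℝ) : EReal))
    (x : ℕ → H) (hx0 : x 0 = x₀)
    (hxit : ∀ n : ℕ, x (n + 1) = prox γ (x n - γ • φ' (x n))) :
    ((∀ n : ℕ, x n ∈ Metric.closedBall xs (M₀ - ε)) ∧
      ∀ n : ℕ, ‖x (n + 1) - xs‖ ≤ ‖x n - xs‖) ∧
    Summable (fun n : ℕ => ‖φ' (x n) - φ' xs‖ ^ 2) ∧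
    Filter.Tendsto (fun n : ℕ => x n - x (n + 1)) Filter.atTop (nhds 0) := by
  obtain ⟨hbot, u₀, hu₀⟩ := hψproper
  have hcoe : ∀ z : H, ψ z ≠ ⊤ → ψ z = (((ψ z).toReal : ℝ) : EReal) :=
    fun z hz => (EReal.coe_toReal hz (hbot z)).symm
  have hψxs_top : ψ xs ≠ ⊤ := by
    intro h
    have h1 := hxs u₀
    rw [h, EReal.top_add_coe, hcoe u₀ hu₀, ← EReal.coe_add] at h1
    exact EReal.coe_ne_top _ (top_le_iff.mp h1)
  have hproxtop : ∀ u : H, ψ (prox γ u) ≠ ⊤ := by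
    intro u h
    have h1 := hprox γ hγ0 u xs
    rw [h, EReal.mul_top_of_pos (by exact_mod_cast hγ0), EReal.top_add_coe,
      hcoe xs hψxs_top, ← EReal.coe_mul, ← EReal.coe_add] at h1
    exact EReal.coe_ne_top _ (top_le_iff.mp h1)
  have hproxR : ∀ u yy : H, ψ yy ≠ ⊤ →
      γ * (ψ (prox γ u)).toReal + ‖u - prox γ u‖ ^ 2 / 2 ≤
        γ * (ψ yy).toReal + ‖u - yy‖ ^ 2 / 2 := by
    intro u yy hyy
    have h := hprox γ hγ0 u yy
    rw [hcoe _ (hproxtop u), hcoe yy hyy, ← EReal.coe_mul, ← EReal.coe_mul,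
      ← EReal.coe_add, ← EReal.coe_add, EReal.coe_le_coe_iff] at h
    exact h
  have hoptR : ∀ yy : H, ψ yy ≠ ⊤ → (ψ xs).toReal + φ xs ≤ (ψ yy).toReal + φ yy := by
    intro yy hyy
    have h := hxs yy
    rw [hcoe xs hψxs_top, hcoe yy hyy, ← EReal.coe_add, ← EReal.coe_add,
      EReal.coe_le_coe_iff] at h
    exact h
  -- optimality transferred to a subgradient-type inequality for ψ at xs
  have hsub : ∀ yy : H, ψ yy ≠ ⊤ →
      (ψ xs).toReal ≤ (ψ yy).toReal + ⟪φ' xs, yy - xs⟫ := by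
    intro yy hyy
    set d := yy - xs with hd
    have hstep : ∀ t : ℝ, 0 < t → t < 1 →
        (ψ xs).toReal - (ψ yy).toReal ≤ (φ (xs + t • d) - φ xs) / t := by
      intro t ht0 ht1
      have hcv := hψconv xs yy (1 - t) t (by linarith) ht0.le (by ring)
      have hzeq : (1 - t) • xs + t • yy = xs + t • d := by
        rw [hd, smul_sub, sub_smul, one_smul]; abel
      rw [hzeq] at hcv
      have hztop : ψ (xs + t • d) ≠ ⊤ := by
        intro htop
        rw [htop, hcoe xs hψxs_top, hcoe yy hyy, ← EReal.coe_mul, ← EReal.coe_mul,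
          ← EReal.coe_add] at hcv
        exact EReal.coe_ne_top _ (top_le_iff.mp hcv)
      have hcvR : (ψ (xs + t • d)).toReal ≤
          (1 - t) * (ψ xs).toReal + t * (ψ yy).toReal := by
        rw [hcoe _ hztop, hcoe xs hψxs_top, hcoe yy hyy, ← EReal.coe_mul, ← EReal.coe_mul,
          ← EReal.coe_add, EReal.coe_le_coe_iff] at hcv
        exact hcv
      have hopt := hoptR (xs + t • d) hztop
      have key : t * ((ψ xs).toReal - (ψ yy).toReal) ≤ φ (xs + t • d) - φ xs := by
        nlinarith [hcvR, hopt]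
      rw [le_div_iff₀ ht0]
      linarith [key]
    have hderiv : HasDerivAt (fun s : ℝ => φ (xs + s • d)) ⟪φ' xs, d⟫ 0 := by
      simpa using xi_hasDerivAt φ φ' hφ' xs d 0
    have hslope := hasDerivAt_iff_tendsto_slope.mp hderiv
    have hslope' : Filter.Tendsto (slope (fun s : ℝ => φ (xs + s • d)) 0)
        (nhdsWithin 0 (Set.Ioi 0)) (nhds ⟪φ' xs, d⟫) :=
      hslope.mono_left (nhdsWithin_mono 0 (fun s hs => ne_of_gt hs))
    have hub : (ψ xs).toReal - (ψ yy).toReal ≤ ⟪φ' xs, d⟫ := by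
      refine ge_of_tendsto hslope' ?_
      filter_upwards [Ioo_mem_nhdsGT_of_mem (Set.left_mem_Ico.mpr one_pos)] with t ht
      rw [slope_def_field]
      simp only [zero_smul, add_zero, sub_zero]
      exact hstep t ht.1 ht.2
    linarith
  -- subgradient inequality at prox points
  have subgrad : ∀ u yy : H, ψ yy ≠ ⊤ →
      γ * (ψ (prox γ u)).toReal + ⟪u - prox γ u, yy - prox γ u⟫ ≤ γ * (ψ yy).toReal := by
    intro u yy hyy
    set p := prox γ u with hp
    have hptop : ψ p ≠ ⊤ := hproxtop u
    have hstep : ∀ t : ℝ, 0 < t → t < 1 →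
        γ * (ψ p).toReal + ⟪u - p, yy - p⟫ - t * (‖yy - p‖ ^ 2 / 2) ≤
          γ * (ψ yy).toReal := by
      intro t ht0 ht1
      have hcv := hψconv p yy (1 - t) t (by linarith) ht0.le (by ring)
      have hzeq : (1 - t) • p + t • yy = p + t • (yy - p) := by
        rw [smul_sub, sub_smul, one_smul]; abel
      rw [hzeq] at hcv
      have hztop : ψ (p + t • (yy - p)) ≠ ⊤ := by
        intro htop
        rw [htop, hcoe p hptop, hcoe yy hyy, ← EReal.coe_mul, ← EReal.coe_mul,
          ← EReal.coe_add] at hcv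
        exact EReal.coe_ne_top _ (top_le_iff.mp hcv)
      have hcvR : (ψ (p + t • (yy - p))).toReal ≤
          (1 - t) * (ψ p).toReal + t * (ψ yy).toReal := by
        rw [hcoe _ hztop, hcoe p hptop, hcoe yy hyy, ← EReal.coe_mul, ← EReal.coe_mul,
          ← EReal.coe_add, EReal.coe_le_coe_iff] at hcv
        exact hcv
      have hpr := hproxR u (p + t • (yy - p)) hztop
      have hexp : ‖u - (p + t • (yy - p))‖ ^ 2 =
          ‖u - p‖ ^ 2 - 2 * (t * ⟪u - p, yy - p⟫) + t ^ 2 * ‖yy - p‖ ^ 2 := by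
        have h : u - (p + t • (yy - p)) = (u - p) - t • (yy - p) := by abel
        rw [h, norm_sub_sq_real, real_inner_smul_right, norm_smul, Real.norm_eq_abs,
          abs_of_pos ht0, mul_pow]
      rw [hexp] at hpr
      have h2 : γ * (ψ (p + t • (yy - p))).toReal ≤
          γ * ((1 - t) * (ψ p).toReal + t * (ψ yy).toReal) :=
        mul_le_mul_of_nonneg_left hcvR hγ0.le
      have key : t * (γ * (ψ p).toReal + ⟪u - p, yy - p⟫ - t * (‖yy - p‖ ^ 2 / 2)) ≤
          t * (γ * (ψ yy).toReal) := by nlinarith [hpr, h2]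
      have key2 := le_of_mul_le_mul_left key ht0
      linarith [key2]
    have htend : Filter.Tendsto
        (fun t : ℝ => γ * (ψ p).toReal + ⟪u - p, yy - p⟫ - t * (‖yy - p‖ ^ 2 / 2))
        (nhdsWithin 0 (Set.Ioi 0)) (nhds (γ * (ψ p).toReal + ⟪u - p, yy - p⟫)) := by
      have hcont : Filter.Tendsto
          (fun t : ℝ => γ * (ψ p).toReal + ⟪u - p, yy - p⟫ - t * (‖yy - p‖ ^ 2 / 2))
          (nhds 0)
          (nhds (γ * (ψ p).toReal + ⟪u - p, yy - p⟫ - 0 * (‖yy - p‖ ^ 2 / 2))) :=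
        (continuous_const.sub (continuous_id.mul continuous_const)).tendsto 0
      simpa using hcont.mono_left nhdsWithin_le_nhds
    refine le_of_tendsto htend ?_
    filter_upwards [Ioo_mem_nhdsGT_of_mem (Set.left_mem_Ico.mpr one_pos)] with t ht
    exact hstep t ht.1 ht.2
  -- xs is a fixed point of the forward-backward map
  have hfix : prox γ (xs - γ • φ' xs) = xs := by
    set v := xs - γ • φ' xs with hv
    set P := prox γ v with hP
    have h1 := subgrad v xs hψxs_top
    have h2 := hsub P (hproxtop v)
    have h2' : γ * (ψ xs).toReal ≤ γ * (ψ P).toReal + γ * ⟪φ' xs, P - xs⟫ := by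
      nlinarith [mul_le_mul_of_nonneg_left h2 hγ0.le]
    have hexp : ⟪v - P, xs - P⟫ = ‖xs - P‖ ^ 2 - γ * ⟪φ' xs, xs - P⟫ := by
      have h : v - P = (xs - P) - γ • φ' xs := by rw [hv]; abel
      rw [h, inner_sub_left, real_inner_smul_left, real_inner_self_eq_norm_sq]
    have hiz : ⟪φ' xs, P - xs⟫ = -⟪φ' xs, xs - P⟫ := by
      rw [← inner_neg_right, neg_sub]
    rw [hexp] at h1
    rw [hiz] at h2'
    have hzero : ‖xs - P‖ ^ 2 ≤ 0 := by linarith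
    have h0 : ‖xs - P‖ = 0 := by nlinarith [norm_nonneg (xs - P)]
    have := sub_eq_zero.mp (norm_eq_zero.mp h0)
    rw [hP] at this
    exact this.symm
  -- firm nonexpansiveness of the prox map
  have firm : ∀ u v : H,
      ‖prox γ u - prox γ v‖ ^ 2 ≤ ⟪u - v, prox γ u - prox γ v⟫ := by
    intro u v
    set p := prox γ u with hp
    set q := prox γ v with hq
    have h1 := subgrad u q (hproxtop v)
    have h2 := subgrad v p (hproxtop u)
    rw [← hp] at h1
    rw [← hq] at h2
    have e : ⟪u - v, p - q⟫ - ‖p - q‖ ^ 2 = ⟪u - p, p - q⟫ - ⟪v - q, p - q⟫ := by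
      rw [← real_inner_self_eq_norm_sq]
      simp only [inner_sub_left, inner_sub_right]
      ring
    have h3 : ⟪u - p, q - p⟫ = -⟪u - p, p - q⟫ := by rw [← inner_neg_right, neg_sub]
    have h4 : ⟪v - q, p - q⟫ = ⟪v - q, p - q⟫ := rfl
    rw [h3] at h1
    linarith
  -- the master inequality
  have hγL : 0 < 2 / L - γ := by linarith
  have hcpos : 0 < γ * (2 / L - γ) := mul_pos hγ0 hγL
  have master : ∀ n : ℕ, ‖x n - xs‖ ≤ M₀ - ε →
      ‖x (n + 1) - xs‖ ^ 2 + ‖(x n - x (n + 1)) - γ • (φ' (x n) - φ' xs)‖ ^ 2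
        + (γ * (2 / L - γ)) * ‖φ' (x n) - φ' xs‖ ^ 2 ≤ ‖x n - xs‖ ^ 2 := by
    intro n hn
    have hfm := firm (x n - γ • φ' (x n)) (xs - γ • φ' xs)
    rw [hfix, ← hxit n] at hfm
    have huv : (x n - γ • φ' (x n)) - (xs - γ • φ' xs) =
        (x n - xs) - γ • (φ' (x n) - φ' xs) := by
      rw [smul_sub]; abel
    rw [huv] at hfm
    set w := (x n - xs) - γ • (φ' (x n) - φ' xs) with hwdef
    set e := x (n + 1) - xs with hedef
    have hco := coco φ hφconv φ' hφ' xs M₀ L hL hbound (x n)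
      (by linarith : ‖x n - xs‖ < M₀)
    have hcoL : ‖φ' (x n) - φ' xs‖ ^ 2 / L ≤ ⟪x n - xs, φ' (x n) - φ' xs⟫ := by
      rw [mul_comm] at hco
      exact (div_le_iff₀ hL).mpr hco
    have hnw : ‖w‖ ^ 2 = ‖x n - xs‖ ^ 2 - 2 * (γ * ⟪x n - xs, φ' (x n) - φ' xs⟫)
        + γ ^ 2 * ‖φ' (x n) - φ' xs‖ ^ 2 := by
      rw [hwdef, norm_sub_sq_real, real_inner_smul_right, norm_smul, Real.norm_eq_abs,
        abs_of_pos hγ0, mul_pow]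
    have hwe : w - e = (x n - x (n + 1)) - γ • (φ' (x n) - φ' xs) := by
      rw [hwdef, hedef]; abel
    have hnwe : ‖w - e‖ ^ 2 = ‖w‖ ^ 2 - 2 * ⟪w, e⟫ + ‖e‖ ^ 2 := norm_sub_sq_real w e
    rw [← hwe]
    have h2γ : 2 * γ * (‖φ' (x n) - φ' xs‖ ^ 2 / L) ≤
        2 * γ * ⟪x n - xs, φ' (x n) - φ' xs⟫ :=
      mul_le_mul_of_nonneg_left hcoL (by positivity)
    have hcc : (γ * (2 / L - γ)) * ‖φ' (x n) - φ' xs‖ ^ 2 =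
        2 * γ * (‖φ' (x n) - φ' xs‖ ^ 2 / L) - γ ^ 2 * ‖φ' (x n) - φ' xs‖ ^ 2 := by
      field_simp
    linarith [hfm, hnw, hnwe, h2γ, hcc]
  -- part (a)
  have hball : ∀ n : ℕ, ‖x n - xs‖ ≤ M₀ - ε := by
    intro n
    induction n with
    | zero => rw [hx0]; linarith
    | succ n ih =>
      have h := master n ih
      have h2 : ‖x (n + 1) - xs‖ ^ 2 ≤ ‖x n - xs‖ ^ 2 := by
        nlinarith [sq_nonneg ‖(x n - x (n + 1)) - γ • (φ' (x n) - φ' xs)‖,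
          mul_nonneg hcpos.le (sq_nonneg ‖φ' (x n) - φ' xs‖)]
      have h3 : ‖x (n + 1) - xs‖ ≤ ‖x n - xs‖ := by
        have hs := Real.sqrt_le_sqrt h2
        rwa [Real.sqrt_sq (norm_nonneg _), Real.sqrt_sq (norm_nonneg _)] at hs
      linarith
  have hdec : ∀ n : ℕ, ‖x (n + 1) - xs‖ ≤ ‖x n - xs‖ := by
    intro n
    have h := master n (hball n)
    have h2 : ‖x (n + 1) - xs‖ ^ 2 ≤ ‖x n - xs‖ ^ 2 := by
      nlinarith [sq_nonneg ‖(x n - x (n + 1)) - γ • (φ' (x n) - φ' xs)‖,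
        mul_nonneg hcpos.le (sq_nonneg ‖φ' (x n) - φ' xs‖)]
    have hs := Real.sqrt_le_sqrt h2
    rwa [Real.sqrt_sq (norm_nonneg _), Real.sqrt_sq (norm_nonneg _)] at hs
  -- part (b)
  have hsumb : ∀ n : ℕ, (γ * (2 / L - γ)) * ‖φ' (x n) - φ' xs‖ ^ 2 ≤
      ‖x n - xs‖ ^ 2 - ‖x (n + 1) - xs‖ ^ 2 := by
    intro n
    have h := master n (hball n)
    nlinarith [sq_nonneg ‖(x n - x (n + 1)) - γ • (φ' (x n) - φ' xs)‖]
  have htel : ∀ n : ℕ, (Finset.range n).sum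
      (fun i => ‖x i - xs‖ ^ 2 - ‖x (i + 1) - xs‖ ^ 2) = ‖x 0 - xs‖ ^ 2 - ‖x n - xs‖ ^ 2 :=
    fun n => Finset.sum_range_sub' (fun i => ‖x i - xs‖ ^ 2) n
  have hS1 : Summable (fun n : ℕ => (γ * (2 / L - γ)) * ‖φ' (x n) - φ' xs‖ ^ 2) := by
    apply summable_of_sum_range_le (c := ‖x 0 - xs‖ ^ 2)
    · intro n
      exact mul_nonneg hcpos.le (sq_nonneg _)
    · intro n
      calc (Finset.range n).sum (fun i => (γ * (2 / L - γ)) * ‖φ' (x i) - φ' xs‖ ^ 2)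
          ≤ (Finset.range n).sum (fun i => ‖x i - xs‖ ^ 2 - ‖x (i + 1) - xs‖ ^ 2) :=
            Finset.sum_le_sum (fun i _ => hsumb i)
        _ = ‖x 0 - xs‖ ^ 2 - ‖x n - xs‖ ^ 2 := htel n
        _ ≤ ‖x 0 - xs‖ ^ 2 := by nlinarith [sq_nonneg ‖x n - xs‖]
  have hSb : Summable (fun n : ℕ => ‖φ' (x n) - φ' xs‖ ^ 2) := by
    have h := hS1.mul_left (1 / (γ * (2 / L - γ)))
    have heq : (fun n : ℕ => (1 / (γ * (2 / L - γ))) *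
        ((γ * (2 / L - γ)) * ‖φ' (x n) - φ' xs‖ ^ 2)) =
        fun n : ℕ => ‖φ' (x n) - φ' xs‖ ^ 2 := by
      funext n
      rw [← mul_assoc, one_div, inv_mul_cancel₀ hcpos.ne', one_mul]
    rwa [heq] at h
  -- part (c)
  have hdecsq : ∀ n : ℕ, ‖x (n + 1) - xs‖ ^ 2 ≤ ‖x n - xs‖ ^ 2 := by
    intro n
    have h := master n (hball n)
    nlinarith [sq_nonneg ‖(x n - x (n + 1)) - γ • (φ' (x n) - φ' xs)‖,
      mul_nonneg hcpos.le (sq_nonneg ‖φ' (x n) - φ' xs‖)]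
  have hdiffS : Summable (fun n : ℕ => ‖x n - xs‖ ^ 2 - ‖x (n + 1) - xs‖ ^ 2) := by
    apply summable_of_sum_range_le (c := ‖x 0 - xs‖ ^ 2)
    · intro n
      linarith [hdecsq n]
    · intro n
      rw [htel n]
      nlinarith [sq_nonneg ‖x n - xs‖]
  have hdiff0 := hdiffS.tendsto_atTop_zero
  have hTsq : ∀ n : ℕ, ‖(x n - x (n + 1)) - γ • (φ' (x n) - φ' xs)‖ ^ 2 ≤
      ‖x n - xs‖ ^ 2 - ‖x (n + 1) - xs‖ ^ 2 := by
    intro n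
    have h := master n (hball n)
    nlinarith [sq_nonneg ‖x (n + 1) - xs‖,
      mul_nonneg hcpos.le (sq_nonneg ‖φ' (x n) - φ' xs‖)]
  have hT2 : Filter.Tendsto
      (fun n : ℕ => ‖(x n - x (n + 1)) - γ • (φ' (x n) - φ' xs)‖ ^ 2)
      Filter.atTop (nhds 0) :=
    squeeze_zero (fun n => sq_nonneg _) hTsq hdiff0
  have hT : Filter.Tendsto (fun n : ℕ => ‖(x n - x (n + 1)) - γ • (φ' (x n) - φ' xs)‖)
      Filter.atTop (nhds 0) := by
    have h := (Real.continuous_sqrt.tendsto 0).comp hT2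
    have heq : (fun n : ℕ =>
        Real.sqrt (‖(x n - x (n + 1)) - γ • (φ' (x n) - φ' xs)‖ ^ 2)) =
        fun n : ℕ => ‖(x n - x (n + 1)) - γ • (φ' (x n) - φ' xs)‖ := by
      funext n
      exact Real.sqrt_sq (norm_nonneg _)
    rw [Function.comp_def, heq] at h
    simpa using h
  have hG2 := hSb.tendsto_atTop_zero
  have hG : Filter.Tendsto (fun n : ℕ => ‖φ' (x n) - φ' xs‖) Filter.atTop (nhds 0) := by
    have h := (Real.continuous_sqrt.tendsto 0).comp hG2
    have heq : (fun n : ℕ => Real.sqrt (‖φ' (x n) - φ' xs‖ ^ 2)) =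
        fun n : ℕ => ‖φ' (x n) - φ' xs‖ := by
      funext n
      exact Real.sqrt_sq (norm_nonneg _)
    rw [Function.comp_def, heq] at h
    simpa using h
  have hfinal : Filter.Tendsto (fun n : ℕ => ‖x n - x (n + 1)‖) Filter.atTop (nhds 0) := by
    apply squeeze_zero (g := fun n : ℕ =>
        ‖(x n - x (n + 1)) - γ • (φ' (x n) - φ' xs)‖ + γ * ‖φ' (x n) - φ' xs‖)
      (fun n => norm_nonneg _)
    · intro n
      have hsplit : x n - x (n + 1) =
          ((x n - x (n + 1)) - γ • (φ' (x n) - φ' xs)) + γ • (φ' (x n) - φ' xs) := by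
        abel
      calc ‖x n - x (n + 1)‖
          = ‖((x n - x (n + 1)) - γ • (φ' (x n) - φ' xs)) + γ • (φ' (x n) - φ' xs)‖ := by
            rw [← hsplit]
        _ ≤ ‖(x n - x (n + 1)) - γ • (φ' (x n) - φ' xs)‖ + ‖γ • (φ' (x n) - φ' xs)‖ :=
            norm_add_le _ _
        _ = ‖(x n - x (n + 1)) - γ • (φ' (x n) - φ' xs)‖ + γ * ‖φ' (x n) - φ' xs‖ := by
            rw [norm_smul, Real.norm_eq_abs, abs_of_pos hγ0]
    · have h := hT.add (hG.const_mul γ)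
      simpa [mul_comm] using h
  refine ⟨⟨fun n => ?_, hdec⟩, hSb, ?_⟩
  · rw [Metric.mem_closedBall, dist_eq_norm]
    exact hball n
  · exact tendsto_zero_iff_norm_tendsto_zero.mpr hfinal
end

section
/- Let H be a real Hilbert space, let D ⊆ H be a nonempty closed convex bounded set, and let T : D → H be nonexpansive on D, i.e. ‖T y − T z‖ ≤ ‖y − z‖ for all y, z ∈ D. Let (x_n) be a sequence in D such that x_n converges weakly to some x and x_n − T x_n → 0 strongly. Then x ∈ D and T x = x. -/
open scoped RealInnerProductSpace

/-- **Demiclosedness principle on a bounded closed convex set.**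
Let `H` be a real Hilbert space, `D ⊆ H` nonempty closed convex bounded, and
`T` nonexpansive on `D`.  If `(x_n) ⊆ D`, `x_n ⇀ x` weakly, and `x_n − T x_n → 0`
strongly, then `x ∈ D` and `T x = x`. -/
theorem stmt10 {H : Type*} [NormedAddCommGroup H] [InnerProductSpace ℝ H] [CompleteSpace H]
    (D : Set H) (hDne : D.Nonempty) (hDclosed : IsClosed D) (hDconv : Convex ℝ D)
    (hDbdd : Bornology.IsBounded D)
    (T : H → H) (hT : ∀ y ∈ D, ∀ z ∈ D, ‖T y - T z‖ ≤ ‖y - z‖)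
    (x : ℕ → H) (hxD : ∀ n : ℕ, x n ∈ D) (p : H)
    (hweak : ∀ y : H, Filter.Tendsto (fun n => ⟪x n, y⟫) Filter.atTop (nhds ⟪p, y⟫))
    (hstrong : Filter.Tendsto (fun n => x n - T (x n)) Filter.atTop (nhds 0)) :
    p ∈ D ∧ T p = p := by
  -- Step 1: p ∈ D via the metric projection onto D
  obtain ⟨q, hqD, hq⟩ :=
    exists_norm_eq_iInf_of_complete_convex hDne (hDclosed.isComplete) hDconv p
  have hproj := (norm_eq_iInf_iff_real_inner_le_zero hDconv hqD).mp hq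
  have hkey : ∀ n, ⟪p - q, x n - q⟫ ≤ 0 := fun n => hproj (x n) (hxD n)
  have htend : Filter.Tendsto (fun n => ⟪p - q, x n - q⟫) Filter.atTop
      (nhds (⟪p - q, p - q⟫)) := by
    have heq : (fun n => ⟪p - q, x n - q⟫) = fun n => ⟪x n, p - q⟫ - ⟪q, p - q⟫ := by
      funext n; rw [real_inner_comm, inner_sub_left]
    have heq2 : ⟪p - q, p - q⟫ = ⟪p, p - q⟫ - ⟪q, p - q⟫ := by rw [inner_sub_left]
    rw [heq, heq2]
    exact (hweak (p - q)).sub tendsto_const_nhds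
  have hle : ⟪p - q, p - q⟫ ≤ 0 :=
    le_of_tendsto htend (Filter.Eventually.of_forall hkey)
  have hpq : p = q := by
    have h0 : p - q = 0 := by
      have := real_inner_self_nonpos.mp hle
      simpa using this
    exact sub_eq_zero.mp h0
  have hpD : p ∈ D := hpq ▸ hqD
  refine ⟨hpD, ?_⟩
  -- Step 2: T p = p
  set v := p - T p with hv
  -- boundedness
  obtain ⟨C, hC⟩ := hDbdd.exists_norm_le
  set M : ℝ := C + ‖p‖ with hM
  have hbound : ∀ n, ‖x n - p‖ ≤ M := fun n =>
    le_trans (norm_sub_le _ _) (add_le_add_left (hC _ (hxD n)) _)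
  set e : ℕ → ℝ := fun n => ‖x n - T (x n)‖ with he
  have he0 : ∀ n, 0 ≤ e n := fun n => norm_nonneg _
  have heT : Filter.Tendsto e Filter.atTop (nhds 0) := by
    simpa using hstrong.norm
  -- key inequality
  have hkey2 : ∀ n, ‖v‖ ^ 2 ≤ 2 * e n * M + e n ^ 2 - 2 * ⟪x n - p, v⟫ := by
    intro n
    have h1 : ‖x n - T p‖ ≤ e n + ‖x n - p‖ := by
      calc ‖x n - T p‖ ≤ ‖x n - T (x n)‖ + ‖T (x n) - T p‖ := by
            simpa using norm_sub_le_norm_sub_add_norm_sub (x n) (T (x n)) (T p)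
        _ ≤ e n + ‖x n - p‖ := add_le_add le_rfl (hT _ (hxD n) _ hpD)
    have h2 : ‖x n - T p‖ ^ 2 ≤ (e n + ‖x n - p‖) ^ 2 :=
      pow_le_pow_left₀ (norm_nonneg _) h1 2
    have h3 : ‖x n - T p‖ ^ 2 = ‖x n - p‖ ^ 2 + 2 * ⟪x n - p, v⟫ + ‖v‖ ^ 2 := by
      have : x n - T p = (x n - p) + v := by rw [hv]; abel
      rw [this, norm_add_sq_real]
    have h4 : (e n + ‖x n - p‖) ^ 2 = e n ^ 2 + 2 * e n * ‖x n - p‖ + ‖x n - p‖ ^ 2 := by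
      ring
    have h5 : 2 * e n * ‖x n - p‖ ≤ 2 * e n * M :=
      mul_le_mul_of_nonneg_left (hbound n) (by positivity)
    nlinarith [h2, h3, h4, h5]
  -- the RHS tends to 0
  have hinn : Filter.Tendsto (fun n => ⟪x n - p, v⟫) Filter.atTop (nhds 0) := by
    have heq : (fun n => ⟪x n - p, v⟫) = fun n => ⟪x n, v⟫ - ⟪p, v⟫ := by
      funext n; rw [inner_sub_left]
    rw [heq]
    simpa using (hweak v).sub (tendsto_const_nhds : Filter.Tendsto (fun _ : ℕ => ⟪p, v⟫) _ _)
  have hrhs : Filter.Tendsto (fun n => 2 * e n * M + e n ^ 2 - 2 * ⟪x n - p, v⟫)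
      Filter.atTop (nhds 0) := by
    have := (((heT.const_mul 2).mul_const M).add (heT.pow 2)).sub (hinn.const_mul 2)
    simpa using this
  have hfin : ‖v‖ ^ 2 ≤ 0 := ge_of_tendsto hrhs (Filter.Eventually.of_forall hkey2)
  have : v = 0 := by
    have : ‖v‖ = 0 := by nlinarith [norm_nonneg v]
    exact norm_eq_zero.mp this
  have := sub_eq_zero.mp this
  exact this.symm
end

section
/- Let ℓ : ℝ → (−∞, +∞] be proper lower semicontinuous convex, non-negative on its domain, with dom ℓ = [0, +∞), increasing, strictly convex on [0, +∞), and supercoercive. Let F : ℝ → (−∞, +∞] be proper lower semicontinuous convex with dom F = [0, +∞) and supercoercive. Let K = ℝ₊ × ℝ₋ × ℝ₊ × ℝ₋ ⊂ ℝ⁴ and let C ∈ {K, ℝ⁴}. Define b : ℝ × ℝ⁴ → (−∞, +∞] by b(ρ, ω) = ρ·ℓ(‖ω‖/ρ) if ρ > 0, b(0, 0) = 0, and b(ρ, ω) = +∞ otherwise, and define φ : ℝ × ℝ⁴ → (−∞, +∞] by φ(ρ, ω) = b(ρ, ω) + F(ρ) + ι_C(ω). Then for every (ρ*, ω*) ∈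 ℝ × ℝ⁴, the Fenchel conjugate of φ satisfies φ*(ρ*, ω*) = F*(ρ* + ℓ*(‖P_C ω*‖)), where P_C is the Euclidean projection onto C. -/
open scoped RealInnerProductSpace
open Classical

set_option maxHeartbeats 2000000 in
/-- **Proposition 4.4(i): Fenchel conjugate of the perspective-like integrand.**
With `ℓ : ℝ → (−∞,+∞]` proper lsc convex, nonnegative on its domain `[0,∞)`, increasing,
strictly convex on `[0,∞)` and supercoercive (here represented by the real-valued `lR` on
`[0,∞)`), `F` proper lsc convex with domain `[0,∞)` (represented by `FR`) and
supercoercive, `K = ℝ₊ × ℝ₋ × ℝ₊ × ℝ₋ ⊆ ℝ⁴`, `C ∈ {K, ℝ⁴}` with Euclidean projection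
`P = P_C`, `b` the perspective function of `ℓ∘‖·‖`, and
`φ(ρ,ω) = b(ρ,ω) + F(ρ) + ι_C(ω)`, one has, for every `(ρ*, ω*)`:
`φ*(ρ*, ω*) = F*(ρ* + ℓ*(‖P_C ω*‖))`  (with `ℓ*(‖P_C ω*‖)` finite). -/
theorem stmt13
    (K : Set (EuclideanSpace ℝ (Fin 4)))
    (hK : K = {ω : EuclideanSpace ℝ (Fin 4) | 0 ≤ ω 0 ∧ ω 1 ≤ 0 ∧ 0 ≤ ω 2 ∧ ω 3 ≤ 0})
    (C : Set (EuclideanSpace ℝ (Fin 4))) (hC : C = K ∨ C = Set.univ)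
    (P : EuclideanSpace ℝ (Fin 4) → EuclideanSpace ℝ (Fin 4))
    (hP : ∀ ξ : EuclideanSpace ℝ (Fin 4), P ξ ∈ C ∧ ∀ u ∈ C, ‖ξ - P ξ‖ ≤ ‖ξ - u‖)
    (ℓ : ℝ → EReal) (lR : ℝ → ℝ)
    (hl : ∀ r : ℝ, ℓ r = if 0 ≤ r then (lR r : EReal) else ⊤)
    (hllsc : LowerSemicontinuous ℓ)
    (hlconv : ConvexOn ℝ (Set.Ici 0) lR)
    (hlstrict : StrictConvexOn ℝ (Set.Ici 0) lR)
    (hlnonneg : ∀ r : ℝ, 0 ≤ r → 0 ≤ lR r)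
    (hlmono : MonotoneOn lR (Set.Ici 0))
    (hlsuper : Filter.Tendsto (fun r : ℝ => lR r / r) Filter.atTop Filter.atTop)
    (F : ℝ → EReal) (FR : ℝ → ℝ)
    (hF : ∀ ρ : ℝ, F ρ = if 0 ≤ ρ then (FR ρ : EReal) else ⊤)
    (hFlsc : LowerSemicontinuous F)
    (hFconv : ConvexOn ℝ (Set.Ici 0) FR)
    (hFsuper : Filter.Tendsto (fun ρ : ℝ => FR ρ / ρ) Filter.atTop Filter.atTop)
    (b : ℝ → EuclideanSpace ℝ (Fin 4) → EReal)
    (hb : ∀ (ρ : ℝ) (ω : EuclideanSpace ℝ (Fin 4)),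
      b ρ ω = if 0 < ρ then (ρ : EReal) * ℓ (‖ω‖ / ρ)
        else if ρ = 0 ∧ ω = 0 then (0 : EReal) else ⊤)
    (φ : ℝ → EuclideanSpace ℝ (Fin 4) → EReal)
    (hφ : ∀ (ρ : ℝ) (ω : EuclideanSpace ℝ (Fin 4)),
      φ ρ ω = b ρ ω + F ρ + (if ω ∈ C then (0 : EReal) else ⊤)) :
    ∀ (ρs : ℝ) (ωs : EuclideanSpace ℝ (Fin 4)), ∃ t : ℝ,
      (⨆ r : ℝ, ((‖P ωs‖ * r : ℝ) : EReal) - ℓ r) = (t : EReal) ∧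
      (⨆ p : ℝ × EuclideanSpace ℝ (Fin 4),
          ((p.1 * ρs + ⟪p.2, ωs⟫ : ℝ) : EReal) - φ p.1 p.2) =
        ⨆ ρ : ℝ, (((ρs + t) * ρ : ℝ) : EReal) - F ρ := by
  intro ρs ωs
  -- basic cone facts
  have hCzero : (0 : EuclideanSpace ℝ (Fin 4)) ∈ C := by
    rcases hC with h | h <;> subst h
    · simp [hK]
    · trivial
  have hCsmul : ∀ c : ℝ, 0 ≤ c → ∀ u ∈ C, c • u ∈ C := by
    intro c hc u hu
    rcases hC with h | h <;> subst h
    · subst hK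
      simp only [Set.mem_setOf_eq, PiLp.smul_apply, smul_eq_mul] at hu ⊢
      exact ⟨mul_nonneg hc hu.1, mul_nonpos_of_nonneg_of_nonpos hc hu.2.1,
        mul_nonneg hc hu.2.2.1, mul_nonpos_of_nonneg_of_nonpos hc hu.2.2.2⟩
    · trivial
  have hCadd : ∀ u ∈ C, ∀ v ∈ C, u + v ∈ C := by
    intro u hu v hv
    rcases hC with h | h <;> subst h
    · subst hK
      simp only [Set.mem_setOf_eq, PiLp.add_apply] at hu hv ⊢
      exact ⟨add_nonneg hu.1 hv.1, add_nonpos hu.2.1 hv.2.1,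
        add_nonneg hu.2.2.1 hv.2.2.1, add_nonpos hu.2.2.2 hv.2.2.2⟩
    · trivial
  have hCconv : Convex ℝ C := by
    intro x hx y hy a bb ha hb hab
    exact hCadd _ (hCsmul a ha x hx) _ (hCsmul bb hb y hy)
  set q := P ωs with hq
  have hqC : q ∈ C := (hP ωs).1
  have hvar : ∀ u ∈ C, ⟪ωs - q, u - q⟫ ≤ 0 := by
    have hmin : ‖ωs - q‖ = ⨅ w : C, ‖ωs - w‖ := by
      haveI : Nonempty C := ⟨⟨0, hCzero⟩⟩
      refine le_antisymm (le_ciInf fun w => (hP ωs).2 w w.2) ?_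
      have hbdd : BddBelow (Set.range fun w : C => ‖ωs - (w : EuclideanSpace ℝ (Fin 4))‖) := by
        refine ⟨0, ?_⟩
        rintro x ⟨w, rfl⟩
        exact norm_nonneg _
      exact ciInf_le hbdd ⟨q, hqC⟩
    exact (norm_eq_iInf_iff_real_inner_le_zero hCconv hqC).1 hmin
  have hineq : ∀ u ∈ C, ⟪ωs - q, u⟫ ≤ 0 := by
    intro u hu
    have := hvar (u + q) (hCadd u hu q hqC)
    simpa using this
  have hperp : ⟪ωs - q, q⟫ = 0 := by
    have h1 := hineq q hqC
    have h2 := hvar 0 hCzero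
    rw [zero_sub, inner_neg_right] at h2
    linarith
  set s := ‖q‖ with hs
  have hs0 : (0:ℝ) ≤ s := norm_nonneg q
  have hqws : ⟪q, ωs⟫ = s ^ 2 := by
    have h1 : ⟪ωs - q, q⟫ = ⟪ωs, q⟫ - ⟪q, q⟫ := by rw [inner_sub_left]
    have h2 : ⟪q, q⟫ = s ^ 2 := real_inner_self_eq_norm_sq q
    have h3 : ⟪q, ωs⟫ = ⟪ωs, q⟫ := real_inner_comm ωs q
    linarith [hperp]
  have hbound : ∀ u ∈ C, ⟪u, ωs⟫ ≤ s * ‖u‖ := by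
    intro u hu
    have h1 := hineq u hu
    have h2 : ⟪u, q⟫ ≤ ‖u‖ * ‖q‖ := real_inner_le_norm u q
    have h3 : ⟪u, ωs⟫ = ⟪u, q⟫ + ⟪u, ωs - q⟫ := by
      rw [← inner_add_right]
      norm_num
    have h4 : ⟪u, ωs - q⟫ = ⟪ωs - q, u⟫ := real_inner_comm _ _
    rw [h3, h4]
    nlinarith
  -- boundedness of the conjugate of ℓ at s
  obtain ⟨M, hM⟩ : ∃ M : ℝ, ∀ r ≥ M, s + 1 ≤ lR r / r :=
    Filter.eventually_atTop.1 (hlsuper.eventually_ge_atTop (s + 1))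
  set M' := max M 1 with hM'
  have hM'1 : (1:ℝ) ≤ M' := le_max_right _ _
  have hB : ∀ r : ℝ, 0 ≤ r → s * r - lR r ≤ s * M' := by
    intro r hr
    rcases le_or_gt r M' with h | h
    · have := hlnonneg r hr
      nlinarith
    · have hrM : M ≤ r := le_trans (le_max_left _ _) h.le
      have hr1 : (1:ℝ) ≤ r := le_trans hM'1 h.le
      have := hM r hrM
      rw [le_div_iff₀ (by linarith)] at this
      nlinarith
  set S := (fun r : ℝ => s * r - lR r) '' Set.Ici 0 with hS
  have hSne : S.Nonempty := ⟨s * 0 - lR 0, ⟨0, Set.self_mem_Ici, rfl⟩⟩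
  have hSbdd : BddAbove S := by
    refine ⟨s * M', ?_⟩
    rintro x ⟨r, hr, rfl⟩
    exact hB r hr
  set t := sSup S with ht
  have ht_ub : ∀ r : ℝ, 0 ≤ r → s * r - lR r ≤ t := fun r hr => le_csSup hSbdd ⟨r, hr, rfl⟩
  refine ⟨t, ?_, ?_⟩
  · -- first equality : the EReal supremum equals t
    apply le_antisymm
    · apply iSup_le
      intro r
      rw [hl r]
      by_cases hr : 0 ≤ r
      · rw [if_pos hr, ← EReal.coe_sub, EReal.coe_le_coe_iff]
        exact ht_ub r hr
      · rw [if_neg hr]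
        simp
    · rw [le_iSup_iff]
      intro ub hub
      induction ub with
      | bot =>
        exfalso
        have h0 := hub 0
        rw [hl 0, if_pos le_rfl, ← EReal.coe_sub] at h0
        exact (EReal.bot_lt_coe _).not_ge h0
      | coe u =>
        rw [EReal.coe_le_coe_iff]
        refine csSup_le hSne ?_
        rintro x ⟨r, hr, rfl⟩
        simp only [Set.mem_Ici] at hr
        have := hub r
        rw [hl r, if_pos hr, ← EReal.coe_sub, EReal.coe_le_coe_iff] at this
        exact this
      | top => exact le_top
  · -- second equality : the Fenchel conjugate identity
    have hFne : ∀ ρ : ℝ, F ρ ≠ ⊥ := by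
      intro ρ
      rw [hF]
      split_ifs <;> simp
    have hbne : ∀ (ρ : ℝ) (ω : EuclideanSpace ℝ (Fin 4)), b ρ ω ≠ ⊥ := by
      intro ρ ω
      rw [hb]
      split_ifs with h1 h2
      · rw [hl, if_pos (div_nonneg (norm_nonneg ω) h1.le), ← EReal.coe_mul]
        exact EReal.coe_ne_bot _
      · simp
      · simp
    have hphi_ne : ∀ (ρ : ℝ) (ω : EuclideanSpace ℝ (Fin 4)),
        b ρ ω + F ρ ≠ ⊥ := by
      intro ρ ω
      rw [Ne, EReal.add_eq_bot_iff]
      push_neg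
      exact ⟨hbne ρ ω, hFne ρ⟩
    -- value of φ at (0,0)
    have hphi00 : φ 0 0 = ((FR 0 : ℝ) : EReal) := by
      rw [hφ, hb, hF, if_neg (lt_irrefl 0), if_pos ⟨rfl, rfl⟩, if_pos le_rfl,
        if_pos hCzero, zero_add, add_zero]
    -- value of φ for ρ > 0, ω ∈ C
    have hphipos : ∀ (ρ : ℝ), 0 < ρ → ∀ ω ∈ C,
        φ ρ ω = ((ρ * lR (‖ω‖ / ρ) + FR ρ : ℝ) : EReal) := by
      intro ρ hρ ω hω
      rw [hφ, hb, hF, if_pos hρ, if_pos hρ.le, if_pos hω, add_zero, hl,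
        if_pos (div_nonneg (norm_nonneg ω) hρ.le), ← EReal.coe_mul, ← EReal.coe_add]
    apply le_antisymm
    · apply iSup_le
      rintro ⟨ρ, ω⟩
      by_cases hω : ω ∈ C
      · rcases lt_trichotomy ρ 0 with hρ | hρ | hρ
        · have : φ ρ ω = ⊤ := by
            rw [hφ, hF, if_neg (not_le.2 hρ), if_pos hω, add_zero,
              EReal.add_top_of_ne_bot (hbne ρ ω)]
          rw [this]
          simp
        · subst hρ
          by_cases hω0 : ω = (0 : EuclideanSpace ℝ (Fin 4))
          · subst hω0
            rw [hphi00]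
            have hle : (((ρs + t) * 0 : ℝ) : EReal) - F 0 ≤
                ⨆ ρ : ℝ, (((ρs + t) * ρ : ℝ) : EReal) - F ρ :=
              le_iSup (fun ρ : ℝ => (((ρs + t) * ρ : ℝ) : EReal) - F ρ) 0
            refine le_trans ?_ hle
            rw [hF, if_pos le_rfl, ← EReal.coe_sub, ← EReal.coe_sub, EReal.coe_le_coe_iff]
            simp [inner_zero_left]
          · have : φ 0 ω = ⊤ := by
              rw [hφ, hb, if_neg (lt_irrefl 0), if_neg (by simp [hω0]),
                if_pos hω, add_zero, EReal.top_add_of_ne_bot (hFne 0)]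
            rw [this]
            simp
        · rw [hphipos ρ hρ ω hω]
          have hle : (((ρs + t) * ρ : ℝ) : EReal) - F ρ ≤
              ⨆ ρ : ℝ, (((ρs + t) * ρ : ℝ) : EReal) - F ρ :=
            le_iSup (fun ρ : ℝ => (((ρs + t) * ρ : ℝ) : EReal) - F ρ) ρ
          refine le_trans ?_ hle
          rw [hF, if_pos hρ.le, ← EReal.coe_sub, ← EReal.coe_sub, EReal.coe_le_coe_iff]
          have h1 : ⟪ω, ωs⟫ ≤ s * ‖ω‖ := hbound ω hω
          have h2 : s * (‖ω‖ / ρ) - lR (‖ω‖ / ρ) ≤ t := ht_ub _ (div_nonneg (norm_nonneg ω) hρ.le)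
          have h3 : ‖ω‖ = ρ * (‖ω‖ / ρ) := by field_simp
          nlinarith [norm_nonneg ω]
      · have : φ ρ ω = ⊤ := by
          rw [hφ, if_neg hω, EReal.add_top_of_ne_bot (hphi_ne ρ ω)]
        rw [this]
        simp
    · apply iSup_le
      intro ρ
      rcases lt_trichotomy ρ 0 with hρ | hρ | hρ
      · rw [hF, if_neg (not_le.2 hρ)]
        simp
      · subst hρ
        have hle : ((0 * ρs + ⟪(0 : EuclideanSpace ℝ (Fin 4)), ωs⟫ : ℝ) : EReal) - φ 0 0 ≤
            ⨆ p : ℝ × EuclideanSpace ℝ (Fin 4),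
              ((p.1 * ρs + ⟪p.2, ωs⟫ : ℝ) : EReal) - φ p.1 p.2 :=
          le_iSup (fun p : ℝ × EuclideanSpace ℝ (Fin 4) =>
            ((p.1 * ρs + ⟪p.2, ωs⟫ : ℝ) : EReal) - φ p.1 p.2) ((0 : ℝ), (0 : EuclideanSpace ℝ (Fin 4)))
        refine le_trans ?_ hle
        rw [hphi00, hF, if_pos le_rfl, ← EReal.coe_sub, ← EReal.coe_sub, EReal.coe_le_coe_iff]
        simp [inner_zero_left]
      · rw [hF, if_pos hρ.le, ← EReal.coe_sub]
        apply le_of_forall_lt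
        intro c hc
        induction c with
        | bot =>
          refine lt_of_lt_of_le (EReal.bot_lt_coe (0 * ρs + ⟪(0:EuclideanSpace ℝ (Fin 4)), ωs⟫ - FR 0)) ?_
          have hle := le_iSup (fun p : ℝ × EuclideanSpace ℝ (Fin 4) =>
            ((p.1 * ρs + ⟪p.2, ωs⟫ : ℝ) : EReal) - φ p.1 p.2) ((0:ℝ), (0:EuclideanSpace ℝ (Fin 4)))
          refine le_trans ?_ hle
          rw [hphi00, ← EReal.coe_sub]
        | coe c =>
          rw [EReal.coe_lt_coe_iff] at hc
          set ε := ((ρs + t) * ρ - FR ρ - c) / ρ with hε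
          have hεpos : 0 < ε := div_pos (by linarith) hρ
          -- find a good r and a witness ω
          obtain ⟨r0, hr00, hrg0⟩ : ∃ r : ℝ, 0 ≤ r ∧ t - ε < s * r - lR r := by
            obtain ⟨x, ⟨r, hr, rfl⟩, hx⟩ := exists_lt_of_lt_csSup hSne (by linarith : t - ε < t)
            simp only [Set.mem_Ici] at hr
            exact ⟨r, hr, hx⟩
          obtain ⟨r, hr0, hrg, ω, hωC, hωin, hωn⟩ : ∃ r : ℝ, 0 ≤ r ∧ t - ε < s * r - lR r ∧
              ∃ ω : EuclideanSpace ℝ (Fin 4),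
              ω ∈ C ∧ ⟪ω, ωs⟫ = ρ * r * s ∧ ‖ω‖ = ρ * r := by
            by_cases hsz : s = 0
            · refine ⟨0, le_rfl, ?_, 0, hCzero, ?_, ?_⟩
              · have hmon : lR 0 ≤ lR r0 := hlmono Set.self_mem_Ici hr00 hr00
                have : s * r0 - lR r0 ≤ s * 0 - lR 0 := by rw [hsz]; simp [hmon]
                linarith
              · simp [inner_zero_left]
              · simp
            · have hspos : 0 < s := lt_of_le_of_ne hs0 (Ne.symm hsz)
              refine ⟨r0, hr00, hrg0, ((ρ * r0 / s) : ℝ) • q, hCsmul _ (by positivity) q hqC, ?_, ?_⟩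
              · rw [real_inner_smul_left, hqws]
                field_simp
              · rw [norm_smul, Real.norm_eq_abs,
                  abs_of_nonneg (by positivity : (0:ℝ) ≤ ρ * r0 / s), ← hs]
                field_simp
          have hle := le_iSup (fun p : ℝ × EuclideanSpace ℝ (Fin 4) =>
            ((p.1 * ρs + ⟪p.2, ωs⟫ : ℝ) : EReal) - φ p.1 p.2) ((ρ, ω))
          refine lt_of_lt_of_le ?_ hle
          have hnr : ‖ω‖ / ρ = r := by
            rw [hωn]
            field_simp
          rw [hphipos ρ hρ ω hωC, hnr, ← EReal.coe_sub, EReal.coe_lt_coe_iff, hωin]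
          have hceq : c = (ρs + t) * ρ - FR ρ - ρ * ε := by
            rw [hε]
            field_simp
            ring
          nlinarith
        | top => exact absurd hc (by simp)
    done
end

section
/- Let C ⊆ ℝ⁴ be a nonempty closed convex cone and let g : ℝ → ℝ be a convex differentiable increasing function with g'(0) = 0. Then the function ξ ↦ g(‖P_C ξ‖) is differentiable on ℝ⁴ and its gradient equals ζ_C, where ζ_C(ξ) = (g'(‖P_C ξ‖)/‖P_C ξ‖)·P_C ξ if P_C ξ ≠ 0, and ζ_C(ξ) = 0 if P_C ξ = 0. -/
set_option maxHeartbeats 1000000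


open scoped RealInnerProductSpace
open Classical

abbrev E4 := EuclideanSpace ℝ (Fin 4)

/-- **Differentiability of `ξ ↦ g(‖P_C ξ‖)` for a convex increasing `g` with `g'(0) = 0`.**
Let `C ⊆ ℝ⁴` be a nonempty closed convex cone with Euclidean projection `P = P_C`, and
let `g : ℝ → ℝ` be convex, differentiable and increasing with `g'(0) = 0`.  Then
`ξ ↦ g(‖P_C ξ‖)` is differentiable on `ℝ⁴` with gradient `ζ_C`, where
`ζ_C(ξ) = (g'(‖P_C ξ‖)/‖P_C ξ‖) • P_C ξ` if `P_C ξ ≠ 0` and `ζ_C(ξ) = 0` otherwise. -/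
theorem stmt14
    (C : Set (EuclideanSpace ℝ (Fin 4))) (hCne : C.Nonempty)
    (hCclosed : IsClosed C) (hCconv : Convex ℝ C)
    (hCcone : ∀ x ∈ C, ∀ t : ℝ, 0 ≤ t → t • x ∈ C)
    (P : EuclideanSpace ℝ (Fin 4) → EuclideanSpace ℝ (Fin 4))
    (hP : ∀ ξ : EuclideanSpace ℝ (Fin 4), P ξ ∈ C ∧ ∀ u ∈ C, ‖ξ - P ξ‖ ≤ ‖ξ - u‖)
    (g : ℝ → ℝ) (hgconv : ConvexOn ℝ Set.univ g) (hgdiff : Differentiable ℝ g)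
    (hgmono : Monotone g) (hg0 : deriv g 0 = 0) :
    ∀ ξ : EuclideanSpace ℝ (Fin 4),
      HasGradientAt (fun x => g ‖P x‖)
        (if P ξ = 0 then 0 else (deriv g ‖P ξ‖ / ‖P ξ‖) • P ξ) ξ := by
  -- variational inequality
  have var : ∀ x : E4, ∀ w ∈ C, ⟪x - P x, w - P x⟫ ≤ 0 := by
    intro x
    have hne : Nonempty C := ⟨⟨P x, (hP x).1⟩⟩
    have hbdd : BddBelow (Set.range fun w : C => ‖x - (w : E4)‖) := by
      refine ⟨0, ?_⟩
      rintro _ ⟨w, rfl⟩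
      exact norm_nonneg _
    have hmin : ‖x - P x‖ = ⨅ w : C, ‖x - w‖ := by
      refine le_antisymm (le_ciInf fun w => (hP x).2 w w.2) ?_
      exact ciInf_le hbdd ⟨P x, (hP x).1⟩
    exact (norm_eq_iInf_iff_real_inner_le_zero hCconv (hP x).1).1 hmin
  -- Moreau: ⟪x - P x, P x⟫ = 0
  have moreau0 : ∀ x : E4, ⟪x - P x, P x⟫ = 0 := by
    intro x
    have h0 : (0 : E4) ∈ C := by
      obtain ⟨c, hc⟩ := hCne
      simpa using hCcone c hc 0 le_rfl
    have h2 : (2 : ℝ) • P x ∈ C := hCcone _ (hP x).1 2 (by norm_num)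
    have a := var x 0 h0
    have b := var x ((2 : ℝ) • P x) h2
    have e2 : (2 : ℝ) • P x - P x = P x := by
      rw [two_smul]; abel
    rw [e2] at b
    rw [zero_sub, inner_neg_right] at a
    linarith
  -- polar: ⟪x - P x, w⟫ ≤ 0 for w ∈ C
  have polar : ∀ x : E4, ∀ w ∈ C, ⟪x - P x, w⟫ ≤ 0 := by
    intro x w hw
    have h := var x w hw
    rw [inner_sub_right] at h
    have := moreau0 x
    linarith
  -- nonexpansive
  have nonexp : ∀ x y : E4, ‖P x - P y‖ ≤ ‖x - y‖ := by
    intro x y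
    have e1 : ⟪x - P x, P y - P x⟫ ≤ 0 := var x _ (hP y).1
    have e2 : ⟪y - P y, P x - P y⟫ ≤ 0 := var y _ (hP x).1
    have key : ‖P x - P y‖ ^ 2 ≤ ⟪x - y, P x - P y⟫ := by
      have ns : ‖P x - P y‖ ^ 2 =
          ‖P x‖ ^ 2 - 2 * ⟪P x, P y⟫ + ‖P y‖ ^ 2 := norm_sub_sq_real _ _
      simp only [inner_sub_left, inner_sub_right] at e1 e2 ⊢
      have c1 : ⟪P x, P y⟫ = ⟪P y, P x⟫ := real_inner_comm _ _
      have c2 : ⟪x, P y⟫ = ⟪P y, x⟫ := real_inner_comm _ _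
      have c3 : ⟪x, P x⟫ = ⟪P x, x⟫ := real_inner_comm _ _
      have c4 : ⟪y, P y⟫ = ⟪P y, y⟫ := real_inner_comm _ _
      have c5 : ⟪y, P x⟫ = ⟪P x, y⟫ := real_inner_comm _ _
      have s1 : ⟪P x, P x⟫ = ‖P x‖ ^ 2 := real_inner_self_eq_norm_sq _
      have s2 : ⟪P y, P y⟫ = ‖P y‖ ^ 2 := real_inner_self_eq_norm_sq _
      nlinarith
    have cs : ⟪x - y, P x - P y⟫ ≤ ‖x - y‖ * ‖P x - P y‖ := real_inner_le_norm _ _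
    rcases eq_or_lt_of_le (norm_nonneg (P x - P y)) with h | h
    · rw [← h]; exact norm_nonneg _
    · have : ‖P x - P y‖ * ‖P x - P y‖ ≤ ‖x - y‖ * ‖P x - P y‖ := by
        nlinarith
      exact le_of_mul_le_mul_right this h
  -- lower bound inequality for φ(y) = ½‖P y‖²
  have lb : ∀ x y : E4, ⟪P x, y - x⟫ ≤ (1/2) * ‖P y‖ ^ 2 - (1/2) * ‖P x‖ ^ 2 := by
    intro x y
    have m : ⟪P x, x⟫ = ‖P x‖ ^ 2 := by
      have h := moreau0 x
      rw [inner_sub_left, real_inner_self_eq_norm_sq] at h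
      have : ⟪x, P x⟫ = ⟪P x, x⟫ := real_inner_comm _ _
      linarith
    have p : ⟪P x, y⟫ ≤ ⟪P x, P y⟫ := by
      have h := polar y (P x) (hP x).1
      rw [inner_sub_left] at h
      have c1 : ⟪y, P x⟫ = ⟪P x, y⟫ := real_inner_comm _ _
      have c2 : ⟪P y, P x⟫ = ⟪P x, P y⟫ := real_inner_comm _ _
      linarith
    have ns : ‖P y - P x‖ ^ 2 =
        ‖P y‖ ^ 2 - 2 * ⟪P y, P x⟫ + ‖P x‖ ^ 2 := norm_sub_sq_real _ _
    have c : ⟪P x, P y⟫ = ⟪P y, P x⟫ := real_inner_comm _ _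
    rw [inner_sub_right, m]
    nlinarith [sq_nonneg ‖P y - P x‖]
  -- gradient of φ
  have hφ : ∀ x : E4, HasGradientAt (fun y => (1/2 : ℝ) * ‖P y‖ ^ 2) (P x) x := by
    intro x
    rw [hasGradientAt_iff_isLittleO]
    rw [Asymptotics.isLittleO_iff]
    intro ε hε
    have hball : ∀ᶠ y in nhds x, ‖y - x‖ ≤ ε := by
      filter_upwards [Metric.ball_mem_nhds x hε] with y hy
      rw [mem_ball_iff_norm] at hy
      exact hy.le
    filter_upwards [hball] with y hy
    have h1 := lb x y
    have h2 := lb y x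
    have cs : ⟪P y - P x, y - x⟫ ≤ ‖P y - P x‖ * ‖y - x‖ := real_inner_le_norm _ _
    have hne := nonexp y x
    have hsym : ‖y - x‖ = ‖x - y‖ := by rw [← norm_neg]; congr 1; abel
    have hE : (1/2 : ℝ) * ‖P y‖ ^ 2 - (1/2) * ‖P x‖ ^ 2 - ⟪P x, y - x⟫
        ≤ ⟪P y - P x, y - x⟫ := by
      have expand : ⟪P y - P x, y - x⟫ = ⟪P y, y - x⟫ - ⟪P x, y - x⟫ :=
        inner_sub_left _ _ _
      have flip : ⟪P y, x - y⟫ = -⟪P y, y - x⟫ := by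
        rw [← inner_neg_right]; congr 1; abel
      rw [flip] at h2
      linarith
    have habs : |(1/2 : ℝ) * ‖P y‖ ^ 2 - (1/2) * ‖P x‖ ^ 2 - ⟪P x, y - x⟫|
        ≤ ‖y - x‖ * ‖y - x‖ := by
      rw [abs_le]
      constructor
      · nlinarith [norm_nonneg (y - x)]
      · calc (1/2 : ℝ) * ‖P y‖ ^ 2 - (1/2) * ‖P x‖ ^ 2 - ⟪P x, y - x⟫
            ≤ ⟪P y - P x, y - x⟫ := hE
          _ ≤ ‖P y - P x‖ * ‖y - x‖ := cs
          _ ≤ ‖y - x‖ * ‖y - x‖ := by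
              nlinarith [norm_nonneg (y - x), norm_nonneg (P y - P x), nonexp y x]
    calc ‖(1/2 : ℝ) * ‖P y‖ ^ 2 - (1/2) * ‖P x‖ ^ 2 - ⟪P x, y - x⟫‖
        = |(1/2 : ℝ) * ‖P y‖ ^ 2 - (1/2) * ‖P x‖ ^ 2 - ⟪P x, y - x⟫| := rfl
      _ ≤ ‖y - x‖ * ‖y - x‖ := habs
      _ ≤ ε * ‖y - x‖ := by nlinarith [norm_nonneg (y - x)]
  intro ξ
  by_cases h0 : P ξ = 0
  · rw [if_pos h0]
    rw [hasGradientAt_iff_isLittleO]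
    have hzero : ∀ y : E4, ⟪(0 : E4), y - ξ⟫ = 0 := fun y => inner_zero_left _
    have hlittle : (fun y : E4 => g ‖y - ξ‖ - g 0) =o[nhds ξ] fun y => y - ξ := by
      have hd : HasDerivAt g 0 0 := by
        have := (hgdiff 0).hasDerivAt
        rwa [hg0] at this
      have h1 : (fun t : ℝ => g t - g 0 - (t - 0) * 0) =o[nhds 0] fun t => t - 0 :=
        hasDerivAt_iff_isLittleO.1 hd
      have h1' : (fun t : ℝ => g t - g 0) =o[nhds 0] fun t : ℝ => t := by
        simpa using h1
      have htend : Filter.Tendsto (fun y : E4 => ‖y - ξ‖) (nhds ξ) (nhds 0) := by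
        have hc : Continuous fun y : E4 => ‖y - ξ‖ :=
          (continuous_id.sub continuous_const).norm
        have := hc.tendsto ξ
        simpa using this
      have := h1'.comp_tendsto htend
      exact Asymptotics.isLittleO_norm_right.1 (by simpa [Function.comp_def] using this)
    have hbig : (fun y : E4 => g ‖P y‖ - g ‖P ξ‖ - ⟪(0 : E4), y - ξ⟫)
        =O[nhds ξ] fun y => g ‖y - ξ‖ - g 0 := by
      refine Asymptotics.isBigO_of_le _ fun y => ?_
      rw [hzero y, sub_zero, h0, norm_zero]
      have hle : ‖P y‖ ≤ ‖y - ξ‖ := by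
        have := nonexp y ξ
        rw [h0, sub_zero] at this
        exact this
      have hm1 : g 0 ≤ g ‖P y‖ := hgmono (norm_nonneg _)
      have hm2 : g ‖P y‖ ≤ g ‖y - ξ‖ := hgmono hle
      rw [Real.norm_eq_abs, Real.norm_eq_abs, abs_of_nonneg (by linarith),
        abs_of_nonneg (by linarith)]
      linarith
    exact hbig.trans_isLittleO hlittle
  · rw [if_neg h0]
    have hnorm_pos : (0 : ℝ) < ‖P ξ‖ := norm_pos_iff.2 h0
    set φ : E4 → ℝ := fun y => (1/2 : ℝ) * ‖P y‖ ^ 2 with hφdef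
    set G : ℝ → ℝ := fun t => g (Real.sqrt (2 * t)) with hGdef
    have hfeq : (fun y : E4 => g ‖P y‖) = fun y => G (φ y) := by
      funext y
      simp only [hGdef, hφdef]
      rw [show (2 : ℝ) * ((1/2) * ‖P y‖ ^ 2) = ‖P y‖ ^ 2 by ring,
        Real.sqrt_sq (norm_nonneg _)]
    have h2t0 : (2 : ℝ) * φ ξ = ‖P ξ‖ ^ 2 := by simp only [hφdef]; ring
    have hsq : Real.sqrt (2 * φ ξ) = ‖P ξ‖ := by
      rw [h2t0, Real.sqrt_sq (norm_nonneg _)]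
    have h1 : HasDerivAt (fun t : ℝ => 2 * t) 2 (φ ξ) := by
      simpa using (hasDerivAt_id (φ ξ)).const_mul (2 : ℝ)
    have h2 : HasDerivAt Real.sqrt (1 / (2 * Real.sqrt (2 * φ ξ))) (2 * φ ξ) := by
      apply Real.hasDerivAt_sqrt
      rw [h2t0]
      positivity
    have h3 : HasDerivAt g (deriv g ‖P ξ‖) (Real.sqrt (2 * φ ξ)) := by
      rw [hsq]; exact (hgdiff ‖P ξ‖).hasDerivAt
    have hG : HasDerivAt G (deriv g ‖P ξ‖ / ‖P ξ‖) (φ ξ) := by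
      have := (h3.comp (2 * φ ξ) h2).comp (φ ξ) h1
      have heq : deriv g ‖P ξ‖ * (1 / (2 * Real.sqrt (2 * φ ξ))) * 2
          = deriv g ‖P ξ‖ / ‖P ξ‖ := by
        rw [hsq]; field_simp
      rw [heq] at this
      exact this
    -- chain rule for gradient
    have hcomp : HasGradientAt (fun y => G (φ y))
        ((deriv g ‖P ξ‖ / ‖P ξ‖) • P ξ) ξ := by
      rw [hasGradientAt_iff_hasFDerivAt]
      have hfd := hG.hasFDerivAt.comp ξ ((hφ ξ).hasFDerivAt)
      refine hfd.congr_fderiv ?_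
      ext v
      simp [real_inner_smul_left, mul_comm, Finset.sum_mul]
    rw [hfeq]
    exact hcomp
end

section
/- Let ℓ : ℝ → (−∞, +∞] be proper lower semicontinuous convex, non-negative on its domain, with dom ℓ = [0, +∞), increasing, strictly convex on [0, +∞), and supercoercive, so that ℓ* is finite, differentiable, and increasing on ℝ with (ℓ*)'(0) = 0. Let F : ℝ → (−∞, +∞] be proper lower semicontinuous convex, strictly convex on dom F = [0, +∞), and supercoercive, so that F* is finite and differentiable on ℝ. Let K = ℝ₊ × ℝ₋ × ℝ₊ × ℝ₋ ⊂ ℝ⁴, let C ∈ {K, ℝ⁴}, let b(ρ, ω) = ρ·ℓ(‖ω‖/ρ) for ρ > 0, b(0,0) = 0, +∞ otherwise, and φ(ρ, ω) = b(ρ, ω) + F(ρ) + ι_C(ω). Then the Fenchel conjugate φ* is differentiable on ℝ × ℝ⁴ and ∇φ*(ρ*, ω*) = (F*)'(ρ* + ℓ*(‖P_C ω*‖)) · (1, ζ_C(ω*)), where ζ_C(ω*) = ((ℓ*)'(‖P_C ω*‖)/‖P_C ω*‖)·P_C ω* if P_C ω* ≠ 0 and ζ_C(ω*) = 0 otherwise.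 -/
open scoped RealInnerProductSpace
open Classical

open Filter Asymptotics

private lemma auxmax (x : ℝ) : HasDerivAt (fun y : ℝ => max y 0 ^ 2) (2 * max x 0) x := by
  rcases lt_trichotomy x 0 with hx | hx | hx
  · have h0 : HasDerivAt (fun _ : ℝ => (0 : ℝ)) 0 x := hasDerivAt_const x 0
    have he : (fun y : ℝ => max y 0 ^ 2) =ᶠ[nhds x] fun _ => (0 : ℝ) := by
      filter_upwards [gt_mem_nhds hx] with y hy
      rw [max_eq_right hy.le]; norm_num
    have := h0.congr_of_eventuallyEq he
    simpa [max_eq_right hx.le] using this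
  · subst hx
    rw [hasDerivAt_iff_isLittleO]
    simp only [max_self, sub_zero, smul_eq_mul]
    have heq : (fun x' : ℝ => max x' 0 ^ 2 - 0 ^ 2 - x' * (2 * 0)) = fun y : ℝ => max y 0 ^ 2 := by
      funext y; ring
    rw [heq]
    rw [isLittleO_iff]
    intro c hc
    filter_upwards [Metric.ball_mem_nhds (0 : ℝ) hc] with y hy
    rw [Metric.mem_ball, Real.dist_eq, sub_zero] at hy
    have h1 : (0 : ℝ) ≤ max y 0 := le_max_right _ _
    have h2 : max y 0 ≤ |y| := max_le (le_abs_self y) (abs_nonneg y)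
    have h3 : max y 0 ^ 2 ≤ |y| ^ 2 := pow_le_pow_left₀ h1 h2 2
    rw [Real.norm_eq_abs, Real.norm_eq_abs, abs_of_nonneg (by positivity : (0:ℝ) ≤ max y 0 ^ 2)]
    calc max y 0 ^ 2 ≤ |y| ^ 2 := h3
      _ = |y| * |y| := sq (|y|) ▸ by ring
      _ ≤ c * |y| := mul_le_mul_of_nonneg_right hy.le (abs_nonneg y)
  · have h0 : HasDerivAt (fun y : ℝ => y ^ 2) (2 * x) x := by
      simpa using hasDerivAt_pow 2 x
    have he : (fun y : ℝ => max y 0 ^ 2) =ᶠ[nhds x] fun y => y ^ 2 := by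
      filter_upwards [lt_mem_nhds hx] with y hy
      rw [max_eq_left hy.le]
    have := h0.congr_of_eventuallyEq he
    simpa [max_eq_left hx.le] using this

private lemma auxmin (x : ℝ) : HasDerivAt (fun y : ℝ => min y 0 ^ 2) (2 * min x 0) x := by
  have h1 : HasDerivAt (fun y : ℝ => max (-y) 0 ^ 2) (2 * max (-x) 0 * (-1)) x :=
    (auxmax (-x)).comp x (hasDerivAt_neg x)
  have he : (fun y : ℝ => max (-y) 0 ^ 2) = fun y : ℝ => min y 0 ^ 2 := by
    funext y
    rw [show max (-y) 0 = -min y 0 by rw [← neg_zero, max_neg_neg, neg_zero], neg_sq]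
  rw [he] at h1
  have : 2 * max (-x) 0 * (-1) = 2 * min x 0 := by
    rw [show max (-x) 0 = -min x 0 by rw [← neg_zero, max_neg_neg, neg_zero]]; ring
  rwa [this] at h1

set_option maxHeartbeats 1000000 in
/-- **Proposition 4.4(ii): differentiability and gradient of the dual integrand.**
In the setting of Proposition 4.4 (with `ℓ` represented on its domain `[0,∞)` by `lR`,
`F` by `FR`, and with `ℓ* = lstar`, `F* = Fstar` finite and differentiable, `lstar`
increasing with `(ℓ*)'(0) = 0`), the Fenchel conjugate `φ*` of
`φ(ρ,ω) = b(ρ,ω) + F(ρ) + ι_C(ω)` satisfies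
`φ*(ρ*, ω*) = F*(ρ* + ℓ*(‖P_C ω*‖))`, it is differentiable on `ℝ × ℝ⁴`, and its
(Fréchet) derivative at `(ρ*, ω*)` is the linear form
`(dρ, dω) ↦ (F*)'(ρ* + ℓ*(‖P_C ω*‖)) · (dρ + ⟪ζ_C(ω*), dω⟫)`, i.e. its gradient is
`(F*)'(ρ* + ℓ*(‖P_C ω*‖)) · (1, ζ_C(ω*))`, where
`ζ_C(ω*) = ((ℓ*)'(‖P_C ω*‖)/‖P_C ω*‖) • P_C ω*` if `P_C ω* ≠ 0`, and `0` otherwise. -/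
theorem stmt15
    (K : Set (EuclideanSpace ℝ (Fin 4)))
    (hK : K = {ω : EuclideanSpace ℝ (Fin 4) | 0 ≤ ω 0 ∧ ω 1 ≤ 0 ∧ 0 ≤ ω 2 ∧ ω 3 ≤ 0})
    (C : Set (EuclideanSpace ℝ (Fin 4))) (hC : C = K ∨ C = Set.univ)
    (P : EuclideanSpace ℝ (Fin 4) → EuclideanSpace ℝ (Fin 4))
    (hP : ∀ ξ : EuclideanSpace ℝ (Fin 4), P ξ ∈ C ∧ ∀ u ∈ C, ‖ξ - P ξ‖ ≤ ‖ξ - u‖)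
    (ℓ : ℝ → EReal) (lR : ℝ → ℝ)
    (hl : ∀ r : ℝ, ℓ r = if 0 ≤ r then (lR r : EReal) else ⊤)
    (hllsc : LowerSemicontinuous ℓ)
    (hlconv : ConvexOn ℝ (Set.Ici 0) lR)
    (hlstrict : StrictConvexOn ℝ (Set.Ici 0) lR)
    (hlnonneg : ∀ r : ℝ, 0 ≤ r → 0 ≤ lR r)
    (hlmono : MonotoneOn lR (Set.Ici 0))
    (hlsuper : Filter.Tendsto (fun r : ℝ => lR r / r) Filter.atTop Filter.atTop)
    (lstar : ℝ → ℝ)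
    (hlstar : ∀ s : ℝ, (⨆ r : ℝ, ((s * r : ℝ) : EReal) - ℓ r) = (lstar s : EReal))
    (hlstardiff : Differentiable ℝ lstar) (hlstarmono : Monotone lstar)
    (hlstar0 : deriv lstar 0 = 0)
    (F : ℝ → EReal) (FR : ℝ → ℝ)
    (hF : ∀ ρ : ℝ, F ρ = if 0 ≤ ρ then (FR ρ : EReal) else ⊤)
    (hFlsc : LowerSemicontinuous F)
    (hFconv : ConvexOn ℝ (Set.Ici 0) FR)
    (hFstrict : StrictConvexOn ℝ (Set.Ici 0) FR)
    (hFsuper : Filter.Tendsto (fun ρ : ℝ => FR ρ / ρ) Filter.atTop Filter.atTop)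
    (Fstar : ℝ → ℝ)
    (hFstar : ∀ s : ℝ, (⨆ ρ : ℝ, ((s * ρ : ℝ) : EReal) - F ρ) = (Fstar s : EReal))
    (hFstardiff : Differentiable ℝ Fstar)
    (b : ℝ → EuclideanSpace ℝ (Fin 4) → EReal)
    (hb : ∀ (ρ : ℝ) (ω : EuclideanSpace ℝ (Fin 4)),
      b ρ ω = if 0 < ρ then (ρ : EReal) * ℓ (‖ω‖ / ρ)
        else if ρ = 0 ∧ ω = 0 then (0 : EReal) else ⊤)
    (φ : ℝ → EuclideanSpace ℝ (Fin 4) → EReal)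
    (hφ : ∀ (ρ : ℝ) (ω : EuclideanSpace ℝ (Fin 4)),
      φ ρ ω = b ρ ω + F ρ + (if ω ∈ C then (0 : EReal) else ⊤)) :
    (∀ (ρs : ℝ) (ωs : EuclideanSpace ℝ (Fin 4)),
      (⨆ p : ℝ × EuclideanSpace ℝ (Fin 4),
          ((p.1 * ρs + ⟪p.2, ωs⟫ : ℝ) : EReal) - φ p.1 p.2) =
        ((Fstar (ρs + lstar ‖P ωs‖) : ℝ) : EReal)) ∧
    ∀ (ρs : ℝ) (ωs : EuclideanSpace ℝ (Fin 4)),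
      HasFDerivAt (fun p : ℝ × EuclideanSpace ℝ (Fin 4) => Fstar (p.1 + lstar ‖P p.2‖))
        (deriv Fstar (ρs + lstar ‖P ωs‖) •
          (ContinuousLinearMap.fst ℝ ℝ (EuclideanSpace ℝ (Fin 4)) +
            (innerSL ℝ (if P ωs = 0 then 0
                else (deriv lstar ‖P ωs‖ / ‖P ωs‖) • P ωs)).comp
              (ContinuousLinearMap.snd ℝ ℝ (EuclideanSpace ℝ (Fin 4)))))
        (ρs, ωs) := by
  classical
  -- membership in K
  have hKmem : ∀ ω : EuclideanSpace ℝ (Fin 4),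
      ω ∈ K ↔ (0 ≤ ω 0 ∧ ω 1 ≤ 0 ∧ 0 ≤ ω 2 ∧ ω 3 ≤ 0) := by
    intro ω; rw [hK]; exact Iff.rfl
  -- basic cone facts about C
  have hC0 : (0 : EuclideanSpace ℝ (Fin 4)) ∈ C := by
    rcases hC with h | h
    · rw [h, hKmem]
      refine ⟨?_, ?_, ?_, ?_⟩ <;> simp
    · rw [h]; trivial
  have hCsmul : ∀ (c : ℝ), 0 ≤ c → ∀ ω ∈ C, c • ω ∈ C := by
    rcases hC with h | h
    · intro c hc ω hω
      rw [h, hKmem] at hω ⊢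
      obtain ⟨h0, h1, h2, h3⟩ := hω
      have e : ∀ i : Fin 4, (c • ω) i = c * ω i := fun i => rfl
      refine ⟨?_, ?_, ?_, ?_⟩
      · rw [e]; exact mul_nonneg hc h0
      · rw [e]; exact mul_nonpos_of_nonneg_of_nonpos hc h1
      · rw [e]; exact mul_nonneg hc h2
      · rw [e]; exact mul_nonpos_of_nonneg_of_nonpos hc h3
    · intro c _ ω _; rw [h]; trivial
  have hCadd : ∀ ω ∈ C, ∀ η ∈ C, ω + η ∈ C := by
    rcases hC with h | h
    · intro ω hω η hη
      rw [h, hKmem] at hω hη ⊢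
      obtain ⟨h0, h1, h2, h3⟩ := hω
      obtain ⟨g0, g1, g2, g3⟩ := hη
      have e : ∀ i : Fin 4, (ω + η) i = ω i + η i := fun i => rfl
      exact ⟨by rw [e]; positivity, by rw [e]; exact add_nonpos h1 g1,
        by rw [e]; positivity, by rw [e]; exact add_nonpos h3 g3⟩
    · intro ω _ η _; rw [h]; trivial
  have hCconv : Convex ℝ C := by
    intro x hx y hy a b ha hb _
    exact hCadd _ (hCsmul a ha x hx) _ (hCsmul b hb y hy)
  have hPmemC : ∀ ξ, P ξ ∈ C := fun ξ => (hP ξ).1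
  -- variational inequality
  haveI hCne : Nonempty C := ⟨⟨0, hC0⟩⟩
  have hPvar : ∀ ξ, ∀ u ∈ C, ⟪ξ - P ξ, u - P ξ⟫ ≤ 0 := by
    intro ξ u hu
    have hbdd : BddBelow (Set.range fun w : C => ‖ξ - (w : EuclideanSpace ℝ (Fin 4))‖) := by
      refine ⟨0, ?_⟩
      rintro y ⟨w, rfl⟩
      exact norm_nonneg _
    have heq : ‖ξ - P ξ‖ = ⨅ w : C, ‖ξ - (w : EuclideanSpace ℝ (Fin 4))‖ := by
      refine le_antisymm (le_ciInf fun w => (hP ξ).2 (w : EuclideanSpace ℝ (Fin 4)) w.2) ?_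
      exact ciInf_le hbdd ⟨P ξ, hPmemC ξ⟩
    exact (norm_eq_iInf_iff_real_inner_le_zero hCconv (hPmemC ξ)).1 heq u hu
  have hPinner : ∀ ξ, ⟪P ξ, ξ⟫ = ‖P ξ‖ ^ 2 := by
    intro ξ
    have h1 := hPvar ξ 0 hC0
    rw [zero_sub, inner_neg_right] at h1
    have h1' : (0 : ℝ) ≤ ⟪ξ - P ξ, P ξ⟫ := by linarith
    have h2 := hPvar ξ (P ξ + P ξ) (hCadd _ (hPmemC ξ) _ (hPmemC ξ))
    have he : P ξ + P ξ - P ξ = P ξ := by abel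
    rw [he] at h2
    have h3 : ⟪ξ - P ξ, P ξ⟫ = 0 := le_antisymm h2 h1'
    rw [inner_sub_left] at h3
    have hcm := real_inner_comm (P ξ) ξ
    have hsq := real_inner_self_eq_norm_sq (P ξ)
    linarith
  have hPbound : ∀ ξ, ∀ ω ∈ C, ⟪ω, ξ⟫ ≤ ‖ω‖ * ‖P ξ‖ := by
    intro ξ ω hω
    have h1 := hPvar ξ (ω + P ξ) (hCadd _ hω _ (hPmemC ξ))
    have he : ω + P ξ - P ξ = ω := by abel
    rw [he] at h1
    have h2 : ⟪ω, ξ - P ξ⟫ ≤ 0 := by rwa [real_inner_comm]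
    have h3 : ⟪ω, P ξ⟫ ≤ ‖ω‖ * ‖P ξ‖ := real_inner_le_norm ω (P ξ)
    have h4 : ⟪ω, ξ⟫ = ⟪ω, P ξ⟫ + ⟪ω, ξ - P ξ⟫ := by
      rw [← inner_add_right]
      congr 1
      abel
    linarith
  have hPnonexp : ∀ ξ η, ‖P ξ - P η‖ ≤ ‖ξ - η‖ := by
    intro ξ η
    have h1 := hPvar ξ (P η) (hPmemC η)
    have h2 := hPvar η (P ξ) (hPmemC ξ)
    have e : ⟪ξ - η, P ξ - P η⟫ - ‖P ξ - P η‖ ^ 2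
        = -⟪ξ - P ξ, P η - P ξ⟫ - ⟪η - P η, P ξ - P η⟫ := by
      rw [← real_inner_self_eq_norm_sq]
      simp only [inner_sub_left, inner_sub_right]
      ring
    have key : ‖P ξ - P η‖ ^ 2 ≤ ⟪ξ - η, P ξ - P η⟫ := by linarith
    have h3 : ⟪ξ - η, P ξ - P η⟫ ≤ ‖ξ - η‖ * ‖P ξ - P η‖ := real_inner_le_norm _ _
    nlinarith [norm_nonneg (P ξ - P η), norm_nonneg (ξ - η)]
  -- derivative of ξ ↦ lstar ‖P ξ‖
  have hns : ∀ ξ₀, HasFDerivAt (fun ξ => ‖P ξ‖ ^ 2)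
      ((2 : ℕ) • innerSL ℝ (P ξ₀)) ξ₀ := by
    rcases hC with hCK | hCU
    · -- explicit formula for the projection onto K
      have hPK : ∀ ξ : EuclideanSpace ℝ (Fin 4), P ξ =
          (WithLp.toLp 2 (fun i => if i = 0 ∨ i = 2 then max (ξ i) 0 else min (ξ i) 0) :
            EuclideanSpace ℝ (Fin 4)) := by
        intro ξ
        set q : EuclideanSpace ℝ (Fin 4) :=
          (WithLp.toLp 2 (fun i => if i = 0 ∨ i = 2 then max (ξ i) 0 else min (ξ i) 0) :
            EuclideanSpace ℝ (Fin 4)) with hq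
        have hq0 : q 0 = max (ξ 0) 0 := by simp [hq]
        have hq1 : q 1 = min (ξ 1) 0 := by simp [hq]
        have hq2 : q 2 = max (ξ 2) 0 := by simp [hq]
        have hq3 : q 3 = min (ξ 3) 0 := by simp [hq]
        have hqC : q ∈ C := by
          rw [hCK, hKmem]
          exact ⟨hq0 ▸ le_max_right _ _, hq1 ▸ min_le_right _ _,
            hq2 ▸ le_max_right _ _, hq3 ▸ min_le_right _ _⟩
        have key_max : ∀ a u : ℝ, 0 ≤ u → (a - max a 0) * (u - max a 0) ≤ 0 := by
          intro a u hu
          rcases le_or_gt 0 a with h | h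
          · rw [max_eq_left h, sub_self, zero_mul]
          · rw [max_eq_right h.le, sub_zero, sub_zero]
            exact mul_nonpos_of_nonpos_of_nonneg h.le hu
        have key_min : ∀ a u : ℝ, u ≤ 0 → (a - min a 0) * (u - min a 0) ≤ 0 := by
          intro a u hu
          rcases le_or_gt a 0 with h | h
          · rw [min_eq_left h, sub_self, zero_mul]
          · rw [min_eq_right h.le, sub_zero, sub_zero]
            exact mul_nonpos_of_nonneg_of_nonpos h.le hu
        have hqvar : ∀ u ∈ C, ⟪ξ - q, u - q⟫ ≤ 0 := by
          intro u hu
          rw [hCK, hKmem] at hu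
          obtain ⟨hu0, hu1, hu2, hu3⟩ := hu
          have hinner : ⟪ξ - q, u - q⟫ = ∑ i : Fin 4, (ξ i - q i) * (u i - q i) := by
            rw [PiLp.inner_apply]
            congr 1
            funext i
            simp only [PiLp.sub_apply, RCLike.inner_apply, conj_trivial]
            ring
          rw [hinner, Fin.sum_univ_four, hq0, hq1, hq2, hq3]
          have t0 := key_max (ξ 0) (u 0) hu0
          have t1 := key_min (ξ 1) (u 1) hu1
          have t2 := key_max (ξ 2) (u 2) hu2
          have t3 := key_min (ξ 3) (u 3) hu3
          linarith
        -- uniqueness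
        have h1 := hPvar ξ q hqC
        have h2 := hqvar (P ξ) (hPmemC ξ)
        have e : ⟪ξ - P ξ, q - P ξ⟫ + ⟪ξ - q, P ξ - q⟫ = ‖P ξ - q‖ ^ 2 := by
          rw [← real_inner_self_eq_norm_sq]
          simp only [inner_sub_left, inner_sub_right]
          ring
        have h3 : ‖P ξ - q‖ ^ 2 ≤ 0 := by linarith
        have h4 : ‖P ξ - q‖ = 0 := by nlinarith [norm_nonneg (P ξ - q)]
        have h5 : P ξ - q = 0 := norm_eq_zero.1 h4
        have : P ξ = q := by
          have := sub_eq_zero.1 h5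
          exact this
        exact this
      intro ξ₀
      have hco : ∀ ξ : EuclideanSpace ℝ (Fin 4), P ξ 0 = max (ξ 0) 0 ∧ P ξ 1 = min (ξ 1) 0
          ∧ P ξ 2 = max (ξ 2) 0 ∧ P ξ 3 = min (ξ 3) 0 := by
        intro ξ
        rw [hPK ξ]
        refine ⟨?_, ?_, ?_, ?_⟩ <;> simp
      have hrepr : (fun ξ : EuclideanSpace ℝ (Fin 4) => ‖P ξ‖ ^ 2)
          = fun ξ => max (ξ 0) 0 ^ 2 + min (ξ 1) 0 ^ 2 + max (ξ 2) 0 ^ 2 + min (ξ 3) 0 ^ 2 := by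
        funext ξ
        obtain ⟨e0, e1, e2, e3⟩ := hco ξ
        rw [← real_inner_self_eq_norm_sq, PiLp.inner_apply]
        simp only [RCLike.inner_apply, conj_trivial]
        rw [Fin.sum_univ_four, e0, e1, e2, e3]
        ring
      rw [hrepr]
      have hproj : ∀ i : Fin 4, HasFDerivAt (fun ξ : EuclideanSpace ℝ (Fin 4) => ξ i)
          (EuclideanSpace.proj i : EuclideanSpace ℝ (Fin 4) →L[ℝ] ℝ) ξ₀ := fun i =>
        (EuclideanSpace.proj (i : Fin 4) :
          EuclideanSpace ℝ (Fin 4) →L[ℝ] ℝ).hasFDerivAt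
      have d0 : HasFDerivAt (fun ξ : EuclideanSpace ℝ (Fin 4) => max (ξ 0) 0 ^ 2)
          ((2 * max (ξ₀ 0) 0) • (EuclideanSpace.proj (0 : Fin 4) : EuclideanSpace ℝ (Fin 4) →L[ℝ] ℝ)) ξ₀ :=
        by have := (auxmax (ξ₀ 0)).comp_hasFDerivAt ξ₀ (hproj 0); exact this
      have d1 : HasFDerivAt (fun ξ : EuclideanSpace ℝ (Fin 4) => min (ξ 1) 0 ^ 2)
          ((2 * min (ξ₀ 1) 0) • (EuclideanSpace.proj (1 : Fin 4) : EuclideanSpace ℝ (Fin 4) →L[ℝ] ℝ)) ξ₀ :=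
        by have := (auxmin (ξ₀ 1)).comp_hasFDerivAt ξ₀ (hproj 1); exact this
      have d2 : HasFDerivAt (fun ξ : EuclideanSpace ℝ (Fin 4) => max (ξ 2) 0 ^ 2)
          ((2 * max (ξ₀ 2) 0) • (EuclideanSpace.proj (2 : Fin 4) : EuclideanSpace ℝ (Fin 4) →L[ℝ] ℝ)) ξ₀ :=
        by have := (auxmax (ξ₀ 2)).comp_hasFDerivAt ξ₀ (hproj 2); exact this
      have d3 : HasFDerivAt (fun ξ : EuclideanSpace ℝ (Fin 4) => min (ξ 3) 0 ^ 2)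
          ((2 * min (ξ₀ 3) 0) • (EuclideanSpace.proj (3 : Fin 4) : EuclideanSpace ℝ (Fin 4) →L[ℝ] ℝ)) ξ₀ :=
        by have := (auxmin (ξ₀ 3)).comp_hasFDerivAt ξ₀ (hproj 3); exact this
      have hsum := ((d0.add d1).add d2).add d3
      refine hsum.congr_fderiv ?_
      refine ContinuousLinearMap.ext fun v => ?_
      obtain ⟨e0, e1, e2, e3⟩ := hco ξ₀
      have hpv : ∀ i : Fin 4,
          (EuclideanSpace.proj i : EuclideanSpace ℝ (Fin 4) →L[ℝ] ℝ) v = v i := fun i => rfl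
      simp only [ContinuousLinearMap.smul_apply, ContinuousLinearMap.add_apply,
        innerSL_apply_apply, smul_eq_mul, nsmul_eq_mul]
      rw [hpv 0, hpv 1, hpv 2, hpv 3, PiLp.inner_apply, Fin.sum_univ_four]
      simp only [RCLike.inner_apply, conj_trivial]
      rw [e0, e1, e2, e3]
      ring
    · -- C = univ : P = id
      have hPid : ∀ ξ, P ξ = ξ := by
        intro ξ
        have := (hP ξ).2 ξ (by rw [hCU]; trivial)
        rw [sub_self, norm_zero] at this
        have h0 : ‖ξ - P ξ‖ = 0 := le_antisymm this (norm_nonneg _)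
        have := norm_eq_zero.1 h0
        have := sub_eq_zero.1 this
        exact this.symm
      intro ξ₀
      have hrepr : (fun ξ : EuclideanSpace ℝ (Fin 4) => ‖P ξ‖ ^ 2)
          = fun ξ => ‖ξ‖ ^ 2 := funext fun ξ => by rw [hPid]
      rw [hrepr, hPid]
      exact (hasStrictFDerivAt_norm_sq ξ₀).hasFDerivAt
  have hlstarD : ∀ ξ₀ : EuclideanSpace ℝ (Fin 4),
      HasFDerivAt (fun ξ : EuclideanSpace ℝ (Fin 4) => lstar ‖P ξ‖)
        (innerSL ℝ (if P ξ₀ = 0 then 0 else (deriv lstar ‖P ξ₀‖ / ‖P ξ₀‖) • P ξ₀)) ξ₀ := by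
    intro ξ₀
    by_cases h0 : P ξ₀ = 0
    · rw [if_pos h0, map_zero]
      rw [hasFDerivAt_iff_isLittleO_nhds_zero]
      have hd : HasDerivAt lstar 0 0 := by
        have := (hlstardiff 0).hasDerivAt
        rwa [hlstar0] at this
      have hlo := hasDerivAt_iff_isLittleO.1 hd
      rw [isLittleO_iff] at hlo ⊢
      intro c hc
      obtain ⟨δ, hδ, hδs⟩ := Metric.eventually_nhds_iff.1 (hlo hc)
      rw [Metric.eventually_nhds_iff]
      refine ⟨δ, hδ, fun h hh => ?_⟩
      have hdh : ‖h‖ < δ := by rwa [dist_zero_right] at hh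
      have hne : ‖P (ξ₀ + h)‖ ≤ ‖h‖ := by
        have := hPnonexp (ξ₀ + h) ξ₀
        rwa [h0, sub_zero, add_sub_cancel_left] at this
      have ht : dist (‖P (ξ₀ + h)‖) 0 < δ := by
        rw [Real.dist_eq, sub_zero, abs_of_nonneg (norm_nonneg _)]
        exact lt_of_le_of_lt hne hdh
      have h2 := hδs ht
      simp only [sub_zero, smul_eq_mul, mul_zero] at h2
      rw [show ‖(‖P (ξ₀ + h)‖)‖ = ‖P (ξ₀ + h)‖ by
        rw [Real.norm_eq_abs, abs_of_nonneg (norm_nonneg _)]] at h2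
      rw [h0, norm_zero]
      simp only [ContinuousLinearMap.zero_apply, sub_zero]
      calc ‖lstar ‖P (ξ₀ + h)‖ - lstar 0‖ ≤ c * ‖P (ξ₀ + h)‖ := h2
        _ ≤ c * ‖h‖ := mul_le_mul_of_nonneg_left hne hc.le
    · rw [if_neg h0]
      have hpos : 0 < ‖P ξ₀‖ := norm_pos_iff.2 h0
      have h1 := hns ξ₀
      have h2 : HasDerivAt Real.sqrt (1 / (2 * ‖P ξ₀‖)) (‖P ξ₀‖ ^ 2) := by
        have := Real.hasDerivAt_sqrt (x := ‖P ξ₀‖ ^ 2) (by positivity)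
        rwa [Real.sqrt_sq (norm_nonneg _)] at this
      have h3 := h2.comp_hasFDerivAt ξ₀ h1
      have h3' : HasFDerivAt (fun ξ : EuclideanSpace ℝ (Fin 4) => ‖P ξ‖)
          ((1 / (2 * ‖P ξ₀‖)) • ((2 : ℕ) • innerSL ℝ (P ξ₀))) ξ₀ := by
        have he : (fun ξ : EuclideanSpace ℝ (Fin 4) => Real.sqrt (‖P ξ‖ ^ 2))
            = fun ξ => ‖P ξ‖ := funext fun ξ => Real.sqrt_sq (norm_nonneg _)
        rw [← he]
        exact h3
      have h4 : HasDerivAt lstar (deriv lstar ‖P ξ₀‖) ‖P ξ₀‖ := (hlstardiff _).hasDerivAt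
      have h5 : HasFDerivAt (fun ξ : EuclideanSpace ℝ (Fin 4) => lstar ‖P ξ‖)
          (deriv lstar ‖P ξ₀‖ • ((1 / (2 * ‖P ξ₀‖)) • ((2 : ℕ) • innerSL ℝ (P ξ₀)))) ξ₀ :=
        h4.comp_hasFDerivAt ξ₀ h3'
      convert h5 using 1
      refine ContinuousLinearMap.ext fun v => ?_
      simp only [innerSL_apply_apply, ContinuousLinearMap.smul_apply, smul_eq_mul, nsmul_eq_mul,
        Nat.cast_ofNat]
      rw [real_inner_smul_left]
      field_simp
  constructor
  · intro ρs ωs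
    -- real characterizations of the conjugates
    have lstar_ub : ∀ u r : ℝ, 0 ≤ r → u * r - lR r ≤ lstar u := by
      intro u r hr
      have h1 : ((u * r : ℝ) : EReal) - ℓ r ≤ (lstar u : EReal) := by
        rw [← hlstar u]
        exact le_iSup (fun r : ℝ => ((u * r : ℝ) : EReal) - ℓ r) r
      rw [hl r, if_pos hr, ← EReal.coe_sub] at h1
      exact EReal.coe_le_coe_iff.1 h1
    have Fstar_ub : ∀ u ρ : ℝ, 0 ≤ ρ → u * ρ - FR ρ ≤ Fstar u := by
      intro u ρ hρ
      have h1 : ((u * ρ : ℝ) : EReal) - F ρ ≤ (Fstar u : EReal) := by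
        rw [← hFstar u]
        exact le_iSup (fun ρ : ℝ => ((u * ρ : ℝ) : EReal) - F ρ) ρ
      rw [hF ρ, if_pos hρ, ← EReal.coe_sub] at h1
      exact EReal.coe_le_coe_iff.1 h1
    have lstar_lt : ∀ u x : ℝ, x < lstar u → ∃ r, 0 ≤ r ∧ x < u * r - lR r := by
      intro u x hx
      have h1 : (x : EReal) < ⨆ r : ℝ, ((u * r : ℝ) : EReal) - ℓ r := by
        rw [hlstar u]; exact EReal.coe_lt_coe_iff.2 hx
      obtain ⟨r, hr⟩ := lt_iSup_iff.1 h1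
      rcases le_or_gt 0 r with h | h
      · refine ⟨r, h, ?_⟩
        rw [hl r, if_pos h, ← EReal.coe_sub] at hr
        exact EReal.coe_lt_coe_iff.1 hr
      · rw [hl r, if_neg (not_le.2 h), EReal.sub_top] at hr
        exact absurd hr (not_lt_bot)
    have Fstar_lt : ∀ u x : ℝ, x < Fstar u → ∃ ρ, 0 ≤ ρ ∧ x < u * ρ - FR ρ := by
      intro u x hx
      have h1 : (x : EReal) < ⨆ ρ : ℝ, ((u * ρ : ℝ) : EReal) - F ρ := by
        rw [hFstar u]; exact EReal.coe_lt_coe_iff.2 hx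
      obtain ⟨ρ, hρ⟩ := lt_iSup_iff.1 h1
      rcases le_or_gt 0 ρ with h | h
      · refine ⟨ρ, h, ?_⟩
        rw [hF ρ, if_pos h, ← EReal.coe_sub] at hρ
        exact EReal.coe_lt_coe_iff.1 hρ
      · rw [hF ρ, if_neg (not_le.2 h), EReal.sub_top] at hρ
        exact absurd hρ (not_lt_bot)
    -- finiteness facts
    have hbne : ∀ (ρ : ℝ) (ω : EuclideanSpace ℝ (Fin 4)), b ρ ω ≠ ⊥ := by
      intro ρ ω
      rw [hb]
      split_ifs with h1 h2
      · rw [hl]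
        split_ifs with h3
        · rw [← EReal.coe_mul]; exact EReal.coe_ne_bot _
        · rw [EReal.coe_mul_top_of_pos h1]; exact top_ne_bot
      · simp
      · simp
    have hFne : ∀ ρ : ℝ, F ρ ≠ ⊥ := by
      intro ρ; rw [hF]; split_ifs
      · exact EReal.coe_ne_bot _
      · simp
    have hbFne : ∀ (ρ : ℝ) (ω : EuclideanSpace ℝ (Fin 4)), b ρ ω + F ρ ≠ ⊥ := by
      intro ρ ω h
      rcases EReal.add_eq_bot_iff.1 h with h' | h'
      exacts [hbne ρ ω h', hFne ρ h']
    -- values of φ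
    have hφ00 : φ 0 0 = ((FR 0 : ℝ) : EReal) := by
      rw [hφ, if_pos hC0, add_zero, hb, if_neg (lt_irrefl 0), if_pos ⟨rfl, rfl⟩, hF,
        if_pos le_rfl, zero_add]
    have hφpos : ∀ ρ : ℝ, 0 < ρ → ∀ ω ∈ C, φ ρ ω = ((ρ * lR (‖ω‖ / ρ) + FR ρ : ℝ) : EReal) := by
      intro ρ hρ ω hω
      rw [hφ, if_pos hω, add_zero, hb, if_pos hρ, hl,
        if_pos (div_nonneg (norm_nonneg ω) hρ.le), hF, if_pos hρ.le, ← EReal.coe_mul,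
        ← EReal.coe_add]
    refine le_antisymm (iSup_le ?_) ?_
    · rintro ⟨ρ, ω⟩
      by_cases hω : ω ∈ C
      · rcases lt_trichotomy ρ 0 with hρ | hρ | hρ
        · have hT : φ ρ ω = ⊤ := by
            rw [hφ, if_pos hω, add_zero, hF, if_neg (not_le.2 hρ)]
            exact EReal.add_top_of_ne_bot (hbne ρ ω)
          rw [hT, EReal.sub_top]; exact bot_le
        · subst hρ
          by_cases hω0 : ω = 0
          · subst hω0
            have hub := Fstar_ub (ρs + lstar ‖P ωs‖) 0 le_rfl
            rw [hφ00, ← EReal.coe_sub]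
            refine EReal.coe_le_coe_iff.2 ?_
            simp only [inner_zero_left, zero_mul, zero_add, mul_zero, zero_sub] at hub ⊢
            linarith
          · have hT : φ 0 ω = ⊤ := by
              rw [hφ, if_pos hω, add_zero, hb, if_neg (lt_irrefl 0),
                if_neg (by simp [hω0])]
              exact EReal.top_add_of_ne_bot (hFne 0)
            rw [hT, EReal.sub_top]; exact bot_le
        · rw [hφpos ρ hρ ω hω, ← EReal.coe_sub]
          refine EReal.coe_le_coe_iff.2 ?_
          have h1 : ⟪ω, ωs⟫ ≤ ‖ω‖ * ‖P ωs‖ := hPbound ωs ω hω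
          have hωr : ρ * (‖ω‖ / ρ) = ‖ω‖ := by field_simp
          rw [← hωr] at h1
          have h2 : ‖P ωs‖ * (‖ω‖ / ρ) - lR (‖ω‖ / ρ) ≤ lstar ‖P ωs‖ :=
            lstar_ub _ _ (div_nonneg (norm_nonneg ω) hρ.le)
          have h2' : ρ * (‖P ωs‖ * (‖ω‖ / ρ) - lR (‖ω‖ / ρ)) ≤ ρ * lstar ‖P ωs‖ :=
            mul_le_mul_of_nonneg_left h2 hρ.le
          have h3 : (ρs + lstar ‖P ωs‖) * ρ - FR ρ ≤ Fstar (ρs + lstar ‖P ωs‖) :=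
            Fstar_ub _ _ hρ.le
          nlinarith [h1, h2', h3]
      · have hT : φ ρ ω = ⊤ := by
          rw [hφ, if_neg hω]
          exact EReal.add_top_of_ne_bot (hbFne ρ ω)
        rw [hT, EReal.sub_top]; exact bot_le
    · set S := ⨆ p : ℝ × EuclideanSpace ℝ (Fin 4),
        ((p.1 * ρs + ⟪p.2, ωs⟫ : ℝ) : EReal) - φ p.1 p.2 with hS
      have hle : ∀ p : ℝ × EuclideanSpace ℝ (Fin 4),
          ((p.1 * ρs + ⟪p.2, ωs⟫ : ℝ) : EReal) - φ p.1 p.2 ≤ S := by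
        intro p; rw [hS]
        exact le_iSup (fun p : ℝ × EuclideanSpace ℝ (Fin 4) =>
          ((p.1 * ρs + ⟪p.2, ωs⟫ : ℝ) : EReal) - φ p.1 p.2) p
      have hterm00 : (((0 : ℝ) * ρs + ⟪(0 : EuclideanSpace ℝ (Fin 4)), ωs⟫ : ℝ) : EReal)
          - φ 0 0 = ((-(FR 0) : ℝ) : EReal) := by
        rw [hφ00, ← EReal.coe_sub]
        congr 1
        simp [inner_zero_left]
      have hS00 : ((-(FR 0) : ℝ) : EReal) ≤ S := by
        rw [← hterm00]
        exact hle ((0 : ℝ), (0 : EuclideanSpace ℝ (Fin 4)))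
      have hmain : ∀ x : ℝ, x < Fstar (ρs + lstar ‖P ωs‖) → (x : EReal) ≤ S := by
        intro x hx
        obtain ⟨ρ, hρ0, hxρ⟩ := Fstar_lt _ x hx
        rcases eq_or_lt_of_le hρ0 with hρ | hρ
        · rw [← hρ, mul_zero, zero_sub] at hxρ
          exact le_trans (EReal.coe_le_coe_iff.2 hxρ.le) hS00
        · have hkey0 : x + FR ρ - ρ * ρs < ρ * lstar ‖P ωs‖ := by nlinarith [hxρ]
          have hy : (x + FR ρ - ρ * ρs) / ρ < lstar ‖P ωs‖ := by
            rw [div_lt_iff₀ hρ]; nlinarith [hkey0]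
          obtain ⟨r, hr0, hyr⟩ := lstar_lt _ _ hy
          have hyr' : x + FR ρ - ρ * ρs < ρ * (‖P ωs‖ * r - lR r) := by
            rw [div_lt_iff₀ hρ] at hyr; nlinarith [hyr]
          by_cases h0 : P ωs = 0
          · have ht0 : ‖P ωs‖ = 0 := by rw [h0, norm_zero]
            have hz : ‖(0 : EuclideanSpace ℝ (Fin 4))‖ / ρ = 0 := by rw [norm_zero, zero_div]
            have hterm : ((ρ * ρs + ⟪(0 : EuclideanSpace ℝ (Fin 4)), ωs⟫ : ℝ) : EReal)
                - φ ρ 0 = ((ρ * ρs - (ρ * lR 0 + FR ρ) : ℝ) : EReal) := by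
              rw [hφpos ρ hρ 0 hC0, hz, ← EReal.coe_sub]
              congr 1
              simp [inner_zero_left]
            have hmono0r : lR 0 ≤ lR r := hlmono Set.self_mem_Ici hr0 hr0
            have hxle : x ≤ ρ * ρs - (ρ * lR 0 + FR ρ) := by
              rw [ht0] at hyr'
              nlinarith [hyr', mul_le_mul_of_nonneg_left hmono0r hρ.le]
            calc (x : EReal) ≤ ((ρ * ρs - (ρ * lR 0 + FR ρ) : ℝ) : EReal) :=
                EReal.coe_le_coe_iff.2 hxle
              _ = _ := hterm.symm
              _ ≤ S := hle ((ρ, (0 : EuclideanSpace ℝ (Fin 4))))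
          · have htpos : 0 < ‖P ωs‖ := norm_pos_iff.2 h0
            set cc := ρ * r / ‖P ωs‖ with hcdef
            have hc0 : 0 ≤ cc := div_nonneg (mul_nonneg hρ.le hr0) htpos.le
            have hωC : cc • P ωs ∈ C := hCsmul cc hc0 _ (hPmemC ωs)
            have hωn : ‖cc • P ωs‖ = ρ * r := by
              rw [norm_smul, Real.norm_eq_abs, abs_of_nonneg hc0, hcdef]
              field_simp
            have hinner : ⟪cc • P ωs, ωs⟫ = ρ * r * ‖P ωs‖ := by
              rw [real_inner_smul_left, hPinner ωs, hcdef]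
              field_simp
            have harg : ‖cc • P ωs‖ / ρ = r := by
              rw [hωn, mul_comm, mul_div_assoc, div_self hρ.ne', mul_one]
            have hterm : ((ρ * ρs + ⟪cc • P ωs, ωs⟫ : ℝ) : EReal) - φ ρ (cc • P ωs)
                = ((ρ * ρs + ρ * r * ‖P ωs‖ - (ρ * lR r + FR ρ) : ℝ) : EReal) := by
              rw [hφpos ρ hρ _ hωC, harg, hinner, ← EReal.coe_sub]
            have hxle : x ≤ ρ * ρs + ρ * r * ‖P ωs‖ - (ρ * lR r + FR ρ) := by
              nlinarith [hyr']
            calc (x : EReal)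
                ≤ ((ρ * ρs + ρ * r * ‖P ωs‖ - (ρ * lR r + FR ρ) : ℝ) : EReal) :=
                EReal.coe_le_coe_iff.2 hxle
              _ = _ := hterm.symm
              _ ≤ S := hle ((ρ, cc • P ωs))
      refine le_of_not_gt fun hlt => ?_
      obtain ⟨x, hx1, hx2⟩ := EReal.exists_between_coe_real hlt
      exact absurd (hmain x (EReal.coe_lt_coe_iff.1 hx2)) (not_le.2 hx1)
  · intro ρs ωs
    have hG : HasFDerivAt (fun p : ℝ × EuclideanSpace ℝ (Fin 4) => p.1 + lstar ‖P p.2‖)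
        (ContinuousLinearMap.fst ℝ ℝ (EuclideanSpace ℝ (Fin 4)) +
          (innerSL ℝ (if P ωs = 0 then 0
              else (deriv lstar ‖P ωs‖ / ‖P ωs‖) • P ωs)).comp
            (ContinuousLinearMap.snd ℝ ℝ (EuclideanSpace ℝ (Fin 4)))) (ρs, ωs) :=
      (hasFDerivAt_fst).add (by have := (hlstarD (ρs, ωs).2).comp (ρs, ωs) (hasFDerivAt_snd (p := (ρs, ωs))); exact this)
    exact (hFstardiff _).hasDerivAt.comp_hasFDerivAt (ρs, ωs) hG
end
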